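/- arXiv:math/0606403 — 8 statements merged into one kernel-verified Lean document; each statement's English description precedes it below -/
import Mathlib

section
/- In the root system of type D_{n+2} (n ≥ 2), the number N_p' of positive roots of height p+1 whose expansion contains the simple root attached to the trivalent (nodal) vertex satisfies: N_0' = 1, N_p' = 3 + ⌊p/2⌋ for 1 ≤ p ≤ n-1, N_n' = 2 + ⌊n/2⌋, and N_p' = 1 + ⌊n - p/2⌋ for n < p ≤ 2n - 1. -/
open Finset

/-- The positive roots of the root system of type `D_m` in the standard model:
`e_i - e_j` (encoded `(i, j, false)`) and `e_i + e_j` (encoded `(i, j, true)`) for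
`1 ≤ i < j ≤ m`. -/
def Droots (m : ℕ) : Finset (ℕ × ℕ × Bool) :=
  ((Finset.Icc 1 m) ×ˢ (Finset.Icc 1 m) ×ˢ ({false, true} : Finset Bool)).filter
    (fun t => t.1 < t.2.1)

/-- The height of a positive root of `D_m`: with simple roots
`α_i = e_i - e_{i+1}` (`i ≤ m-1`) and `α_m = e_{m-1} + e_m`, the root `e_i - e_j` has
height `j - i` and `e_i + e_j` has height `2m - i - j`. -/
def DrootHeight (m : ℕ) (t : ℕ × ℕ × Bool) : ℕ :=
  if t.2.2 then 2 * m - t.1 - t.2.1 else t.2.1 - t.1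

/-- Whether a positive root of `D_m` contains the simple root `α_{m-2}` attached to the
trivalent (nodal) vertex of the Dynkin diagram in its expansion: `e_i - e_j` contains it
iff `i ≤ m - 2` and `j ≥ m - 1`, and `e_i + e_j` contains it iff `(i,j) ≠ (m-1, m)`. -/
def DcontainsNodal (m : ℕ) (t : ℕ × ℕ × Bool) : Prop :=
  if t.2.2 then ¬(t.1 = m - 1 ∧ t.2.1 = m) else t.1 ≤ m - 2 ∧ m - 1 ≤ t.2.1

instance (m : ℕ) (t : ℕ × ℕ × Bool) : Decidable (DcontainsNodal m t) := by
  unfold DcontainsNodal; infer_instance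

/-- `N'_p`: the number of positive roots of `D_{n+2}` of height `p+1` containing the
nodal simple root. -/
def NpD (n p : ℕ) : ℕ :=
  ((Droots (n + 2)).filter
    (fun t => DcontainsNodal (n + 2) t ∧ DrootHeight (n + 2) t = p + 1)).card

/-- The count of positive roots of `D_m` of height `h ≥ 2` containing the nodal root. -/
lemma Dcount (m h : ℕ) (hm : 4 ≤ m) (hh : 2 ≤ h) :
    ((Droots m).filter
      (fun t => DcontainsNodal m t ∧ DrootHeight m t = h)).card
    = (min (m-2) (m-h) + 1 - max 1 (m-1-h)) + ((2*m-h-1)/2 + 1 - max 1 (m-h)) := by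
  have hset : ((Droots m).filter (fun t => DcontainsNodal m t ∧ DrootHeight m t = h))
      = ((Finset.Icc (max 1 (m-1-h)) (min (m-2) (m-h))).image (fun i => (i, i+h, false)))
        ∪ ((Finset.Icc (max 1 (m-h)) ((2*m-h-1)/2)).image (fun i => (i, 2*m-h-i, true))) := by
    ext ⟨i, j, b⟩
    simp only [Droots, Finset.mem_filter]
    simp only [Droots, DcontainsNodal, DrootHeight, Finset.mem_filter, Finset.mem_union,
      Finset.mem_image, Finset.mem_product, Finset.mem_Icc, Finset.mem_insert,
      Finset.mem_singleton, Prod.mk.injEq]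
    cases b with
    | false =>
      simp only [Bool.false_eq_true, Bool.true_eq_false, if_false, and_false, and_true,
        false_and, exists_false, or_false, false_or, true_or, or_true]
      constructor
      · intro hyp
        exact ⟨i, ⟨by omega, by omega⟩, rfl, by omega⟩
      · rintro ⟨x, hx, rfl, rfl⟩
        omega
    | true =>
      simp only [Bool.false_eq_true, Bool.true_eq_false, if_true, and_false, and_true,
        false_and, exists_false, or_false, false_or, true_or, or_true]
      constructor
      · intro hyp
        exact ⟨i, ⟨by omega, by omega⟩, rfl, by omega⟩
      · rintro ⟨x, hx, rfl, rfl⟩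
        omega
  rw [hset, Finset.card_union_of_disjoint,
    Finset.card_image_of_injective _ (fun a b hab => by simpa using congrArg Prod.fst hab),
    Finset.card_image_of_injective _ (fun a b hab => by simpa using congrArg Prod.fst hab),
    Nat.card_Icc, Nat.card_Icc]
  simp only [Finset.disjoint_left, Finset.mem_image]
  rintro t ⟨x, -, rfl⟩ ⟨y, -, hxy⟩
  simpa using congrArg (fun t => t.2.2) hxy

/-- The unique root of height `1` containing the nodal simple root is that root itself. -/
lemma NpD_zero (n : ℕ) (hn : 2 ≤ n) : NpD n 0 = 1 := by
  have hset : ((Droots (n+2)).filter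
      (fun t => DcontainsNodal (n+2) t ∧ DrootHeight (n+2) t = 0 + 1))
      = {(n, n+1, false)} := by
    ext ⟨i, j, b⟩
    simp only [Droots, Finset.mem_filter]
    simp only [Droots, DcontainsNodal, DrootHeight, Finset.mem_filter, Finset.mem_product,
      Finset.mem_Icc, Finset.mem_insert, Finset.mem_singleton, Prod.mk.injEq]
    cases b with
    | false =>
      simp only [Bool.false_eq_true, Bool.true_eq_false, if_false, and_false, and_true,
        false_and, exists_false, or_false, false_or, true_or, or_true]
      omega
    | true =>
      simp only [Bool.false_eq_true, Bool.true_eq_false, if_true, and_false, and_true,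
        false_and, exists_false, or_false, false_or, true_or, or_true, iff_false]
      rintro ⟨⟨⟨h1, h2⟩, h3⟩, h4, h5⟩
      exact h4 ⟨by omega, by omega⟩
  rw [NpD, hset, Finset.card_singleton]

/-- in type `D_{n+2}` (`n ≥ 2`), the number `N'_p` of positive roots of
height `p+1` containing the nodal simple root satisfies `N'_0 = 1`,
`N'_p = 3 + ⌊p/2⌋` for `1 ≤ p ≤ n-1`, `N'_n = 2 + ⌊n/2⌋`, and
`N'_p = 1 + ⌊n - p/2⌋` for `n < p ≤ 2n - 1`. -/
theorem D_nodal_root_count (n : ℕ) (hn : 2 ≤ n) (p : ℕ) :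
    (p = 0 → NpD n p = 1) ∧
    (1 ≤ p → p ≤ n - 1 → NpD n p = 3 + p / 2) ∧
    (p = n → NpD n p = 2 + n / 2) ∧
    (n < p → p ≤ 2 * n - 1 → (NpD n p : ℤ) = 1 + ⌊(n : ℚ) - (p : ℚ) / 2⌋) := by
  refine ⟨fun h0 => ?_, fun h1 h2 => ?_, fun h3 => ?_, fun h4 h5 => ?_⟩
  · subst h0; exact NpD_zero n hn
  · rw [NpD, Dcount (n+2) (p+1) (by omega) (by omega)]; omega
  · rw [NpD, Dcount (n+2) (p+1) (by omega) (by omega)]; omega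
  · rw [NpD, Dcount (n+2) (p+1) (by omega) (by omega)]
    have hfl : ⌊(n : ℚ) - (p : ℚ) / 2⌋ = ((2*n - p : ℕ) : ℤ) / ((2:ℕ) : ℤ) := by
      rw [← Rat.floor_intCast_div_natCast ((2*n - p : ℕ) : ℤ) 2]
      congr 1
      have hple : p ≤ 2*n := by omega
      push_cast [hple]
      ring
    rw [hfl]
    omega
end

section
/- Let B' be the associative unital C-algebra with generators a, b, z and relations a² = b² = z²/4, [z,a] = [z,b] = 0. Then the elements z^p (a+b)^{2q}, a z^p (a+b)^{2q}, b z^p (a+b)^{2q}, a b z^p (a+b)^{2q} for p, q ≥ 0 form a basis of B', and the center of B' is spanned by the elements z^p (a+b)^{2q}, p, q ≥ 0. -/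
/-- The defining relations of the algebra `B'`: generators `a = ι 0`, `b = ι 1`,
`z = ι 2` with `a² = b² = z²/4` and `z` commuting with `a` and `b`. -/
inductive BpRel : FreeAlgebra ℂ (Fin 3) → FreeAlgebra ℂ (Fin 3) → Prop
  | ha : BpRel (FreeAlgebra.ι ℂ 0 * FreeAlgebra.ι ℂ 0)
      ((4 : ℂ)⁻¹ • (FreeAlgebra.ι ℂ 2 * FreeAlgebra.ι ℂ 2))
  | hb : BpRel (FreeAlgebra.ι ℂ 1 * FreeAlgebra.ι ℂ 1)
      ((4 : ℂ)⁻¹ • (FreeAlgebra.ι ℂ 2 * FreeAlgebra.ι ℂ 2))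
  | hza : BpRel (FreeAlgebra.ι ℂ 2 * FreeAlgebra.ι ℂ 0)
      (FreeAlgebra.ι ℂ 0 * FreeAlgebra.ι ℂ 2)
  | hzb : BpRel (FreeAlgebra.ι ℂ 2 * FreeAlgebra.ι ℂ 1)
      (FreeAlgebra.ι ℂ 1 * FreeAlgebra.ι ℂ 2)

/-- The algebra `B'`. -/
abbrev Bprime := RingQuot BpRel

noncomputable def aB : Bprime := RingQuot.mkAlgHom ℂ BpRel (FreeAlgebra.ι ℂ 0)
noncomputable def bB : Bprime := RingQuot.mkAlgHom ℂ BpRel (FreeAlgebra.ι ℂ 1)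
noncomputable def zB : Bprime := RingQuot.mkAlgHom ℂ BpRel (FreeAlgebra.ι ℂ 2)

/-- The candidate basis `z^p (a+b)^{2q}`, `a z^p (a+b)^{2q}`, `b z^p (a+b)^{2q}`,
`a b z^p (a+b)^{2q}` for `p, q ≥ 0`. -/
noncomputable def BprimeBasisFam : ℕ × ℕ × Fin 4 → Bprime := fun t =>
  (if t.2.2 = 0 then 1 else if t.2.2 = 1 then aB else if t.2.2 = 2 then bB else aB * bB)
    * zB ^ t.1 * (aB + bB) ^ (2 * t.2.1)

noncomputable section BP
namespace BP

open MvPolynomial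

abbrev R2 : Type := MvPolynomial (Fin 2) ℂ
abbrev M2 : Type := Matrix (Fin 2) (Fin 2) R2

def xx : R2 := X 0
def yy : R2 := X 1

def Am : M2 := !![0, 1; xx^2, 0]
def Bm : M2 := !![xx, 0; yy - 2*xx^2, -xx]
def Zm : M2 := !![2*xx, 0; 0, 2*xx]

lemma hZZ : Zm * Zm = (4:ℂ) • (Am * Am) := by
  refine Matrix.ext fun i j => ?_
  fin_cases i <;> fin_cases j <;>
    simp [Am, Zm, Matrix.mul_apply, Fin.sum_univ_two, smul_eq_C_mul, map_ofNat] <;> ring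

lemma hAmAm : Am * Am = (4:ℂ)⁻¹ • (Zm * Zm) := by
  rw [hZZ, smul_smul]; norm_num

lemma hBmAm : Bm * Bm = Am * Am := by
  refine Matrix.ext fun i j => ?_
  fin_cases i <;> fin_cases j <;>
    simp [Am, Bm, Matrix.mul_apply, Fin.sum_univ_two] <;> ring

lemma hBmBm : Bm * Bm = (4:ℂ)⁻¹ • (Zm * Zm) := by rw [hBmAm, hAmAm]

lemma hZmAm : Zm * Am = Am * Zm := by
  refine Matrix.ext fun i j => ?_
  fin_cases i <;> fin_cases j <;>
    simp [Am, Zm, Matrix.mul_apply, Fin.sum_univ_two] <;> ring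

lemma hZmBm : Zm * Bm = Bm * Zm := by
  refine Matrix.ext fun i j => ?_
  fin_cases i <;> fin_cases j <;>
    simp [Bm, Zm, Matrix.mul_apply, Fin.sum_univ_two] <;> ring

lemma hSm : (Am + Bm) * (Am + Bm) = yy • (1 : M2) := by
  refine Matrix.ext fun i j => ?_
  fin_cases i <;> fin_cases j <;>
    simp [Am, Bm, Matrix.mul_apply, Fin.sum_univ_two, Matrix.one_apply] <;> ring

def fM : Fin 3 → M2 := ![Am, Bm, Zm]

def rho : Bprime →ₐ[ℂ] M2 :=
  RingQuot.liftAlgHom ℂ ⟨FreeAlgebra.lift ℂ fM, by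
    intro x y h
    induction h <;>
      simp [fM, hAmAm, hBmBm, hZmAm, hZmBm]⟩

@[simp] lemma rho_a : rho aB = Am := by
  simp [rho, aB, RingQuot.liftAlgHom_mkAlgHom_apply, fM]

@[simp] lemma rho_b : rho bB = Bm := by
  simp [rho, bB, RingQuot.liftAlgHom_mkAlgHom_apply, fM]

@[simp] lemma rho_z : rho zB = Zm := by
  simp [rho, zB, RingQuot.liftAlgHom_mkAlgHom_apply, fM]


open MvPolynomial

/-! ### Part B : relations and centrality in `Bprime` -/

lemma Bprime_ind {P : Bprime → Prop}
    (halg : ∀ r : ℂ, P (algebraMap ℂ Bprime r))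
    (ha : P aB) (hb : P bB) (hz : P zB)
    (hmul : ∀ x y, P x → P y → P (x * y))
    (hadd : ∀ x y, P x → P y → P (x + y)) (x : Bprime) : P x := by
  obtain ⟨y, rfl⟩ := RingQuot.mkAlgHom_surjective ℂ BpRel x
  induction y using FreeAlgebra.induction with
  | grade0 r => rw [AlgHom.commutes]; exact halg r
  | grade1 i => fin_cases i; exacts [ha, hb, hz]
  | mul x y hx hy => rw [map_mul]; exact hmul _ _ hx hy
  | add x y hx hy => rw [map_add]; exact hadd _ _ hx hy

lemma rel_aa : aB * aB = (4:ℂ)⁻¹ • (zB * zB) := by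
  have := RingQuot.mkAlgHom_rel ℂ BpRel.ha
  simpa [map_mul, map_smul, aB, zB] using this

lemma rel_bb : bB * bB = (4:ℂ)⁻¹ • (zB * zB) := by
  have := RingQuot.mkAlgHom_rel ℂ BpRel.hb
  simpa [map_mul, map_smul, bB, zB] using this

lemma rel_za : zB * aB = aB * zB := by
  have := RingQuot.mkAlgHom_rel ℂ BpRel.hza
  simpa [map_mul, aB, zB] using this

lemma rel_zb : zB * bB = bB * zB := by
  have := RingQuot.mkAlgHom_rel ℂ BpRel.hzb
  simpa [map_mul, bB, zB] using this

lemma z_mem_center : zB ∈ Subalgebra.center ℂ Bprime := by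
  rw [Subalgebra.mem_center_iff]
  intro g
  induction g using Bprime_ind with
  | halg r => exact Algebra.commutes r zB
  | ha => exact rel_za.symm
  | hb => exact rel_zb.symm
  | hz => rfl
  | hmul x y hx hy => rw [mul_assoc, hy, ← mul_assoc, hx, mul_assoc]
  | hadd x y hx hy => rw [add_mul, hx, hy, mul_add]

lemma ccomm {c : Bprime} (h : c ∈ Subalgebra.center ℂ Bprime) (v : Bprime) :
    c * v = v * c := (Subalgebra.mem_center_iff.mp h v).symm

lemma hab2 : bB * bB = aB * aB := by rw [rel_aa, rel_bb]

lemma asq_mem : aB * aB ∈ Subalgebra.center ℂ Bprime := by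
  rw [rel_aa]
  exact Subalgebra.smul_mem _ (mul_mem z_mem_center z_mem_center) _

lemma bsq_mem : bB * bB ∈ Subalgebra.center ℂ Bprime := by
  rw [rel_bb]
  exact Subalgebra.smul_mem _ (mul_mem z_mem_center z_mem_center) _

lemma hk (v : Bprime) : aB * aB * v = v * aB * aB := by
  rw [mul_assoc v]; exact ccomm asq_mem v

lemma hkb (v : Bprime) : bB * bB * v = v * bB * bB := by
  rw [mul_assoc v]; exact ccomm bsq_mem v

lemma s_mem_center : (aB + bB) * (aB + bB) ∈ Subalgebra.center ℂ Bprime := by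
  rw [Subalgebra.mem_center_iff]
  intro g
  induction g using Bprime_ind with
  | halg r => exact Algebra.commutes r _
  | hz => exact ccomm z_mem_center _
  | hmul x y hx hy => rw [mul_assoc, hy, ← mul_assoc, hx, mul_assoc]
  | hadd x y hx hy => rw [add_mul, hx, hy, ← mul_add]
  | ha =>
      have e : (aB + bB) * (aB + bB) = aB*aB + aB*bB + bB*aB + bB*bB := by
        noncomm_ring
      rw [e, hab2]
      simp only [mul_add, add_mul, ← mul_assoc]
      rw [hk bB]
      abel
  | hb =>
      have e : (aB + bB) * (aB + bB) = aB*aB + aB*bB + bB*aB + bB*bB := by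
        noncomm_ring
      rw [e, ← hab2]
      simp only [mul_add, add_mul, ← mul_assoc]
      rw [show bB*bB*aB = aB*bB*bB from hkb aB]
      abel

/-- abbreviation for `(a+b)^2` -/
noncomputable def TB : Bprime := (aB + bB)^2

lemma T_mem_center : TB ∈ Subalgebra.center ℂ Bprime := by
  rw [TB, pow_two]; exact s_mem_center

lemma cmem (p q : ℕ) : zB^p * TB^q ∈ Subalgebra.center ℂ Bprime :=
  mul_mem (pow_mem z_mem_center p) (pow_mem T_mem_center q)

noncomputable def wB : Fin 4 → Bprime := ![1, aB, bB, aB*bB]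

/-- normal form basis elements, with the central part on the left -/
noncomputable def famB (p q : ℕ) (i : Fin 4) : Bprime := zB^p * TB^q * wB i

lemma fam_eq (t : ℕ × ℕ × Fin 4) : BprimeBasisFam t = famB t.1 t.2.1 t.2.2 := by
  obtain ⟨p, q, i⟩ := t
  have h : ∀ i : Fin 4, wB i * zB^p * TB^q = famB p q i := by
    intro i
    rw [famB, mul_assoc, ccomm (cmem p q) (wB i)]
  fin_cases i <;> rw [← h _] <;> simp [BprimeBasisFam, wB, TB, pow_mul]

/-! ### Part C : spanning -/

lemma rel_ba : bB * aB = TB - (2:ℂ)⁻¹ • zB^2 - aB * bB := by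
  have e : TB = aB*aB + aB*bB + bB*aB + bB*bB := by rw [TB, pow_two]; noncomm_ring
  rw [e, rel_aa, rel_bb, pow_two]
  module

lemma Pa0 : aB * wB 0 = wB 1 := by simp [wB]
lemma Pa1 : aB * wB 1 = (4:ℂ)⁻¹ • (zB^2 * wB 0) := by simp [wB, rel_aa, pow_two]
lemma Pa2 : aB * wB 2 = wB 3 := by simp [wB]
lemma Pa3 : aB * wB 3 = (4:ℂ)⁻¹ • (zB^2 * wB 2) := by
  have : aB * (aB * bB) = (aB * aB) * bB := by rw [mul_assoc]
  simp only [wB]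
  simp only [Matrix.cons_val_three, Matrix.cons_val_two, Matrix.tail_cons, Matrix.head_cons]
  rw [this, rel_aa, smul_mul_assoc, pow_two]
lemma Pb0 : bB * wB 0 = wB 2 := by simp [wB]
lemma Pb1 : bB * wB 1 = TB * wB 0 - (2:ℂ)⁻¹ • (zB^2 * wB 0) - wB 3 := by
  simp [wB, rel_ba]
lemma Pb2 : bB * wB 2 = (4:ℂ)⁻¹ • (zB^2 * wB 0) := by simp [wB, rel_bb, pow_two]
lemma Pb3 : bB * wB 3 = TB * wB 2 - (2:ℂ)⁻¹ • (zB^2 * wB 2) - (4:ℂ)⁻¹ • (zB^2 * wB 1) := by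
  have h1 : bB * (aB * bB) = (bB * aB) * bB := by rw [mul_assoc]
  have h2 : aB * (zB * zB) = zB^2 * aB := by
    rw [← pow_two, ← ccomm (pow_mem z_mem_center 2) aB]
  simp only [wB]
  simp only [Matrix.cons_val_three, Matrix.cons_val_two, Matrix.cons_val_one,
    Matrix.tail_cons, Matrix.head_cons, Matrix.cons_val_zero]
  rw [h1, rel_ba, sub_mul, sub_mul, smul_mul_assoc, mul_assoc, rel_bb, mul_smul_comm, h2]

lemma hshift2 (p q : ℕ) (j : Fin 4) : zB^p * TB^q * (zB^2 * wB j) = famB (p+2) q j := by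
  rw [famB, ← mul_assoc, mul_assoc (zB^p) (TB^q) (zB^2),
    ← ccomm (pow_mem z_mem_center 2) (TB^q), ← mul_assoc, ← pow_add]

lemma hshiftT (p q : ℕ) (j : Fin 4) : zB^p * TB^q * (TB * wB j) = famB p (q+1) j := by
  rw [famB, ← mul_assoc, mul_assoc (zB^p) (TB^q) TB, ← pow_succ]

abbrev Sp : Submodule ℂ Bprime := Submodule.span ℂ (Set.range BprimeBasisFam)

lemma fam_mem (p q : ℕ) (i : Fin 4) : famB p q i ∈ Sp := by
  rw [← fam_eq (p,q,i)]
  exact Submodule.subset_span ⟨(p,q,i), rfl⟩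

lemma gen_mul_mem {g : Bprime} (hg : ∀ p q i, g * famB p q i ∈ Sp) :
    ∀ v ∈ Sp, g * v ∈ Sp := by
  intro v hv
  induction hv using Submodule.span_induction with
  | mem x hx =>
      obtain ⟨t, rfl⟩ := hx
      rw [fam_eq t]; exact hg _ _ _
  | zero => simp
  | add x y _ _ hx hy => rw [mul_add]; exact add_mem hx hy
  | smul c x _ hx => rw [mul_smul_comm]; exact Submodule.smul_mem _ _ hx

lemma pull_central (g : Bprime) (p q : ℕ) (i : Fin 4) :
    g * famB p q i = zB^p * TB^q * (g * wB i) := by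
  rw [famB, ← mul_assoc, ← ccomm (cmem p q) g, mul_assoc]

lemma a_mul_fam (p q : ℕ) (i : Fin 4) : aB * famB p q i ∈ Sp := by
  rw [pull_central]
  fin_cases i <;> simp only [Fin.zero_eta, Fin.mk_one, Fin.isValue, id_eq,
    show (⟨2, by omega⟩ : Fin 4) = 2 from rfl, show (⟨3, by omega⟩ : Fin 4) = 3 from rfl]
  · rw [Pa0]; exact fam_mem p q 1
  · rw [Pa1, mul_smul_comm, hshift2]; exact Submodule.smul_mem _ _ (fam_mem _ _ _)
  · rw [Pa2]; exact fam_mem p q 3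
  · rw [Pa3, mul_smul_comm, hshift2]; exact Submodule.smul_mem _ _ (fam_mem _ _ _)

lemma b_mul_fam (p q : ℕ) (i : Fin 4) : bB * famB p q i ∈ Sp := by
  rw [pull_central]
  fin_cases i <;> simp only [Fin.zero_eta, Fin.mk_one, Fin.isValue, id_eq,
    show (⟨2, by omega⟩ : Fin 4) = 2 from rfl, show (⟨3, by omega⟩ : Fin 4) = 3 from rfl]
  · rw [Pb0]; exact fam_mem p q 2
  · rw [Pb1, mul_sub, mul_sub, mul_smul_comm, hshiftT, hshift2]
    exact sub_mem (sub_mem (fam_mem _ _ _) (Submodule.smul_mem _ _ (fam_mem _ _ _)))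
      (fam_mem p q 3)
  · rw [Pb2, mul_smul_comm, hshift2]; exact Submodule.smul_mem _ _ (fam_mem _ _ _)
  · rw [Pb3, mul_sub, mul_sub, mul_smul_comm, mul_smul_comm, hshiftT, hshift2, hshift2]
    exact sub_mem (sub_mem (fam_mem _ _ _) (Submodule.smul_mem _ _ (fam_mem _ _ _)))
      (Submodule.smul_mem _ _ (fam_mem _ _ _))

lemma z_mul_fam (p q : ℕ) (i : Fin 4) : zB * famB p q i ∈ Sp := by
  have h : zB * famB p q i = famB (p+1) q i := by
    rw [famB, famB, ← mul_assoc, ← mul_assoc, ← pow_succ']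
  rw [h]; exact fam_mem _ _ _

lemma one_mem_Sp : (1:Bprime) ∈ Sp := by
  have := fam_mem 0 0 0
  simpa [famB, wB] using this

lemma span_top : Sp = ⊤ := by
  rw [Submodule.eq_top_iff']
  intro v
  have hmul : ∀ w ∈ Sp, v * w ∈ Sp := by
    induction v using Bprime_ind with
    | halg r =>
        intro w hw
        rw [← Algebra.smul_def]
        exact Submodule.smul_mem _ _ hw
    | ha => exact gen_mul_mem a_mul_fam
    | hb => exact gen_mul_mem b_mul_fam
    | hz => exact gen_mul_mem z_mul_fam
    | hmul x y hx hy => intro w hw; rw [mul_assoc]; exact hx _ (hy _ hw)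
    | hadd x y hx hy => intro w hw; rw [add_mul]; exact add_mem (hx w hw) (hy w hw)
  simpa using hmul 1 one_mem_Sp

/-! ### Part D : linear independence -/

def ABm : M2 := Am * Bm

lemma hABm : ABm = !![yy - 2*xx^2, -xx; xx^3, 0] := by
  refine Matrix.ext fun i j => ?_
  fin_cases i <;> fin_cases j <;>
    simp [ABm, Am, Bm, Matrix.mul_apply, Fin.sum_univ_two] <;> ring

noncomputable def wM : Fin 4 → M2 := ![1, Am, Bm, ABm]

lemma ev_ne {r : R2} (hr : MvPolynomial.eval ![1, 1] r ≠ 0) : r ≠ 0 := by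
  intro h; rw [h] at hr; simp at hr

lemma wM_indep (P : Fin 4 → R2) (h : ∑ i, P i • wM i = 0) : ∀ i, P i = 0 := by
  have hE : ∀ i j, (∑ k, P k • wM k) i j = (0 : R2) := by
    intro i j; rw [h]; rfl
  have E11 := hE 0 0
  have E12 := hE 0 1
  have E21 := hE 1 0
  have E22 := hE 1 1
  simp [Matrix.sum_apply, Fin.sum_univ_four, wM, hABm, Am, Bm,
    Matrix.one_apply] at E11 E12 E21 E22
  have h3 : P 3 * (yy * (4*xx^2 - yy)) = 0 := by
    linear_combination (2*xx) * E21 - 2*xx^3 * E12 - (yy - 2*xx^2) * E11 + (yy - 2*xx^2) * E22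
  have hyne : yy * (4*xx^2 - yy) ≠ 0 := by
    apply ev_ne; simp [xx, yy]; norm_num
  have hP3 : P 3 = 0 := by
    rcases mul_eq_zero.mp h3 with h' | h'
    · exact h'
    · exact absurd h' hyne
  have hP1 : P 1 = 0 := by linear_combination E12 + xx * hP3
  have h2 : P 2 * (2*xx) = 0 := by
    linear_combination E11 - E22 - (yy - 2*xx^2) * hP3
  have hP2 : P 2 = 0 := by
    rcases mul_eq_zero.mp h2 with h' | h'
    · exact h'
    · exfalso; apply ev_ne (r := 2*xx) ?_ h'
      simp [xx]
  have hP0 : P 0 = 0 := by linear_combination E22 + xx * hP2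
  intro i; fin_cases i <;> assumption

noncomputable def Phi : (Fin 4 → R2) →ₗ[R2] M2 where
  toFun := fun P => ∑ i, P i • wM i
  map_add' := by intro P Q; simp [add_smul, Finset.sum_add_distrib]
  map_smul' := by intro c P; simp [smul_eq_mul, mul_smul, Finset.smul_sum]

lemma sum_single_smul (i : Fin 4) (r : R2) :
    ∑ j, (Pi.single i r : Fin 4 → R2) j • wM j = r • wM i := by
  rw [Finset.sum_eq_single i]
  · simp
  · intro j _ hj; simp [Pi.single_apply, hj]
  · simp

lemma Phi_single (i : Fin 4) (r : R2) : Phi (Pi.single i r) = r • wM i := by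
  simp only [Phi, LinearMap.coe_mk, AddHom.coe_mk]
  exact sum_single_smul i r

lemma Phi_ker : LinearMap.ker Phi = ⊥ := by
  rw [LinearMap.ker_eq_bot']
  intro P hP
  funext i
  exact wM_indep P hP i

noncomputable def PhiC : (Fin 4 → R2) →ₗ[ℂ] M2 := Phi.restrictScalars ℂ

lemma PhiC_ker : LinearMap.ker PhiC = ⊥ := by
  rw [LinearMap.ker_eq_bot]
  have h := LinearMap.ker_eq_bot.mp Phi_ker
  exact fun x y hxy => h hxy

noncomputable def bigB : Module.Basis ((Fin 2 →₀ ℕ) × Fin 4) ℂ (Fin 4 → R2) :=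
  (MvPolynomial.basisMonomials (Fin 2) ℂ).smulTower (Pi.basisFun R2 (Fin 4))

def emb : ℕ × ℕ × Fin 4 → (Fin 2 →₀ ℕ) × Fin 4 := fun t =>
  (Finsupp.single 0 t.1 + Finsupp.single 1 t.2.1, t.2.2)

lemma emb_inj : Function.Injective emb := by
  rintro ⟨p, q, i⟩ ⟨p', q', i'⟩ h
  rw [emb, emb, Prod.mk.injEq] at h
  obtain ⟨h1, h2⟩ := h
  have hp := DFunLike.congr_fun h1 (0 : Fin 2)
  have hq := DFunLike.congr_fun h1 (1 : Fin 2)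
  simp [Finsupp.single_apply] at hp hq
  simp_all [Prod.ext_iff]

noncomputable def g1 : ℕ × ℕ × Fin 4 → (Fin 4 → R2) := fun t =>
  Pi.single t.2.2 ((2*xx)^t.1 * yy^t.2.1)

lemma mono_eq (p q : ℕ) :
    (MvPolynomial.monomial (Finsupp.single 0 p + Finsupp.single 1 q) (1:ℂ) : R2)
      = xx^p * yy^q := by
  rw [xx, yy, MvPolynomial.X_pow_eq_monomial, MvPolynomial.X_pow_eq_monomial,
    MvPolynomial.monomial_mul, mul_one]

lemma g1_eq (t : ℕ × ℕ × Fin 4) :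
    g1 t = ((Units.mk0 (2:ℂ) two_ne_zero)^t.1 : ℂˣ) • bigB (emb t) := by
  obtain ⟨p, q, i⟩ := t
  rw [bigB, Module.Basis.smulTower_apply]
  simp only [MvPolynomial.coe_basisMonomials, Pi.basisFun_apply, emb, g1]
  funext j
  rcases eq_or_ne j i with rfl | hj
  · simp only [Pi.smul_apply, Pi.single_eq_same, Units.smul_def, Units.val_pow_eq_pow_val,
      Units.val_mk0]
    rw [mono_eq]
    simp only [MvPolynomial.smul_eq_C_mul, map_pow, map_ofNat, mul_pow, smul_eq_mul,
      mul_one]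
    ring
  · simp [Pi.single_eq_of_ne hj, Pi.smul_apply]


/-! ### Part D2 : assembling linear independence -/

lemma Zm_eq : Zm = (2*xx) • (1 : M2) := by
  refine Matrix.ext fun i j => ?_
  fin_cases i <;> fin_cases j <;> simp [Zm, Matrix.one_apply]

lemma rho_T : rho TB = yy • (1 : M2) := by
  rw [TB, pow_two, map_mul, map_add, rho_a, rho_b, hSm]

lemma rho_wB (i : Fin 4) : rho (wB i) = wM i := by
  fin_cases i <;> simp [wB, wM, ABm]

lemma rho_famB (p q : ℕ) (i : Fin 4) :
    rho (famB p q i) = ((2*xx)^p * yy^q) • wM i := by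
  rw [famB, map_mul, map_mul, map_pow, map_pow, rho_z, rho_T, Zm_eq, rho_wB,
    smul_pow, one_pow, smul_pow, one_pow, smul_mul_smul_comm, one_mul, smul_mul_assoc,
    one_mul]

lemma PhiC_apply (P : Fin 4 → R2) : PhiC P = Phi P := rfl

lemma rho_fam (t : ℕ × ℕ × Fin 4) : rho (BprimeBasisFam t) = PhiC (g1 t) := by
  obtain ⟨p, q, i⟩ := t
  rw [fam_eq, rho_famB, g1, PhiC_apply, Phi_single]

lemma li_rho_fam : LinearIndependent ℂ (fun t => rho (BprimeBasisFam t)) := by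
  have h1 : LinearIndependent ℂ (⇑bigB ∘ emb) := bigB.linearIndependent.comp emb emb_inj
  have h2 := h1.units_smul (fun t : ℕ × ℕ × Fin 4 => (Units.mk0 (2:ℂ) two_ne_zero)^t.1)
  have h3 : LinearIndependent ℂ g1 := by
    have e : g1 = (fun t : ℕ × ℕ × Fin 4 => (Units.mk0 (2:ℂ) two_ne_zero)^t.1) • (⇑bigB ∘ emb) :=
      funext fun t => g1_eq t
    rw [e]; exact h2
  have h4 := h3.map' PhiC PhiC_ker
  have h5 : (⇑PhiC ∘ g1) = fun t => rho (BprimeBasisFam t) :=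
    funext fun t => (rho_fam t).symm
  rw [h5] at h4
  exact h4

lemma fam_li : LinearIndependent ℂ BprimeBasisFam :=
  LinearIndependent.of_comp rho.toLinearMap li_rho_fam

lemma rho_eq_zero {u : Bprime} (hu : rho u = 0) : u = 0 := by
  have HU : u ∈ Sp := span_top ▸ Submodule.mem_top
  obtain ⟨c, hc⟩ := Finsupp.mem_span_range_iff_exists_finsupp.mp HU
  have h0 : (Finsupp.linearCombination ℂ (fun t => rho (BprimeBasisFam t))) c = 0 := by
    rw [Finsupp.linearCombination_apply]
    have : rho (c.sum fun t r => r • BprimeBasisFam t) = 0 := by rw [hc]; exact hu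
    rw [map_finsuppSum] at this
    simpa [map_smul] using this
  have hc0 := linearIndependent_iff.mp li_rho_fam c h0
  rw [← hc, hc0]
  simp

lemma rho_inj : Function.Injective rho := by
  intro x y h
  have := rho_eq_zero (u := x - y) (by rw [map_sub, h, sub_self])
  exact sub_eq_zero.mp this

/-! ### Part E : the center -/

lemma commutant {m : M2} (hA : m * Am = Am * m) (hB : m * Bm = Bm * m) :
    ∃ d : R2, m = d • (1 : M2) := by
  have eA := fun i j => Matrix.ext_iff.mpr hA i j
  have eB := fun i j => Matrix.ext_iff.mpr hB i j
  have eA01 := eA 0 1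
  have eA00 := eA 0 0
  have eB00 := eB 0 0
  simp [Am, Bm, Matrix.mul_apply, Fin.sum_univ_two] at eA01 eA00 eB00
  -- eA01 : m 0 0 = m 1 1, eA00 : m 0 1 * xx^2 = m 1 0, eB00 : relation forcing m 0 1 = 0
  have h01 : m 0 1 * (yy - 2*xx^2) = 0 := by linear_combination eB00
  have hyne : (yy - 2*xx^2 : R2) ≠ 0 := by
    apply ev_ne; simp [xx, yy]; norm_num
  have hm01 : m 0 1 = 0 := by
    rcases mul_eq_zero.mp h01 with h' | h'
    · exact h'
    · exact absurd h' hyne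
  refine ⟨m 0 0, Matrix.ext fun i j => ?_⟩
  have hm10 : m 1 0 = 0 := by rw [← eA00, hm01]; ring
  fin_cases i <;> fin_cases j <;>
    simp [Matrix.one_apply, hm01, hm10, eA01]

noncomputable def e0fam : ℕ × ℕ → Bprime := fun pq => zB ^ pq.1 * (aB + bB) ^ (2 * pq.2)

lemma e0_eq (p q : ℕ) : e0fam (p, q) = famB p q 0 := by
  simp [e0fam, famB, wB, TB, pow_mul]

noncomputable def Wc : Submodule ℂ Bprime := Submodule.span ℂ (Set.range e0fam)
noncomputable def Wr : Submodule ℂ Bprime :=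
  Submodule.span ℂ (Set.range fun t : ℕ × ℕ × Fin 3 => famB t.1 t.2.1 t.2.2.succ)

lemma sup_eq_top : Wc ⊔ Wr = ⊤ := by
  rw [← top_le_iff, ← span_top, Submodule.span_le]
  rintro x ⟨⟨p, q, i⟩, rfl⟩
  rw [fam_eq]
  fin_cases i
  · exact Submodule.mem_sup_left (Submodule.subset_span ⟨(p,q), e0_eq p q⟩)
  · exact Submodule.mem_sup_right (Submodule.subset_span ⟨(p,q,0), rfl⟩)
  · exact Submodule.mem_sup_right (Submodule.subset_span ⟨(p,q,1), rfl⟩)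
  · exact Submodule.mem_sup_right (Submodule.subset_span ⟨(p,q,2), rfl⟩)

lemma W_rho_scalar : ∀ v ∈ Wc, ∃ d : R2, rho v = d • (1:M2) := by
  intro v hv
  induction hv using Submodule.span_induction with
  | mem x hx =>
      obtain ⟨⟨p,q⟩, rfl⟩ := hx
      exact ⟨(2*xx)^p * yy^q, by rw [e0_eq, rho_famB]; simp [wM]⟩
  | zero => exact ⟨0, by simp⟩
  | add x y _ _ hx hy =>
      obtain ⟨d1, h1⟩ := hx; obtain ⟨d2, h2⟩ := hy
      exact ⟨d1 + d2, by rw [map_add, h1, h2, add_smul]⟩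
  | smul c x _ hx =>
      obtain ⟨d, h⟩ := hx
      exact ⟨c • d, by rw [map_smul, h, ← smul_assoc]⟩

lemma Wr_rho_form : ∀ v ∈ Wr, ∃ P : Fin 4 → R2, P 0 = 0 ∧ rho v = PhiC P := by
  intro v hv
  induction hv using Submodule.span_induction with
  | mem x hx =>
      obtain ⟨⟨p,q,j⟩, rfl⟩ := hx
      refine ⟨Pi.single j.succ ((2*xx)^p * yy^q), Pi.single_eq_of_ne (Fin.succ_ne_zero j).symm _, ?_⟩
      rw [rho_famB, PhiC_apply, Phi_single]
  | zero => exact ⟨0, rfl, by simp⟩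
  | add x y _ _ hx hy =>
      obtain ⟨P1, h10, h1⟩ := hx; obtain ⟨P2, h20, h2⟩ := hy
      exact ⟨P1 + P2, by simp [h10, h20], by rw [map_add, h1, h2, map_add]⟩
  | smul c x _ hx =>
      obtain ⟨P, hP0, hP⟩ := hx
      exact ⟨c • P, by simp [hP0], by rw [map_smul, hP, map_smul]⟩

lemma center_into : ∀ u ∈ Subalgebra.center ℂ Bprime, u ∈ Wc := by
  intro u hu
  have hA : rho u * Am = Am * rho u := by
    have h := congrArg rho (ccomm hu aB)
    simpa [map_mul] using h
  have hB : rho u * Bm = Bm * rho u := by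
    have h := congrArg rho (ccomm hu bB)
    simpa [map_mul] using h
  obtain ⟨d, hd⟩ := commutant hA hB
  have hsup : u ∈ Wc ⊔ Wr := sup_eq_top ▸ Submodule.mem_top
  obtain ⟨w, hw, w', hw', rfl⟩ := Submodule.mem_sup.mp hsup
  obtain ⟨α, hα⟩ := W_rho_scalar w hw
  obtain ⟨P, hP0, hPf⟩ := Wr_rho_form w' hw'
  have hw'0 : rho w' = (d - α) • (1:M2) := by
    have h1 : rho w' = rho (w + w') - rho w := by rw [map_add]; abel
    rw [h1, hd, hα, sub_smul]
  set Q : Fin 4 → R2 := fun i => P i - (Pi.single (0:Fin 4) (d - α) : Fin 4 → R2) i with hQdef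
  have hQ : ∑ i, Q i • wM i = 0 := by
    have h1 : ∑ i, (Pi.single (0:Fin 4) (d - α) : Fin 4 → R2) i • wM i = (d - α) • wM 0 :=
      sum_single_smul 0 (d - α)
    have h2 : ∑ i, P i • wM i = rho w' := by
      rw [hPf, PhiC_apply]; rfl
    calc ∑ i, Q i • wM i
        = ∑ i, P i • wM i - ∑ i, (Pi.single (0:Fin 4) (d - α) : Fin 4 → R2) i • wM i := by
          simp [hQdef, sub_smul, Finset.sum_sub_distrib]
      _ = 0 := by
          rw [h1, h2, hw'0]; simp [wM]
  have hQ0 := wM_indep _ hQ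
  have hP : ∀ i, P i = 0 := by
    intro i
    rcases eq_or_ne i 0 with rfl | hi
    · exact hP0
    · have h := hQ0 i
      simpa [hQdef, Pi.single_eq_of_ne hi] using h
  have hrw' : rho w' = 0 := by
    rw [hPf, PhiC_apply]
    have : P = 0 := funext hP
    rw [this]
    simp
  have hw'z : w' = 0 := rho_eq_zero hrw'
  rw [hw'z, add_zero]
  exact hw

end BP
end BP

/-- the elements `z^p (a+b)^{2q}`, `a z^p (a+b)^{2q}`, `b z^p (a+b)^{2q}`,
`a b z^p (a+b)^{2q}` (`p, q ≥ 0`) form a basis of `B'`, and the center of `B'` is the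
span of the elements `z^p (a+b)^{2q}`. -/
theorem Bprime_basis_and_center :
    LinearIndependent ℂ BprimeBasisFam ∧
    Submodule.span ℂ (Set.range BprimeBasisFam) = ⊤ ∧
    Subalgebra.toSubmodule (Subalgebra.center ℂ Bprime)
      = Submodule.span ℂ (Set.range fun pq : ℕ × ℕ => zB ^ pq.1 * (aB + bB) ^ (2 * pq.2)) := by
  refine ⟨BP.fam_li, BP.span_top, ?_⟩
  have hrange : (Set.range fun pq : ℕ × ℕ => zB ^ pq.1 * (aB + bB) ^ (2 * pq.2))
      = Set.range BP.e0fam := rfl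
  rw [hrange]
  apply le_antisymm
  · intro u hu
    exact BP.center_into u ((Subalgebra.mem_toSubmodule _).mp hu)
  · rw [Submodule.span_le]
    rintro x ⟨pq, rfl⟩
    simp only [SetLike.mem_coe, Subalgebra.mem_toSubmodule]
    exact mul_mem (pow_mem BP.z_mem_center _)
      (by rw [pow_mul]; exact pow_mem BP.T_mem_center _)
end

section
/- Let B' be the C-algebra with generators a, b, z and relations a² = b² = z²/4, [z,a] = [z,b] = 0, graded with deg a = deg b = deg z = 2. Then for every k ≥ 0, the degree-2k component of the center of B' has dimension 1 + ⌊k/2⌋. -/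
noncomputable def genB : Fin 3 → Bprime
  | 0 => aB
  | 1 => bB
  | 2 => zB

/-- The span of the images in `B'` of words of length `k` in the generators `a, b, z`:
since `deg a = deg b = deg z = 2`, this is the degree-`2k` component of `B'`. -/
noncomputable def BprimeDeg (k : ℕ) : Submodule ℂ Bprime :=
  Submodule.span ℂ {x | ∃ l : List (Fin 3), l.length = k ∧ x = (l.map genB).prod}

open LaurentPolynomial

abbrev RL := LaurentPolynomial ℂ
abbrev A2 := Matrix (Fin 2) (Fin 2) RL
noncomputable def uM : A2 := !![0, 1; 1, 0]
noncomputable def vM : A2 := !![0, T 1; T (-1), 0]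

lemma four_A2 : ((2 : A2) * 2) = (4:ℂ) • 1 := by
  rw [Algebra.smul_def, map_ofNat]; norm_num

lemma TmT : ∀ m : ℤ, T m * T (-m) = (1 : RL) := by
  intro m; rw [← T_add, add_neg_cancel, T_zero]

lemma uM_mul_uM : uM * uM = (4 : ℂ)⁻¹ • ((2 : A2) * (2 : A2)) := by
  rw [four_A2, smul_smul]
  norm_num [uM, Matrix.mul_fin_two, ← Matrix.one_fin_two]

lemma vM_mul_vM : vM * vM = (4 : ℂ)⁻¹ • ((2 : A2) * (2 : A2)) := by
  rw [four_A2, smul_smul, vM, Matrix.mul_fin_two]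
  rw [show T 1 * T (-1) = (1:RL) from TmT 1, show T (-1) * T 1 = (1:RL) by rw [mul_comm]; exact TmT 1]
  norm_num [← Matrix.one_fin_two]

noncomputable def fM : Fin 3 → A2
  | 0 => uM
  | 1 => vM
  | 2 => 2

noncomputable def ρ : Bprime →ₐ[ℂ] A2 :=
  RingQuot.liftAlgHom ℂ ⟨FreeAlgebra.lift ℂ fM, by
    rintro x y ⟨⟩ <;>
      simp only [map_mul, map_smul, FreeAlgebra.lift_ι_apply, fM]
    · exact uM_mul_uM
    · exact vM_mul_vM
    · exact (Commute.ofNat_left 2 uM).eq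
    · exact (Commute.ofNat_left 2 vM).eq⟩

lemma ρ_aB : ρ aB = uM := by
  rw [aB, ρ, RingQuot.liftAlgHom_mkAlgHom_apply, FreeAlgebra.lift_ι_apply]; rfl

lemma ρ_bB : ρ bB = vM := by
  rw [bB, ρ, RingQuot.liftAlgHom_mkAlgHom_apply, FreeAlgebra.lift_ι_apply]; rfl

lemma ρ_zB : ρ zB = 2 := by
  rw [zB, ρ, RingQuot.liftAlgHom_mkAlgHom_apply, FreeAlgebra.lift_ι_apply]; rfl

-- relations in Bprime
lemma haa : aB * aB = (4 : ℂ)⁻¹ • (zB * zB) := by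
  simpa [aB, zB, map_mul, map_smul] using RingQuot.mkAlgHom_rel ℂ BpRel.ha
lemma hbb : bB * bB = (4 : ℂ)⁻¹ • (zB * zB) := by
  simpa [bB, zB, map_mul, map_smul] using RingQuot.mkAlgHom_rel ℂ BpRel.hb
lemma hzaB : zB * aB = aB * zB := by
  simpa [aB, zB, map_mul] using RingQuot.mkAlgHom_rel ℂ BpRel.hza
lemma hzbB : zB * bB = bB * zB := by
  simpa [bB, zB, map_mul] using RingQuot.mkAlgHom_rel ℂ BpRel.hzb

lemma a_zpow (m : ℕ) : aB * zB ^ m = zB ^ m * aB := by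
  induction m with
  | zero => simp
  | succ n ih => rw [pow_succ, ← mul_assoc, ih, mul_assoc, ← hzaB, ← mul_assoc]

lemma b_zpow (m : ℕ) : bB * zB ^ m = zB ^ m * bB := by
  induction m with
  | zero => simp
  | succ n ih => rw [pow_succ, ← mul_assoc, ih, mul_assoc, ← hzbB, ← mul_assoc]

-- alternating words
noncomputable def altB : Bool → ℕ → Bprime
  | _, 0 => 1
  | false, (n+1) => aB * altB true n
  | true, (n+1) => bB * altB false n

-- normal forms of degree k
noncomputable def Gnf (k : ℕ) : Option (Bool × Fin k) → Bprime
  | none => zB ^ k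
  | some (s, i) => zB ^ (k - 1 - (i : ℕ)) * altB s ((i : ℕ) + 1)

open Submodule in
lemma mem_span_nf {k m ℓ : ℕ} (h : m + ℓ = k) (s : Bool) :
    zB ^ m * altB s ℓ ∈ Submodule.span ℂ (Set.range (Gnf k)) := by
  apply Submodule.subset_span
  cases ℓ with
  | zero =>
    refine ⟨none, ?_⟩
    simp only [Gnf, altB, mul_one]
    congr 1
    omega
  | succ n =>
    refine ⟨some (s, ⟨n, by omega⟩), ?_⟩
    simp only [Gnf]
    congr 2
    omega

open Submodule in
lemma gen_mul_nf (k : ℕ) (j : Fin 3) (idx : Option (Bool × Fin k)) :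
    genB j * Gnf k idx ∈ Submodule.span ℂ (Set.range (Gnf (k+1))) := by
  match idx with
  | none =>
    show genB j * zB ^ k ∈ _
    fin_cases j
    · show aB * zB ^ k ∈ _
      rw [a_zpow]
      have : aB = altB false 1 := by simp [altB]
      rw [this]
      exact mem_span_nf (by omega) false
    · show bB * zB ^ k ∈ _
      rw [b_zpow]
      have : bB = altB true 1 := by simp [altB]
      rw [this]
      exact mem_span_nf (by omega) true
    · show zB * zB ^ k ∈ _
      rw [← pow_succ']
      simpa [altB] using mem_span_nf (k := k+1) (m := k+1) (ℓ := 0) (by omega) false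
  | some (s, i) =>
    have hik : (i : ℕ) < k := i.2
    show genB j * (zB ^ (k - 1 - (i : ℕ)) * altB s ((i : ℕ) + 1)) ∈ _
    fin_cases j
    · show aB * _ ∈ _
      rw [← mul_assoc, a_zpow, mul_assoc]
      cases s with
      | true =>
        rw [show aB * altB true ((i : ℕ) + 1) = altB false ((i : ℕ) + 1 + 1) from rfl]
        exact mem_span_nf (by omega) false
      | false =>
        rw [show altB false ((i : ℕ) + 1) = aB * altB true (i : ℕ) from rfl,
          ← mul_assoc aB aB, haa, smul_mul_assoc, mul_smul_comm]
        refine Submodule.smul_mem _ _ ?_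
        rw [show zB ^ (k - 1 - (i : ℕ)) * (zB * zB * altB true (i : ℕ))
            = zB ^ (k - 1 - (i : ℕ) + 2) * altB true (i : ℕ) by
          simp only [pow_add, sq, mul_assoc]]
        exact mem_span_nf (by omega) true
    · show bB * _ ∈ _
      rw [← mul_assoc, b_zpow, mul_assoc]
      cases s with
      | false =>
        rw [show bB * altB false ((i : ℕ) + 1) = altB true ((i : ℕ) + 1 + 1) from rfl]
        exact mem_span_nf (by omega) true
      | true =>
        rw [show altB true ((i : ℕ) + 1) = bB * altB false (i : ℕ) from rfl,
          ← mul_assoc bB bB, hbb, smul_mul_assoc, mul_smul_comm]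
        refine Submodule.smul_mem _ _ ?_
        rw [show zB ^ (k - 1 - (i : ℕ)) * (zB * zB * altB false (i : ℕ))
            = zB ^ (k - 1 - (i : ℕ) + 2) * altB false (i : ℕ) by
          simp only [pow_add, sq, mul_assoc]]
        exact mem_span_nf (by omega) false
    · show zB * _ ∈ _
      rw [← mul_assoc, ← pow_succ']
      exact mem_span_nf (by omega) s

lemma prod_mem_span (l : List (Fin 3)) :
    (l.map genB).prod ∈ Submodule.span ℂ (Set.range (Gnf l.length)) := by
  induction l with
  | nil =>
    simp only [List.map_nil, List.prod_nil, List.length_nil]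
    exact Submodule.subset_span ⟨none, by simp [Gnf]⟩
  | cons j l ih =>
    rw [List.map_cons, List.prod_cons]
    have h2 := Submodule.mem_map_of_mem (f := LinearMap.mulLeft ℂ (genB j)) ih
    rw [Submodule.map_span] at h2
    have h3 : Submodule.span ℂ (LinearMap.mulLeft ℂ (genB j) '' Set.range (Gnf l.length))
        ≤ Submodule.span ℂ (Set.range (Gnf (l.length + 1))) := by
      rw [Submodule.span_le]
      rintro x ⟨y, ⟨idx, rfl⟩, rfl⟩
      exact gen_mul_nf l.length j idx
    simpa using h3 h2

lemma BprimeDeg_le_span (k : ℕ) :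
    BprimeDeg k ≤ Submodule.span ℂ (Set.range (Gnf k)) := by
  rw [BprimeDeg, Submodule.span_le]
  rintro x ⟨l, hl, rfl⟩
  subst hl
  exact prod_mem_span l


noncomputable def MM : ℕ → ℤ → A2 := fun r n =>
  if r = 0 then !![T n, 0; 0, T (-n)] else !![0, T n; T (-n), 0]

lemma u_mul_MM (r : ℕ) (n : ℤ) : uM * MM r n = MM (if r = 0 then 1 else 0) (-n) := by
  by_cases h : r = 0 <;>
    simp [MM, h, uM, Matrix.mul_fin_two]

lemma v_mul_MM (r : ℕ) (n : ℤ) : vM * MM r n = MM (if r = 0 then 1 else 0) (1 - n) := by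
  have e1 : (T 1 : RL) * T (-n) = T (1 - n) := by
    rw [← T_add, show (1 : ℤ) + -n = 1 - n by ring]
  have e2 : (T (-1) : RL) * T n = T (n - 1) := by
    rw [← T_add, show (-1 : ℤ) + n = n - 1 by ring]
  by_cases h : r = 0
  · rw [MM, MM]
    simp only [h, if_true, reduceIte]
    rw [vM, Matrix.mul_fin_two, neg_sub]
    simp only [zero_mul, mul_zero, zero_add, add_zero, e1, e2, one_ne_zero, if_false, reduceIte]
  · rw [MM, MM]
    simp only [h, if_false, reduceIte]
    rw [vM, Matrix.mul_fin_two, neg_sub]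
    simp only [zero_mul, mul_zero, zero_add, add_zero, e1, e2, one_ne_zero, if_false, reduceIte]

noncomputable def epsZ : Bool → ℕ → ℤ
  | false, l => -((l / 2 : ℕ) : ℤ)
  | true, l => (((l + 1) / 2 : ℕ) : ℤ)

lemma rho_alt (ℓ : ℕ) : ∀ s, ρ (altB s ℓ) = MM (ℓ % 2) (epsZ s ℓ) := by
  induction ℓ with
  | zero =>
    intro s
    have h1 : ρ (altB s 0) = 1 := by cases s <;> simp [altB]
    rw [h1]
    simp [MM, epsZ, T_zero, Matrix.one_fin_two]
    cases s <;> simp [T_zero]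
  | succ n ih =>
    intro s
    cases s with
    | false =>
      rw [show altB false (n+1) = aB * altB true n from rfl, map_mul, ρ_aB, ih true, u_mul_MM]
      have h1 : (if n % 2 = 0 then 1 else 0) = (n+1) % 2 := by
        rcases Nat.mod_two_eq_zero_or_one n with h | h <;> simp [h] <;> omega
      rw [h1]
      rfl
    | true =>
      rw [show altB true (n+1) = bB * altB false n from rfl, map_mul, ρ_bB, ih false, v_mul_MM]
      have h1 : (if n % 2 = 0 then 1 else 0) = (n+1) % 2 := by
        rcases Nat.mod_two_eq_zero_or_one n with h | h <;> simp [h] <;> omega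
      have h2 : 1 - epsZ false n = epsZ true (n+1) := by
        simp only [epsZ]
        push_cast
        omega
      rw [h1, h2]

lemma two_pow_mul (m : ℕ) (X : A2) : (2 : A2) ^ m * X = ((2 : ℂ) ^ m) • X := by
  rw [Algebra.smul_def, map_pow, map_ofNat]

def mExp (k : ℕ) : Option (Bool × Fin k) → ℕ
  | none => k
  | some (_, i) => k - 1 - (i : ℕ)

def rIdx (k : ℕ) : Option (Bool × Fin k) → ℕ
  | none => 0
  | some (_, i) => ((i : ℕ) + 1) % 2

noncomputable def eIdx (k : ℕ) : Option (Bool × Fin k) → ℤ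
  | none => 0
  | some (s, i) => epsZ s ((i : ℕ) + 1)

lemma MM_zero_zero : MM 0 0 = 1 := by
  simp [MM, Matrix.one_fin_two]

lemma rho_Gnf (k : ℕ) (idx : Option (Bool × Fin k)) :
    ρ (Gnf k idx) = ((2 : ℂ) ^ (mExp k idx)) • MM (rIdx k idx) (eIdx k idx) := by
  match idx with
  | none =>
    show ρ (zB ^ k) = _
    rw [map_pow, ρ_zB, mExp, rIdx, eIdx, MM_zero_zero, ← mul_one ((2:A2)^k), two_pow_mul]
  | some (s, i) =>
    show ρ (zB ^ (k - 1 - (i:ℕ)) * altB s ((i:ℕ)+1)) = _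
    rw [map_mul, map_pow, ρ_zB, rho_alt, two_pow_mul]
    rfl

noncomputable def cf (j : Fin 2) (n : ℤ) : A2 →ₗ[ℂ] ℂ where
  toFun X := (X 0 j).coeff n
  map_add' X Y := rfl
  map_smul' c X := rfl

lemma cf_MM (j : Fin 2) (n : ℤ) (r : ℕ) (m : ℤ) :
    cf j n (MM r m) = if j = (if r = 0 then (0 : Fin 2) else 1) ∧ m = n then 1 else 0 := by
  by_cases h : r = 0
  · subst h
    simp only [MM, if_true, reduceIte, cf, LinearMap.coe_mk, AddHom.coe_mk]
    fin_cases j <;> simp [Finsupp.single_apply]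
  · simp only [MM, h, if_false, reduceIte, cf, LinearMap.coe_mk, AddHom.coe_mk]
    fin_cases j <;> simp [h, Finsupp.single_apply]

lemma li_of_dual {ι : Type*} [Fintype ι] [DecidableEq ι] {V : Type*} [AddCommGroup V]
    [Module ℂ V] (f : ι → V) (φ : ι → V →ₗ[ℂ] ℂ) (hd : ∀ i, φ i (f i) ≠ 0)
    (ho : ∀ i j, i ≠ j → φ i (f j) = 0) : LinearIndependent ℂ f := by
  rw [Fintype.linearIndependent_iff]
  intro g hg i
  have h := congrArg (φ i) hg
  rw [map_sum, map_zero] at h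
  simp only [map_smul, smul_eq_mul] at h
  rw [Finset.sum_eq_single i (fun b _ hb => by rw [ho i b (Ne.symm hb), mul_zero])
    (by simp)] at h
  rcases mul_eq_zero.mp h with h' | h'
  · exact h'
  · exact absurd h' (hd i)

lemma li_tri {N : ℕ} {V : Type*} [AddCommGroup V] [Module ℂ V]
    (f : Fin N → V) (φ : Fin N → V →ₗ[ℂ] ℂ) (hd : ∀ i, φ i (f i) ≠ 0)
    (ho : ∀ i j, j < i → φ i (f j) = 0) : LinearIndependent ℂ f := by
  rw [Fintype.linearIndependent_iff]
  intro g hg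
  by_contra hc
  push_neg at hc
  obtain ⟨i0, hi0⟩ := hc
  classical
  let s := Finset.univ.filter (fun i => g i ≠ 0)
  have hs : s.Nonempty := ⟨i0, by simp [s, hi0]⟩
  set i1 := s.max' hs with hi1
  have h := congrArg (φ i1) hg
  rw [map_sum, map_zero] at h
  simp only [map_smul, smul_eq_mul] at h
  rw [Finset.sum_eq_single i1 ?_ (by simp)] at h
  · have hne : g i1 ≠ 0 := by
      have := s.max'_mem hs
      simpa [s] using this
    rcases mul_eq_zero.mp h with h' | h'
    · exact hne h'
    · exact hd i1 h'
  · intro b _ hb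
    by_cases hgb : g b = 0
    · rw [hgb, zero_mul]
    · have hbs : b ∈ s := by simp [s, hgb]
      have hlt : b < i1 := lt_of_le_of_ne (s.le_max' b hbs) hb
      rw [ho i1 b hlt, mul_zero]

lemma rIdx_lt_two {k : ℕ} (x : Option (Bool × Fin k)) : rIdx k x < 2 := by
  cases x with
  | none => simp [rIdx]
  | some p => simp only [rIdx]; omega

lemma idx_inj {k : ℕ} {i j : Option (Bool × Fin k)} (hr : rIdx k i = rIdx k j)
    (he : eIdx k i = eIdx k j) : i = j := by
  match i, j with
  | none, none => rfl
  | none, some (t, jx) =>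
    exfalso
    simp only [rIdx, eIdx] at hr he
    cases t <;> simp only [epsZ] at he <;> omega
  | some (s, ix), none =>
    exfalso
    simp only [rIdx, eIdx] at hr he
    cases s <;> simp only [epsZ] at he <;> omega
  | some (s, ix), some (t, jx) =>
    simp only [rIdx, eIdx] at hr he
    cases s <;> cases t <;> simp only [epsZ] at he <;>
      simp only [Option.some.injEq, Prod.mk.injEq]
    · exact ⟨trivial, Fin.ext (by omega)⟩
    · exfalso; omega
    · exfalso; omega
    · exact ⟨trivial, Fin.ext (by omega)⟩

lemma famG_li (k : ℕ) : LinearIndependent ℂ (fun idx => ρ (Gnf k idx)) := by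
  apply li_of_dual _ (fun idx => cf (if rIdx k idx = 0 then 0 else 1) (eIdx k idx))
  · intro i
    rw [rho_Gnf, map_smul, cf_MM, if_pos ⟨rfl, rfl⟩, smul_eq_mul, mul_one]
    exact pow_ne_zero _ two_ne_zero
  · intro i j hij
    rw [rho_Gnf, map_smul, cf_MM, if_neg, smul_zero]
    rintro ⟨hpos, he⟩
    apply hij
    have h1 : rIdx k j = rIdx k i := by
      have hi2 := rIdx_lt_two i
      have hj2 := rIdx_lt_two j
      by_cases h1 : rIdx k i = 0 <;> by_cases h2 : rIdx k j = 0 <;>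
        simp [h1, h2] at hpos ⊢ <;> omega
    exact (idx_inj h1 he).symm

lemma inj_on_span (k : ℕ) {x : Bprime} (hx : x ∈ Submodule.span ℂ (Set.range (Gnf k)))
    (hρ : ρ x = 0) : x = 0 := by
  rw [Submodule.mem_span_range_iff_exists_fun] at hx
  obtain ⟨c, hc⟩ := hx
  have h2 : ∑ idx, c idx • ρ (Gnf k idx) = 0 := by
    have : ∑ idx, c idx • ρ (Gnf k idx) = ρ (∑ idx, c idx • Gnf k idx) := by
      rw [map_sum]
      simp only [map_smul]
    rw [this, hc, hρ]
  have h3 := (Fintype.linearIndependent_iff.mp (famG_li k)) c h2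
  rw [← hc]
  simp [h3]

-- centrality
lemma central_of_comm (x : Bprime) (h0 : aB * x = x * aB) (h1 : bB * x = x * bB)
    (h2 : zB * x = x * zB) : x ∈ Subalgebra.center ℂ Bprime := by
  rw [Subalgebra.mem_center_iff]
  intro g
  obtain ⟨y, rfl⟩ := RingQuot.mkAlgHom_surjective ℂ BpRel g
  induction y using FreeAlgebra.induction with
  | grade0 r =>
    rw [AlgHom.commutes]
    exact Algebra.commutes r x
  | grade1 i =>
    fin_cases i
    · exact h0
    · exact h1
    · exact h2
  | mul a b ha hb => rw [map_mul, mul_assoc, hb, ← mul_assoc, ha, mul_assoc]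
  | add a b ha hb => rw [map_add, add_mul, mul_add, ha, hb]

lemma zz_comm_a : (zB * zB) * aB = aB * (zB * zB) := by
  rw [mul_assoc, hzaB, ← mul_assoc, hzaB, mul_assoc]

lemma zz_comm_b : (zB * zB) * bB = bB * (zB * zB) := by
  rw [mul_assoc, hzbB, ← mul_assoc, hzbB, mul_assoc]

lemma aa_comm_b : (aB * aB) * bB = bB * (aB * aB) := by
  rw [haa, smul_mul_assoc, mul_smul_comm, zz_comm_b]

lemma bb_comm_a : (bB * bB) * aB = aB * (bB * bB) := by
  rw [hbb, smul_mul_assoc, mul_smul_comm, zz_comm_a]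

noncomputable def cB : Bprime := aB * bB + bB * aB

lemma zB_central : zB ∈ Subalgebra.center ℂ Bprime := by
  refine central_of_comm zB hzaB.symm hzbB.symm rfl

lemma cB_central : cB ∈ Subalgebra.center ℂ Bprime := by
  refine central_of_comm cB ?_ ?_ ?_
  · show aB * (aB * bB + bB * aB) = (aB * bB + bB * aB) * aB
    rw [mul_add, add_mul, ← mul_assoc aB aB bB, aa_comm_b, ← mul_assoc aB bB aB,
      mul_assoc bB aB aB]
    exact add_comm _ _
  · show bB * (aB * bB + bB * aB) = (aB * bB + bB * aB) * bB
    rw [mul_add, add_mul, ← mul_assoc bB bB aB, bb_comm_a, ← mul_assoc bB aB bB,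
      mul_assoc aB bB bB]
    exact add_comm _ _
  · show zB * (aB * bB + bB * aB) = (aB * bB + bB * aB) * zB
    rw [mul_add, add_mul, ← mul_assoc zB aB bB, hzaB, mul_assoc aB zB bB, hzbB,
      ← mul_assoc aB bB zB, ← mul_assoc zB bB aB, hzbB, mul_assoc bB zB aB, hzaB,
      ← mul_assoc bB aB zB]

-- degree membership
lemma mul_memDeg {m n : ℕ} {x y : Bprime} (hx : x ∈ BprimeDeg m) (hy : y ∈ BprimeDeg n) :
    x * y ∈ BprimeDeg (m + n) := by
  have h := Submodule.mul_mem_mul hx hy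
  have hle : BprimeDeg m * BprimeDeg n ≤ BprimeDeg (m + n) := by
    rw [BprimeDeg, BprimeDeg, Submodule.span_mul_span]
    rw [Submodule.span_le]
    rintro w hw
    rw [Set.mem_mul] at hw
    obtain ⟨a, ⟨l1, hl1, rfl⟩, b, ⟨l2, hl2, rfl⟩, rfl⟩ := hw
    exact Submodule.subset_span ⟨l1 ++ l2, by simp [hl1, hl2], by simp⟩
  exact hle h

lemma aB_memDeg : aB ∈ BprimeDeg 1 :=
  Submodule.subset_span ⟨[0], rfl, by simp [genB]⟩
lemma bB_memDeg : bB ∈ BprimeDeg 1 :=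
  Submodule.subset_span ⟨[1], rfl, by simp [genB]⟩
lemma zB_memDeg : zB ∈ BprimeDeg 1 :=
  Submodule.subset_span ⟨[2], rfl, by simp [genB]⟩
lemma one_memDeg : (1 : Bprime) ∈ BprimeDeg 0 :=
  Submodule.subset_span ⟨[], rfl, by simp⟩

lemma zpow_memDeg (m : ℕ) : zB ^ m ∈ BprimeDeg m := by
  induction m with
  | zero => simpa using one_memDeg
  | succ n ih => simpa [pow_succ, Nat.add_comm] using mul_memDeg ih zB_memDeg

lemma cB_memDeg : cB ∈ BprimeDeg 2 := by
  have h1 := mul_memDeg aB_memDeg bB_memDeg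
  have h2 := mul_memDeg bB_memDeg aB_memDeg
  exact Submodule.add_mem _ h1 h2

lemma cpow_memDeg (j : ℕ) : cB ^ j ∈ BprimeDeg (2 * j) := by
  induction j with
  | zero => simpa using one_memDeg
  | succ n ih =>
    have := mul_memDeg ih cB_memDeg
    have he : 2 * n + 2 = 2 * (n + 1) := by omega
    rw [he] at this
    simpa [pow_succ] using this

noncomputable def Cfam (k : ℕ) (j : Fin (k / 2 + 1)) : Bprime := zB ^ (k - 2 * (j : ℕ)) * cB ^ (j : ℕ)

lemma Cfam_memDeg (k : ℕ) (j : Fin (k / 2 + 1)) : Cfam k j ∈ BprimeDeg k := by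
  have hj : 2 * (j : ℕ) ≤ k := by have := j.2; omega
  have := mul_memDeg (zpow_memDeg (k - 2 * (j : ℕ))) (cpow_memDeg (j : ℕ))
  rwa [show k - 2 * (j : ℕ) + 2 * (j : ℕ) = k by omega] at this

lemma Cfam_central (k : ℕ) (j : Fin (k / 2 + 1)) : Cfam k j ∈ Subalgebra.center ℂ Bprime :=
  mul_mem (pow_mem zB_central _) (pow_mem cB_central _)

-- representation of Cfam
lemma rho_cB : ρ cB = ((T 1 + T (-1) : RL)) • (1 : A2) := by
  show ρ (aB * bB + bB * aB) = _
  rw [map_add, map_mul, map_mul, ρ_aB, ρ_bB]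
  ext i j
  fin_cases i <;> fin_cases j <;>
    simp [uM, vM, Matrix.mul_apply, Fin.sum_univ_two, Matrix.one_apply, Matrix.smul_apply,
      Matrix.add_apply, smul_eq_mul, add_comm]

lemma rho_Cfam (k : ℕ) (j : Fin (k / 2 + 1)) :
    ρ (Cfam k j) = ((2 : ℂ) ^ (k - 2 * (j : ℕ))) • (((T 1 + T (-1) : RL) ^ (j : ℕ)) • (1 : A2)) := by
  rw [Cfam, map_mul, map_pow, map_pow, ρ_zB, rho_cB, smul_pow, one_pow, two_pow_mul]

-- coefficients of (T 1 + T (-1))^j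
lemma RL_add_apply (f g : RL) (n : ℤ) : (f + g).coeff n = f.coeff n + g.coeff n := rfl

lemma mul_T_apply (f : RL) (m n : ℤ) : ((f * T m : RL)).coeff n = f.coeff (n - m) := by
  rw [show (T m : RL) = AddMonoidAlgebra.single m 1 from rfl]
  rw [AddMonoidAlgebra.coeff_mul_single_apply, mul_one, sub_eq_add_neg]

lemma pj_coeff_hi (j : ℕ) : ∀ n : ℤ, (j : ℤ) < n → ((T 1 + T (-1) : RL) ^ j).coeff n = 0 := by
  induction j with
  | zero =>
    intro n hn
    show (1 : RL).coeff n = 0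
    rw [← T_zero, T_apply]
    simp only [ite_eq_right_iff]
    omega
  | succ m ih =>
    intro n hn
    rw [pow_succ, mul_add, RL_add_apply, mul_T_apply, mul_T_apply,
      ih (n - 1) (by omega), ih (n - -1) (by omega)]
    simp

lemma pj_coeff_diag (j : ℕ) : ((T 1 + T (-1) : RL) ^ j).coeff (j : ℤ) = 1 := by
  induction j with
  | zero =>
    show (1 : RL).coeff 0 = 1
    rw [← T_zero, T_apply]
    simp
  | succ m ih =>
    rw [pow_succ, mul_add, RL_add_apply, mul_T_apply, mul_T_apply, Nat.cast_succ,
      show ((m : ℤ) + 1) - 1 = (m : ℤ) by ring, ih,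
      pj_coeff_hi m (((m : ℤ) + 1) - -1) (by omega)]
    simp

lemma cf_smul_one (n : ℤ) (q : RL) : cf 0 n (q • (1 : A2)) = q.coeff n := by
  show ((q • (1 : A2)) 0 0).coeff n = q.coeff n
  rw [Matrix.smul_apply, Matrix.one_apply_eq, smul_eq_mul, mul_one]

lemma famC_li (k : ℕ) : LinearIndependent ℂ (fun j : Fin (k / 2 + 1) => ρ (Cfam k j)) := by
  apply li_tri _ (fun j => cf 0 ((j : ℕ) : ℤ))
  · intro i
    rw [rho_Cfam, map_smul, cf_smul_one, pj_coeff_diag]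
    simp only [smul_eq_mul, mul_one]
    exact pow_ne_zero _ two_ne_zero
  · intro i j hji
    rw [rho_Cfam, map_smul, cf_smul_one, pj_coeff_hi _ _ (by exact_mod_cast hji), smul_zero]

-- trace and scalar embedding
noncomputable def trL : A2 →ₗ[ℂ] RL where
  toFun X := X 0 0 + X 1 1
  map_add' X Y := by
    simp only [Matrix.add_apply]
    ring
  map_smul' c X := by
    simp only [Matrix.smul_apply, RingHom.id_apply, smul_add]

noncomputable def eL : RL →ₗ[ℂ] A2 where
  toFun q := q • (1 : A2)
  map_add' q r := add_smul q r 1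
  map_smul' c q := smul_assoc c q (1 : A2)

lemma trL_apply (X : A2) : trL X = X 0 0 + X 1 1 := rfl

lemma RL_sub_apply (f g : RL) (n : ℤ) : (f - g).coeff n = f.coeff n - g.coeff n := rfl

lemma T_sub_T_ne : (T (-1) : RL) - T 1 ≠ 0 := by
  intro h
  have h2 := congrArg (fun f : RL => f.coeff (-1)) h
  simp only [RL_sub_apply, T_apply] at h2
  norm_num at h2

lemma comm_diag {X : A2} (hu : X * uM = uM * X) (hv : X * vM = vM * X) :
    X = (2 : ℂ)⁻¹ • eL (trL X) := by
  have hu' : ∀ i j, (X * uM) i j = (uM * X) i j := fun i j => by rw [hu]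
  have hv' : ∀ i j, (X * vM) i j = (vM * X) i j := fun i j => by rw [hv]
  have e1 : X 0 0 = X 1 1 := by
    have := hu' 0 1
    simpa [uM, Matrix.mul_apply, Fin.sum_univ_two] using this
  have e2 : X 0 1 = X 1 0 := by
    have := hu' 0 0
    simpa [uM, Matrix.mul_apply, Fin.sum_univ_two] using this
  have e3 : X 0 1 * T (-1) = T 1 * X 1 0 := by
    have := hv' 0 0
    simpa [vM, Matrix.mul_apply, Fin.sum_univ_two] using this
  have e4 : X 0 1 * ((T (-1) : RL) - T 1) = 0 := by
    rw [mul_sub, e3, ← e2, mul_comm, sub_self]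
  have e5 : X 0 1 = 0 := by
    rcases mul_eq_zero.mp e4 with h | h
    · exact h
    · exact absurd h T_sub_T_ne
  have e6 : X 1 0 = 0 := by rw [← e2, e5]
  have eL_app : ∀ q : RL, eL q = q • (1 : A2) := fun _ => rfl
  have r00 : ((2 : ℂ)⁻¹ • eL (trL X) : A2) 0 0 = (2 : ℂ)⁻¹ • (X 0 0 + X 1 1) := by
    rw [eL_app, trL_apply, Matrix.smul_apply, Matrix.smul_apply, Matrix.one_apply_eq,
      smul_eq_mul, mul_one]
  have r11 : ((2 : ℂ)⁻¹ • eL (trL X) : A2) 1 1 = (2 : ℂ)⁻¹ • (X 0 0 + X 1 1) := by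
    rw [eL_app, trL_apply, Matrix.smul_apply, Matrix.smul_apply, Matrix.one_apply_eq,
      smul_eq_mul, mul_one]
  have r01 : ((2 : ℂ)⁻¹ • eL (trL X) : A2) 0 1 = 0 := by
    rw [eL_app, trL_apply, Matrix.smul_apply, Matrix.smul_apply,
      Matrix.one_apply_ne (by decide), smul_eq_mul, mul_zero, smul_zero]
  have r10 : ((2 : ℂ)⁻¹ • eL (trL X) : A2) 1 0 = 0 := by
    rw [eL_app, trL_apply, Matrix.smul_apply, Matrix.smul_apply,
      Matrix.one_apply_ne (by decide), smul_eq_mul, mul_zero, smul_zero]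
  refine Matrix.ext (Fin.forall_fin_two.mpr ⟨Fin.forall_fin_two.mpr ⟨?_, ?_⟩,
    Fin.forall_fin_two.mpr ⟨?_, ?_⟩⟩)
  · rw [r00, ← e1, ← two_smul ℂ (X 0 0), smul_smul]
    norm_num
  · rw [r01, e5]
  · rw [r10, e6]
  · rw [r11, e1, ← two_smul ℂ (X 1 1), smul_smul]
    norm_num

noncomputable def Tfam (k : ℕ) : Fin (k / 2 + 1) → RL :=
  fun i => T (((i : ℕ) : ℤ)) + T (-((i : ℕ) : ℤ))

lemma TT_mem {k : ℕ} {e : ℤ} (i : ℕ) (hi : i < k / 2 + 1) (he : e = (i : ℤ) ∨ e = -(i : ℤ)) :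
    (T e + T (-e) : RL) ∈ Submodule.span ℂ (Set.range (Tfam k)) := by
  rcases he with rfl | rfl
  · exact Submodule.subset_span ⟨⟨i, hi⟩, rfl⟩
  · have h2 : (T (-(i : ℤ)) + T (-(-(i : ℤ))) : RL) = Tfam k ⟨i, hi⟩ := by
      rw [Tfam, neg_neg]
      exact add_comm _ _
    rw [h2]
    exact Submodule.subset_span ⟨⟨i, hi⟩, rfl⟩

lemma trL_MM_diag (e : ℤ) : trL (MM 0 e) = T e + T (-e) := by
  simp [trL_apply, MM]

lemma trL_MM_off (r : ℕ) (hr : r ≠ 0) (e : ℤ) : trL (MM r e) = 0 := by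
  simp [trL_apply, MM, hr]

lemma trL_Gnf (k : ℕ) (idx : Option (Bool × Fin k)) :
    trL (ρ (Gnf k idx)) ∈ Submodule.span ℂ (Set.range (Tfam k)) := by
  rw [rho_Gnf, map_smul]
  apply Submodule.smul_mem
  by_cases h : rIdx k idx = 0
  · rw [h, trL_MM_diag]
    match idx with
    | none =>
      exact TT_mem 0 (by omega) (by simp [eIdx])
    | some (s, ix) =>
      cases s with
      | false =>
        refine TT_mem (((ix : ℕ) + 1) / 2) (by have := ix.2; omega) (Or.inr ?_)
        simp [eIdx, epsZ]
      | true =>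
        refine TT_mem (((ix : ℕ) + 1 + 1) / 2) (by have := ix.2; simp [rIdx] at h; omega)
          (Or.inl ?_)
        simp [eIdx, epsZ]
  · rw [trL_MM_off _ h]
    exact Submodule.zero_mem _

lemma upper_mem (k : ℕ) {x : Bprime} (hx : x ∈ BprimeDeg k)
    (hc : x ∈ Subalgebra.center ℂ Bprime) :
    ρ x ∈ Submodule.span ℂ (Set.range (fun i => eL (Tfam k i))) := by
  have hu : ρ x * uM = uM * ρ x := by
    have h := congrArg ρ ((Subalgebra.mem_center_iff.mp hc) aB)
    rw [map_mul, map_mul, ρ_aB] at h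
    exact h.symm
  have hv : ρ x * vM = vM * ρ x := by
    have h := congrArg ρ ((Subalgebra.mem_center_iff.mp hc) bB)
    rw [map_mul, map_mul, ρ_bB] at h
    exact h.symm
  have hX := comm_diag hu hv
  have h1 : x ∈ Submodule.span ℂ (Set.range (Gnf k)) := BprimeDeg_le_span k hx
  have h2 : ρ.toLinearMap x ∈ Submodule.span ℂ (ρ.toLinearMap '' Set.range (Gnf k)) :=
    Submodule.apply_mem_span_image_of_mem_span ρ.toLinearMap h1
  have h3 : trL (ρ.toLinearMap x) ∈
      Submodule.span ℂ (trL '' (ρ.toLinearMap '' Set.range (Gnf k))) :=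
    Submodule.apply_mem_span_image_of_mem_span trL h2
  have h4 : trL (ρ x) ∈ Submodule.span ℂ (Set.range (Tfam k)) := by
    refine Submodule.span_le.mpr ?_ h3
    rintro y ⟨y2, ⟨y3, ⟨idx, rfl⟩, rfl⟩, rfl⟩
    exact trL_Gnf k idx
  have h5 : eL (trL (ρ x)) ∈ Submodule.span ℂ (eL '' Set.range (Tfam k)) :=
    Submodule.apply_mem_span_image_of_mem_span eL h4
  rw [hX]
  apply Submodule.smul_mem
  have himg : eL '' Set.range (Tfam k) = Set.range (fun i => eL (Tfam k i)) := by
    rw [← Set.range_comp]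
    rfl
  rwa [himg] at h5

/-- for every `k ≥ 0`, the degree-`2k` component of the center of `B'`
has dimension `1 + ⌊k/2⌋`. -/
theorem Bprime_center_graded_dimension (k : ℕ) :
    Module.finrank ℂ
      ↥(BprimeDeg k ⊓ Subalgebra.toSubmodule (Subalgebra.center ℂ Bprime))
      = 1 + k / 2 := by
  set V := BprimeDeg k ⊓ Subalgebra.toSubmodule (Subalgebra.center ℂ Bprime) with hV
  set W := Submodule.span ℂ (Set.range (fun i => eL (Tfam k i))) with hW
  have hmem : ∀ v : V, (ρ.toLinearMap.comp V.subtype) v ∈ W := by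
    intro v
    have h : ↑v ∈ BprimeDeg k ⊓ Subalgebra.toSubmodule (Subalgebra.center ℂ Bprime) := v.2
    rw [Submodule.mem_inf] at h
    exact upper_mem k h.1 ((Subalgebra.mem_toSubmodule _).mp h.2)
  let φ : V →ₗ[ℂ] W := LinearMap.codRestrict W (ρ.toLinearMap.comp V.subtype) hmem
  have hinj : Function.Injective φ := by
    intro v w h
    have h1 : ρ (v.1 - w.1) = 0 := by
      have h2 : ρ v.1 = ρ w.1 := congrArg Subtype.val h
      rw [map_sub, h2, sub_self]
    have h3 : v.1 - w.1 ∈ Submodule.span ℂ (Set.range (Gnf k)) := by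
      apply BprimeDeg_le_span k
      have hv1 : v.1 ∈ BprimeDeg k := (Submodule.mem_inf.mp v.2).1
      have hw1 : w.1 ∈ BprimeDeg k := (Submodule.mem_inf.mp w.2).1
      exact Submodule.sub_mem _ hv1 hw1
    have h4 := inj_on_span k h3 h1
    exact Subtype.ext (by rwa [sub_eq_zero] at h4)
  haveI : FiniteDimensional ℂ W := FiniteDimensional.span_of_finite ℂ (Set.finite_range _)
  haveI : FiniteDimensional ℂ V := FiniteDimensional.of_injective φ hinj
  have hWle : Module.finrank ℂ W ≤ k / 2 + 1 := by
    have h := finrank_range_le_card (R := ℂ) (fun i => eL (Tfam k i))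
    rw [Set.finrank] at h
    simpa using h
  have hub : Module.finrank ℂ V ≤ k / 2 + 1 :=
    le_trans (LinearMap.finrank_le_finrank_of_injective hinj) hWle
  have hlb : k / 2 + 1 ≤ Module.finrank ℂ V := by
    have hCV : ∀ j : Fin (k / 2 + 1), Cfam k j ∈ V := fun j =>
      Submodule.mem_inf.mpr ⟨Cfam_memDeg k j, (Subalgebra.mem_toSubmodule _).mpr (Cfam_central k j)⟩
    have hli : LinearIndependent ℂ (fun j : Fin (k / 2 + 1) => (⟨Cfam k j, hCV j⟩ : V)) := by
      apply LinearIndependent.of_comp (ρ.toLinearMap.comp V.subtype)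
      have he : (ρ.toLinearMap.comp V.subtype) ∘ (fun j => (⟨Cfam k j, hCV j⟩ : V))
          = fun j => ρ (Cfam k j) := rfl
      rw [he]
      exact famC_li k
    simpa using hli.fintype_card_le_finrank
  omega
end

section
/- In the algebra B with generators a, b, z subject to a² = b² = z²/4 and [z,a] = [z,b] = 0, for every odd s > 1 and every p ≥ s one has the identities a_s z^{p-s} = (1/4) b_{s-2} z^{p-s+2} + [a, b_{s-1} z^{p-s}] and b_s z^{p-s} = (1/4) a_{s-2} z^{p-s+2} + [b, a_{s-1} z^{p-s}], and for every even s > 0, (a_s - b_s) z^{p-s} = [a, b_{s-1} z^{p-s}]. -/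
/-- Alternating word: `altWord x y s = x y x y ⋯` (length `s`). -/
def altWord {B : Type*} [Ring B] : B → B → ℕ → B
  | _, _, 0 => 1
  | x, y, s + 1 => x * altWord y x s

lemma altWord_succ_right {B : Type*} [Ring B] :
    ∀ (n : ℕ) (x y : B), altWord x y (n+1) = altWord x y n * (if n % 2 = 0 then x else y) := by
  intro n
  induction n with
  | zero => intro x y; simp [altWord]
  | succ n ih =>
    intro x y
    show x * altWord y x (n+1) = _
    rw [ih y x]
    have h : (if n % 2 = 0 then y else x) = (if (n+1) % 2 = 0 then x else y) := by
      rcases Nat.even_or_odd n with h | h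
      · have : n % 2 = 0 := Nat.even_iff.mp h
        simp [this, Nat.add_mod, *]
      · have : n % 2 = 1 := Nat.odd_iff.mp h
        simp [this, Nat.add_mod, *]
    rw [h, ← mul_assoc]
    rfl

lemma key {B : Type*} [Ring B] [Algebra ℂ B] (c z W : B)
    (hc : c * c = (4 : ℂ)⁻¹ • (z * z)) (hzc : z * c = c * z) (k : ℕ) :
    W * c * z ^ k * c = (4 : ℂ)⁻¹ • (W * z ^ (k + 2)) := by
  have hpow : z ^ k * c = c * z ^ k := (Commute.pow_left (hzc : Commute z c) k)
  calc W * c * z ^ k * c = W * (c * c) * z ^ k := by rw [mul_assoc (W*c), hpow]; noncomm_ring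
    _ = (4 : ℂ)⁻¹ • (W * z ^ (k + 2)) := by
        rw [hc, mul_smul_comm, smul_mul_assoc]
        congr 1
        rw [mul_assoc, show z * z * z ^ k = z ^ (k + 2) by rw [← pow_two, ← pow_add, add_comm]]

lemma oddCase {B : Type*} [Ring B] [Algebra ℂ B] (x y z : B)
    (hx : x * x = (4 : ℂ)⁻¹ • (z * z)) (hzx : z * x = x * z) :
    ∀ s p : ℕ, Odd s → 1 < s → s ≤ p →
      altWord x y s * z ^ (p - s)
        = (4 : ℂ)⁻¹ • (altWord y x (s - 2) * z ^ (p - s + 2))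
          + (x * (altWord y x (s - 1) * z ^ (p - s))
              - (altWord y x (s - 1) * z ^ (p - s)) * x) := by
  intro s p hodd hs hsp
  obtain ⟨m, rfl⟩ : ∃ m, s = m + 2 := ⟨s - 2, by omega⟩
  have hm : m % 2 = 1 := by have := Nat.odd_iff.mp hodd; omega
  have h1 : altWord y x (m + 1) = altWord y x m * x := by
    rw [altWord_succ_right]; simp [hm]
  simp only [show m + 2 - 2 = m from rfl, show m + 2 - 1 = m + 1 from rfl]
  set k := p - (m + 2)
  rw [show altWord x y (m+2) = x * altWord y x (m+1) from rfl, h1,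
      key x z (altWord y x m) hx hzx k]
  set t := (4 : ℂ)⁻¹ • (altWord y x m * z ^ (k + 2))
  rw [show t + (x * (altWord y x m * x * z ^ k) - t)
        = x * (altWord y x m * x * z ^ k) by abel]
  noncomm_ring

/-- in any associative `ℂ`-algebra `B` with elements `a, b, z` satisfying
`a² = b² = z²/4` and `z` central, writing `a_s = aba⋯`, `b_s = bab⋯` (words of length
`s`), one has, for odd `s > 1` and `p ≥ s`,
`a_s z^{p-s} = (1/4) b_{s-2} z^{p-s+2} + [a, b_{s-1} z^{p-s}]` and
`b_s z^{p-s} = (1/4) a_{s-2} z^{p-s+2} + [b, a_{s-1} z^{p-s}]`,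
and for even `s > 0`, `(a_s - b_s) z^{p-s} = [a, b_{s-1} z^{p-s}]`. -/
theorem altWord_commutator_identities {B : Type*} [Ring B] [Algebra ℂ B]
    (a b z : B)
    (ha : a * a = (4 : ℂ)⁻¹ • (z * z)) (hb : b * b = (4 : ℂ)⁻¹ • (z * z))
    (hza : z * a = a * z) (hzb : z * b = b * z) :
    (∀ s p : ℕ, Odd s → 1 < s → s ≤ p →
      altWord a b s * z ^ (p - s)
        = (4 : ℂ)⁻¹ • (altWord b a (s - 2) * z ^ (p - s + 2))
          + (a * (altWord b a (s - 1) * z ^ (p - s))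
              - (altWord b a (s - 1) * z ^ (p - s)) * a)) ∧
    (∀ s p : ℕ, Odd s → 1 < s → s ≤ p →
      altWord b a s * z ^ (p - s)
        = (4 : ℂ)⁻¹ • (altWord a b (s - 2) * z ^ (p - s + 2))
          + (b * (altWord a b (s - 1) * z ^ (p - s))
              - (altWord a b (s - 1) * z ^ (p - s)) * b)) ∧
    (∀ s p : ℕ, Even s → 0 < s → s ≤ p →
      (altWord a b s - altWord b a s) * z ^ (p - s)
        = a * (altWord b a (s - 1) * z ^ (p - s))
          - (altWord b a (s - 1) * z ^ (p - s)) * a) := by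
  refine ⟨oddCase a b z ha hza, oddCase b a z hb hzb, ?_⟩
  intro s p hev hs hsp
  obtain ⟨m, rfl⟩ : ∃ m, s = m + 1 := ⟨s - 1, by omega⟩
  have hm : m % 2 = 1 := by have := Nat.even_iff.mp hev; omega
  have h1 : altWord b a (m + 1) = altWord b a m * a := by
    rw [altWord_succ_right]; simp [hm]
  simp only [Nat.add_sub_cancel]
  set k := p - (m + 1)
  have hpow : z ^ k * a = a * z ^ k := (Commute.pow_left (hza : Commute z a) k)
  rw [show altWord a b (m+1) = a * altWord b a m from rfl, h1, mul_assoc (altWord b a m), hpow]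
  noncomm_ring
end

section
/- Let n be the negative nilpotent subalgebra of a simple Lie algebra of ADE type with simple root vectors F_i, and fix signs ε_i = ±1 coming from a 2-coloring of the Dynkin diagram (adjacent vertices get opposite signs). Then there exists a basis {F_α} of n indexed by positive roots, with F_{α_i} = F_i, such that [F_i, F_α] = ε_i F_{α + α_i} whenever α + α_i is a root, and [F_i, F_α] = 0 whenever α + α_i is neither a root nor zero. -/
open Finset

/-- The symmetric Cartan bilinear form attached to a simply-laced graph `G`:
`B(v,w) = 2 ∑ᵢ vᵢ wᵢ - ∑_{i ~ j} vᵢ w_j`. -/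
def cartanForm {r : ℕ} (G : SimpleGraph (Fin r)) [DecidableRel G.Adj]
    (v w : Fin r → ℚ) : ℚ :=
  2 * ∑ i, v i * w i - ∑ i, ∑ j, if G.Adj i j then v i * w j else 0

/-- A finite graph is an ADE Dynkin diagram iff it is connected and its Cartan form is
positive definite. -/
def IsADE {r : ℕ} (G : SimpleGraph (Fin r)) [DecidableRel G.Adj] : Prop :=
  G.Connected ∧ ∀ v : Fin r → ℚ, v ≠ 0 → 0 < cartanForm G v v

/-- Coordinates of a nonnegative integer vector, viewed rationally. -/
def qcast {r : ℕ} (v : Fin r → ℕ) : Fin r → ℚ := fun i => (v i : ℚ)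

/-- The height of a positive root written in the basis of simple roots. -/
def rootHeight {r : ℕ} (v : Fin r → ℕ) : ℕ := ∑ i, v i

namespace ChevAux

variable {r : ℕ} {G : SimpleGraph (Fin r)} [DecidableRel G.Adj]

lemma qcast_add (u v : Fin r → ℕ) : qcast (u + v) = qcast u + qcast v := by
  funext i; simp [qcast]

lemma qcast_eq_zero {v : Fin r → ℕ} (h : qcast v = 0) : v = 0 := by
  funext i
  have := congrFun h i
  simpa [qcast] using this

lemma qcast_inj {u v : Fin r → ℕ} (h : qcast u = qcast v) : u = v := by
  funext i
  have := congrFun h i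
  simpa [qcast] using this

lemma ite_add_zero' (c : Prop) [Decidable c] (a b : ℚ) :
    (if c then a + b else 0) = (if c then a else 0) + (if c then b else 0) := by
  split <;> simp

lemma cartanForm_add_left (v w u : Fin r → ℚ) :
    cartanForm G (v + w) u = cartanForm G v u + cartanForm G w u := by
  simp only [cartanForm, Pi.add_apply, add_mul]
  simp only [ite_add_zero', Finset.sum_add_distrib]
  ring

lemma cartanForm_add_right (u v w : Fin r → ℚ) :
    cartanForm G u (v + w) = cartanForm G u v + cartanForm G u w := by
  simp only [cartanForm, Pi.add_apply, mul_add]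
  simp only [ite_add_zero', Finset.sum_add_distrib]
  ring

lemma cartanForm_comm (v w : Fin r → ℚ) :
    cartanForm G v w = cartanForm G w v := by
  simp only [cartanForm]
  congr 1
  · congr 1
    exact Finset.sum_congr rfl fun i _ => by ring
  · rw [Finset.sum_comm]
    refine Finset.sum_congr rfl fun i _ => Finset.sum_congr rfl fun j _ => ?_
    have h' : G.Adj j i ↔ G.Adj i j := G.adj_comm j i
    rw [if_congr h' rfl rfl]
    split <;> ring


lemma cartanForm_single_right (w : Fin r → ℚ) (j : Fin r) :
    cartanForm G w (qcast (Pi.single j 1)) = 2 * w j - ∑ i, if G.Adj i j then w i else 0 := by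
  simp only [cartanForm, qcast, Pi.single_apply]
  congr 1
  · congr 1
    rw [Finset.sum_congr rfl (fun i _ => ?_), Finset.sum_ite_eq' Finset.univ j w]
    · simp
    · push_cast
      split <;> simp
  · refine Finset.sum_congr rfl fun i _ => ?_
    rw [Finset.sum_congr rfl (g := fun k => if k = j then (if G.Adj i j then w i else 0) else 0)
      (fun k _ => ?_), Finset.sum_ite_eq' Finset.univ j]
    · simp
    · push_cast
      by_cases h : k = j
      · subst h; simp
      · simp [h]

lemma cartanForm_sum_right (w : Fin r → ℚ) (v : Fin r → ℕ) :
    cartanForm G w (qcast v) = ∑ j, (v j : ℚ) * cartanForm G w (qcast (Pi.single j 1)) := by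
  simp only [cartanForm_single_right, mul_sub]
  rw [Finset.sum_sub_distrib]
  simp only [cartanForm, qcast]
  congr 1
  · rw [Finset.mul_sum]
    exact Finset.sum_congr rfl fun i _ => by ring
  · rw [Finset.sum_comm]
    refine Finset.sum_congr rfl fun i _ => ?_
    rw [Finset.mul_sum]
    refine Finset.sum_congr rfl fun k _ => ?_
    split <;> ring


/-- Integer-valued pairing of `v` with the simple root `e j`. -/
def tform (G : SimpleGraph (Fin r)) [DecidableRel G.Adj] (v : Fin r → ℕ) (j : Fin r) : ℤ :=
  2 * (v j : ℤ) - ∑ i, if G.Adj i j then (v i : ℤ) else 0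

lemma tform_cast (v : Fin r → ℕ) (j : Fin r) :
    ((tform G v j : ℤ) : ℚ) = cartanForm G (qcast v) (qcast (Pi.single j 1)) := by
  rw [cartanForm_single_right]
  simp only [tform, qcast]
  push_cast [apply_ite (fun z : ℤ => (z : ℚ))]
  ring

lemma cartanForm_sub_left (a b c : Fin r → ℚ) :
    cartanForm G (a - b) c = cartanForm G a c - cartanForm G b c := by
  have h := cartanForm_add_left (G := G) (a - b) b c
  rw [sub_add_cancel] at h
  linarith

lemma cartanForm_sub_right (a b c : Fin r → ℚ) :
    cartanForm G a (b - c) = cartanForm G a b - cartanForm G a c := by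
  have h := cartanForm_add_right (G := G) a (b - c) c
  rw [sub_add_cancel] at h
  linarith

lemma norm_add_expand (u v : Fin r → ℕ) :
    cartanForm G (qcast (u + v)) (qcast (u + v))
      = cartanForm G (qcast u) (qcast u) + 2 * cartanForm G (qcast u) (qcast v)
        + cartanForm G (qcast v) (qcast v) := by
  rw [qcast_add, cartanForm_add_left, cartanForm_add_right, cartanForm_add_right,
    cartanForm_comm (qcast v) (qcast u)]
  ring

lemma norm_single (i : Fin r) :
    cartanForm G (qcast (Pi.single i 1)) (qcast (Pi.single i 1)) = 2 := by
  rw [cartanForm_single_right]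
  have h1 : qcast (Pi.single i 1 : Fin r → ℕ) i = 1 := by simp [qcast]
  have h2 : ∑ k, (if G.Adj k i then qcast (Pi.single i 1 : Fin r → ℕ) k else 0) = 0 := by
    refine Finset.sum_eq_zero fun k _ => ?_
    by_cases hk : k = i
    · subst hk; simp [G.irrefl]
    · simp [qcast, Pi.single_apply, hk]
  rw [h1, h2]
  ring

lemma cartanForm_single_single (i j : Fin r) (hij : i ≠ j) :
    cartanForm G (qcast (Pi.single i 1)) (qcast (Pi.single j 1))
      = if G.Adj i j then -1 else 0 := by
  rw [cartanForm_single_right]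
  have h1 : qcast (Pi.single i 1 : Fin r → ℕ) j = 0 := by
    simp [qcast, Pi.single_apply, (Ne.symm hij)]
  have h2 : ∑ k, (if G.Adj k j then qcast (Pi.single i 1 : Fin r → ℕ) k else 0)
      = if G.Adj i j then 1 else 0 := by
    rw [Finset.sum_congr rfl (g := fun k => if k = i then (if G.Adj i j then (1:ℚ) else 0) else 0)
      (fun k _ => ?_), Finset.sum_ite_eq' Finset.univ i]
    · simp
    · by_cases hk : k = i
      · subst hk; simp [qcast]
      · simp [qcast, Pi.single_apply, hk]
  rw [h1, h2]
  split <;> ring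

section posdef
variable (hpos : ∀ v : Fin r → ℚ, v ≠ 0 → 0 < cartanForm G v v)
include hpos

lemma norm_nonneg' (w : Fin r → ℚ) : 0 ≤ cartanForm G w w := by
  by_cases h : w = 0
  · subst h
    simp [cartanForm]
  · exact (hpos w h).le

lemma eq_zero_of_norm_eq_zero {w : Fin r → ℚ} (h : cartanForm G w w = 0) : w = 0 := by
  by_contra hw
  exact absurd h (ne_of_gt (hpos w hw))


omit hpos in
lemma plus_single_norm (v : Fin r → ℕ) (hv : cartanForm G (qcast v) (qcast v) = 2) (j : Fin r) :
    cartanForm G (qcast (v + Pi.single j 1)) (qcast (v + Pi.single j 1))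
      = 4 + 2 * (tform G v j : ℚ) := by
  rw [norm_add_expand, hv, norm_single, tform_cast]
  ring

omit hpos in
lemma plus_single_root_iff (v : Fin r → ℕ) (hv : cartanForm G (qcast v) (qcast v) = 2)
    (j : Fin r) :
    cartanForm G (qcast (v + Pi.single j 1)) (qcast (v + Pi.single j 1)) = 2
      ↔ tform G v j = -1 := by
  rw [plus_single_norm v hv j]
  constructor
  · intro h
    have : (tform G v j : ℚ) = -1 := by linarith
    exact_mod_cast this
  · intro h
    rw [h]
    norm_num

lemma t_ge_neg_one (v : Fin r → ℕ) (hv : cartanForm G (qcast v) (qcast v) = 2) (j : Fin r) :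
    -1 ≤ tform G v j := by
  have hne : v + Pi.single j 1 ≠ 0 := by
    intro h
    have := congrFun h j
    simp [Pi.single_apply] at this
  have hne' : qcast (v + Pi.single j 1) ≠ 0 := fun h => hne (qcast_eq_zero h)
  have h0 := hpos _ hne'
  rw [plus_single_norm v hv j] at h0
  have : (-2 : ℚ) < (tform G v j : ℚ) := by linarith
  have : (-2 : ℤ) < tform G v j := by exact_mod_cast this
  omega

lemma t_le_two (v : Fin r → ℕ) (hv : cartanForm G (qcast v) (qcast v) = 2) (j : Fin r) :
    tform G v j ≤ 2 := by
  have h0 := norm_nonneg' hpos (qcast v - qcast (Pi.single j 1))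
  rw [cartanForm_sub_left, cartanForm_sub_right, cartanForm_sub_right, hv, norm_single,
    cartanForm_comm (qcast (Pi.single j 1)) (qcast v), ← tform_cast] at h0
  have : (tform G v j : ℚ) ≤ 2 := by linarith
  exact_mod_cast this

lemma eq_single_of_t_eq_two (v : Fin r → ℕ) (hv : cartanForm G (qcast v) (qcast v) = 2)
    (j : Fin r) (ht : tform G v j = 2) : v = Pi.single j 1 := by
  have h0 : cartanForm G (qcast v - qcast (Pi.single j 1)) (qcast v - qcast (Pi.single j 1))
      = 0 := by
    rw [cartanForm_sub_left, cartanForm_sub_right, cartanForm_sub_right, hv, norm_single,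
      cartanForm_comm (qcast (Pi.single j 1)) (qcast v), ← tform_cast, ht]
    norm_num
  have := eq_zero_of_norm_eq_zero hpos h0
  exact qcast_inj (by rwa [sub_eq_zero] at this)

omit hpos in
lemma descent_step (v : Fin r → ℕ) (hv : cartanForm G (qcast v) (qcast v) = 2) (j : Fin r)
    (ht : tform G v j = 1) :
    ∃ u, cartanForm G (qcast u) (qcast u) = 2 ∧ v = u + Pi.single j 1 := by
  have hvj : 1 ≤ v j := by
    have hsum : (0 : ℤ) ≤ ∑ i, if G.Adj i j then (v i : ℤ) else 0 :=
      Finset.sum_nonneg fun i _ => by positivity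
    have : 2 * (v j : ℤ) - (∑ i, if G.Adj i j then (v i : ℤ) else 0) = 1 := ht
    omega
  refine ⟨fun k => v k - (Pi.single j 1 : Fin r → ℕ) k, ?_, ?_⟩
  · set u : Fin r → ℕ := fun k => v k - (Pi.single j 1 : Fin r → ℕ) k with hu
    have hvu : v = u + Pi.single j 1 := by
      funext k
      by_cases hk : k = j
      · subst hk
        simp only [Pi.add_apply, hu, Pi.single_eq_same]
        omega
      · simp [hu, Pi.single_apply, hk]
    have hexp := norm_add_expand (G := G) u (Pi.single j 1)
    rw [← hvu, hv, norm_single] at hexp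
    have htq : cartanForm G (qcast v) (qcast (Pi.single j 1)) = 1 := by
      rw [← tform_cast, ht]; norm_num
    have : cartanForm G (qcast u) (qcast (Pi.single j 1)) = -1 := by
      have h2 : cartanForm G (qcast v) (qcast (Pi.single j 1))
          = cartanForm G (qcast u) (qcast (Pi.single j 1))
            + cartanForm G (qcast (Pi.single j 1)) (qcast (Pi.single j 1)) := by
        rw [hvu, qcast_add, cartanForm_add_left]
      rw [htq, norm_single] at h2
      linarith
    linarith
  · funext k
    by_cases hk : k = j
    · subst hk
      simp only [Pi.add_apply, Pi.single_eq_same]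
      omega
    · simp [Pi.single_apply, hk]


omit hpos in
lemma rootHeight_single (i : Fin r) : rootHeight (Pi.single i 1 : Fin r → ℕ) = 1 := by
  unfold rootHeight
  rw [Finset.sum_congr rfl (g := fun k => if k = i then 1 else 0) (fun k _ => by
    simp [Pi.single_apply])]
  simp

omit hpos in
lemma rootHeight_add (u v : Fin r → ℕ) :
    rootHeight (u + v) = rootHeight u + rootHeight v := by
  unfold rootHeight
  simp [Finset.sum_add_distrib]

omit hpos in
lemma rootHeight_pos (v : Fin r → ℕ) (hv : cartanForm G (qcast v) (qcast v) = 2) :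
    1 ≤ rootHeight v := by
  rcases Nat.eq_zero_or_pos (rootHeight v) with h | h
  · exfalso
    have hz : v = 0 := by
      funext k
      have := (Finset.sum_eq_zero_iff.mp h) k (Finset.mem_univ k)
      simpa using this
    rw [hz] at hv
    have : qcast (0 : Fin r → ℕ) = 0 := by funext k; simp [qcast]
    rw [this] at hv
    simp [cartanForm] at hv
  · exact h

omit hpos in
lemma eq_single_of_height_one (v : Fin r → ℕ) (h : rootHeight v = 1) :
    ∃ i, v = Pi.single i 1 := by
  unfold rootHeight at h
  have hex : ∃ i, v i ≠ 0 := by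
    by_contra hc
    push_neg at hc
    rw [Finset.sum_eq_zero (fun i _ => hc i)] at h
    omega
  obtain ⟨i, hi⟩ := hex
  refine ⟨i, funext fun k => ?_⟩
  have hsplit : v i + ∑ k ∈ Finset.univ.erase i, v k = 1 := by
    rw [Finset.add_sum_erase Finset.univ v (Finset.mem_univ i)]
    exact h
  have hvi : v i = 1 := by omega
  have hrest : ∑ k ∈ Finset.univ.erase i, v k = 0 := by omega
  by_cases hk : k = i
  · subst hk; simp [hvi]
  · have : v k = 0 :=
      (Finset.sum_eq_zero_iff.mp hrest) k (Finset.mem_erase.mpr ⟨hk, Finset.mem_univ k⟩)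
    simp [Pi.single_apply, hk, this]

omit hpos in
lemma tform_add (u w : Fin r → ℕ) (j : Fin r) :
    tform G (u + w) j = tform G u j + tform G w j := by
  have : ((tform G (u + w) j : ℤ) : ℚ) = ((tform G u j + tform G w j : ℤ) : ℚ) := by
    push_cast
    rw [tform_cast, tform_cast, tform_cast, qcast_add, cartanForm_add_left]
  exact_mod_cast this

omit hpos in
lemma tform_single (i j : Fin r) :
    tform G (Pi.single i 1 : Fin r → ℕ) j
      = if i = j then 2 else if G.Adj i j then -1 else 0 := by
  by_cases hij : i = j
  · subst hij
    simp only [if_pos rfl]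
    have : ((tform G (Pi.single i 1 : Fin r → ℕ) i : ℤ) : ℚ) = ((2 : ℤ) : ℚ) := by
      rw [tform_cast, norm_single]
      norm_num
    exact_mod_cast this
  · rw [if_neg hij]
    have : ((tform G (Pi.single i 1 : Fin r → ℕ) j : ℤ) : ℚ)
        = ((if G.Adj i j then (-1 : ℤ) else 0 : ℤ) : ℚ) := by
      rw [tform_cast, cartanForm_single_single i j hij]
      split <;> norm_num
    exact_mod_cast this

lemma exists_descent (v : Fin r → ℕ) (hv : cartanForm G (qcast v) (qcast v) = 2)
    (hht : 2 ≤ rootHeight v) :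
    ∃ i u, cartanForm G (qcast u) (qcast u) = 2 ∧ v = u + Pi.single i 1 := by
  have hsum : (2 : ℚ) = ∑ j, (v j : ℚ) * ((tform G v j : ℤ) : ℚ) := by
    have := cartanForm_sum_right (G := G) (qcast v) v
    rw [hv] at this
    rw [this]
    refine Finset.sum_congr rfl fun j _ => ?_
    rw [tform_cast]
  have hex : ∃ j, 1 ≤ v j ∧ 1 ≤ tform G v j := by
    by_contra hc
    push_neg at hc
    have hle : ∑ j, (v j : ℚ) * ((tform G v j : ℤ) : ℚ) ≤ 0 := by
      refine Finset.sum_nonpos fun j _ => ?_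
      rcases Nat.eq_zero_or_pos (v j) with h | h
      · rw [h]; simp
      · have ht : tform G v j ≤ 0 := by
          have := hc j h
          omega
        have h1 : (0 : ℚ) ≤ (v j : ℚ) := by positivity
        have h2 : ((tform G v j : ℤ) : ℚ) ≤ 0 := by exact_mod_cast ht
        exact mul_nonpos_of_nonneg_of_nonpos h1 h2
    linarith
  obtain ⟨j, hj1, hj2⟩ := hex
  have hle2 := t_le_two hpos v hv j
  rcases eq_or_lt_of_le hle2 with h2 | h2
  · exfalso
    have := eq_single_of_t_eq_two hpos v hv j h2
    rw [this, rootHeight_single] at hht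
    omega
  · have ht1 : tform G v j = 1 := by omega
    obtain ⟨u, hu, huv⟩ := descent_step v hv j ht1
    exact ⟨j, u, hu, huv⟩


lemma main_induction {L : Type*} [LieRing L] [LieAlgebra ℂ L]
    (F : Fin r → L) (ε : Fin r → ℂ)
    (hε1 : ∀ i, ε i = 1 ∨ ε i = -1)
    (hε2 : ∀ i j, G.Adj i j → ε i = -ε j)
    (hserre1 : ∀ i j, i ≠ j → ¬G.Adj i j → ⁅F i, F j⁆ = 0)
    (hserre2 : ∀ i j, G.Adj i j → ⁅F i, ⁅F i, F j⁆⁆ = 0)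
    (Fc : (Fin r → ℕ) → L)
    (hFc1 : ∀ i, Fc (Pi.single i 1) = F i)
    (idx : (Fin r → ℕ) → Fin r) (prev : (Fin r → ℕ) → (Fin r → ℕ))
    (hstep : ∀ v, cartanForm G (qcast v) (qcast v) = 2 → 2 ≤ rootHeight v →
      cartanForm G (qcast (prev v)) (qcast (prev v)) = 2 ∧
      v = prev v + Pi.single (idx v) 1 ∧
      Fc v = ε (idx v) • ⁅F (idx v), Fc (prev v)⁆)
    (n : ℕ) :
    ∀ v, cartanForm G (qcast v) (qcast v) = 2 → rootHeight v = n →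
      ((∀ i u, cartanForm G (qcast u) (qcast u) = 2 → v = u + Pi.single i 1 →
          ⁅F i, Fc u⁆ = ε i • Fc v) ∧
       (∀ j, cartanForm G (qcast (v + Pi.single j 1)) (qcast (v + Pi.single j 1)) = 2 →
          ⁅F j, ⁅F j, Fc v⁆⁆ = 0) ∧
       (∀ j, cartanForm G (qcast (v + Pi.single j 1)) (qcast (v + Pi.single j 1)) ≠ 2 →
          ⁅F j, Fc v⁆ = 0)) := by
  have hεsq : ∀ (i : Fin r) (x : L), ε i • ε i • x = x := by
    intro i x
    rw [smul_smul]
    rcases hε1 i with h | h <;> simp [h]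
  induction n using Nat.strong_induction_on with
  | _ n IH =>
  intro v hv hht
  rcases Nat.lt_or_ge n 2 with hn | hn
  · -- height one case
    have hn1 : rootHeight v = 1 := by
      have := rootHeight_pos (G := G) v hv
      omega
    obtain ⟨k, hk⟩ := eq_single_of_height_one v hn1
    subst hk
    refine ⟨?_, ?_, ?_⟩
    · intro i u hu huv
      exfalso
      have h2 := rootHeight_pos (G := G) u hu
      rw [huv, rootHeight_add, rootHeight_single] at hn1
      omega
    · intro j hj
      have ht := (plus_single_root_iff _ hv j).mp hj
      rw [tform_single] at ht
      by_cases hjk : k = j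
      · rw [if_pos hjk] at ht
        omega
      · rw [if_neg hjk] at ht
        have hadj : G.Adj k j := by
          by_contra hc
          rw [if_neg hc] at ht
          omega
        rw [hFc1 k]
        exact hserre2 j k (G.adj_symm hadj)
    · intro j hj
      rw [hFc1 k]
      by_cases hjk : j = k
      · subst hjk
        exact lie_self _
      · have hnadj : ¬ G.Adj k j := by
          intro hadj
          refine hj ((plus_single_root_iff _ hv j).mpr ?_)
          rw [tform_single, if_neg (fun h => hjk h.symm), if_pos hadj]
        exact hserre1 j k hjk (fun h => hnadj (G.adj_symm h))
  · -- height at least two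
    obtain ⟨hu₀, hveq, hFcv⟩ := hstep v hv (by omega)
    set i₀ := idx v with hi₀def
    set u₀ := prev v with hu₀def
    have hhtu₀ : rootHeight u₀ + 1 = n := by
      rw [← hht, hveq, rootHeight_add, rootHeight_single]
    have htu₀i₀ : tform G u₀ i₀ = -1 :=
      (plus_single_root_iff u₀ hu₀ i₀).mp (hveq ▸ hv)
    have htvi₀ : tform G v i₀ = 1 := by
      have h1 : tform G v i₀ = tform G u₀ i₀ + tform G (Pi.single i₀ 1 : Fin r → ℕ) i₀ := by
        rw [hveq, tform_add]
      rw [tform_single, if_pos rfl] at h1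
      omega
    have IHu₀ := IH (rootHeight u₀) (by omega) u₀ hu₀ rfl
    -- Part A
    have partA : ∀ i u, cartanForm G (qcast u) (qcast u) = 2 → v = u + Pi.single i 1 →
        ⁅F i, Fc u⁆ = ε i • Fc v := by
      intro i u hu huv
      by_cases hi : i = i₀
      · subst hi
        have huu : u = u₀ := add_right_cancel (huv.symm.trans hveq)
        rw [huu, hFcv, hεsq]
      · have htu : tform G v i₀ = tform G u i₀ + tform G (Pi.single i 1 : Fin r → ℕ) i₀ := by
          rw [huv, tform_add]
        by_cases hadj : G.Adj i i₀
        · have h2 : tform G u i₀ = 2 := by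
            rw [tform_single, if_neg hi, if_pos hadj] at htu
            omega
          have hue : u = Pi.single i₀ 1 := eq_single_of_t_eq_two hpos u hu i₀ h2
          have hu₀e : u₀ = Pi.single i 1 := by
            refine add_right_cancel (b := Pi.single i₀ 1) ?_
            rw [← hveq, huv, hue, add_comm]
          have hsign : ε i = -ε i₀ := hε2 i i₀ hadj
          have hskew : ⁅F i₀, F i⁆ = -⁅F i, F i₀⁆ := by rw [← lie_skew]
          rw [hue, hFc1, hFcv, hu₀e, hFc1, hskew, hsign, smul_neg, smul_neg, neg_smul,
            neg_neg, hεsq]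
        · have h1 : tform G u i₀ = 1 := by
            rw [tform_single, if_neg hi, if_neg hadj] at htu
            omega
          obtain ⟨x, hx, hux⟩ := descent_step u hu i₀ h1
          have hu₀x : u₀ = x + Pi.single i 1 := by
            refine add_right_cancel (b := Pi.single i₀ 1) ?_
            rw [← hveq, huv, hux, add_assoc, add_comm (Pi.single i₀ 1) (Pi.single i 1),
              ← add_assoc]
          have hhtu : rootHeight u + 1 = n := by
            rw [← hht, huv, rootHeight_add, rootHeight_single]
          have IHu := IH (rootHeight u) (by omega) u hu rfl
          have hA1 := IHu.1 i₀ x hx hux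
          have hA2 := IHu₀.1 i x hx hu₀x
          have hFcu : Fc u = ε i₀ • ⁅F i₀, Fc x⁆ := by rw [hA1, hεsq]
          have hFcu₀ : Fc u₀ = ε i • ⁅F i, Fc x⁆ := by rw [hA2, hεsq]
          have hser : ⁅F i, F i₀⁆ = 0 := hserre1 i i₀ hi hadj
          have hjac : ⁅F i, ⁅F i₀, Fc x⁆⁆ = ⁅F i₀, ⁅F i, Fc x⁆⁆ := by
            rw [leibniz_lie, hser, zero_lie, zero_add]
          rw [hFcu, hFcv, hFcu₀, lie_smul, lie_smul, hjac, smul_comm (ε i) (ε i₀), hεsq]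
    -- Part S
    have partS : ∀ j,
        cartanForm G (qcast (v + Pi.single j 1)) (qcast (v + Pi.single j 1)) = 2 →
        ⁅F j, ⁅F j, Fc v⁆⁆ = 0 := by
      intro j hj
      have htvj : tform G v j = -1 := (plus_single_root_iff v hv j).mp hj
      have hty : tform G v j = tform G u₀ j + tform G (Pi.single i₀ 1 : Fin r → ℕ) j := by
        rw [hveq, tform_add]
      have hmj : i₀ ≠ j := by
        intro h
        rw [tform_single, if_pos h] at hty
        have := t_ge_neg_one hpos u₀ hu₀ j
        omega
      by_cases hadj : G.Adj j i₀
      · have htyj : tform G u₀ j = 0 := by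
          rw [tform_single, if_neg hmj, if_pos (G.adj_symm hadj)] at hty
          omega
        have hnr : cartanForm G (qcast (u₀ + Pi.single j 1)) (qcast (u₀ + Pi.single j 1))
            ≠ 2 := by
          intro hc
          have := (plus_single_root_iff u₀ hu₀ j).mp hc
          omega
        have hz := IHu₀.2.2 j hnr
        have hser := hserre2 j i₀ hadj
        have e1 : ⁅F j, ⁅F i₀, Fc u₀⁆⁆ = ⁅⁅F j, F i₀⁆, Fc u₀⁆ := by
          rw [leibniz_lie, hz, lie_zero, add_zero]
        have e2 : ⁅F j, ⁅⁅F j, F i₀⁆, Fc u₀⁆⁆ = 0 := by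
          rw [leibniz_lie, hser, zero_lie, hz, lie_zero, add_zero]
        rw [hFcv, lie_smul, lie_smul, e1, e2, smul_zero]
      · have hserz : ⁅F j, F i₀⁆ = 0 := hserre1 j i₀ (fun h => hmj h.symm) hadj
        have htyj : tform G u₀ j = -1 := by
          rw [tform_single, if_neg hmj, if_neg (fun h => hadj (G.adj_symm h))] at hty
          omega
        have hroot := (plus_single_root_iff u₀ hu₀ j).mpr htyj
        have hSy := IHu₀.2.1 j hroot
        have e1 : ⁅F j, ⁅F i₀, Fc u₀⁆⁆ = ⁅F i₀, ⁅F j, Fc u₀⁆⁆ := by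
          rw [leibniz_lie, hserz, zero_lie, zero_add]
        have e2 : ⁅F j, ⁅F i₀, ⁅F j, Fc u₀⁆⁆⁆ = ⁅F i₀, ⁅F j, ⁅F j, Fc u₀⁆⁆⁆ := by
          rw [leibniz_lie, hserz, zero_lie, zero_add]
        rw [hFcv, lie_smul, lie_smul, e1, e2, hSy, lie_zero, smul_zero]
    -- Part B
    have partB : ∀ j,
        cartanForm G (qcast (v + Pi.single j 1)) (qcast (v + Pi.single j 1)) ≠ 2 →
        ⁅F j, Fc v⁆ = 0 := by
      intro j hj
      have htvj_ne : tform G v j ≠ -1 := fun h => hj ((plus_single_root_iff v hv j).mpr h)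
      have htlb := t_ge_neg_one hpos v hv j
      have htub := t_le_two hpos v hv j
      by_cases hji : j = i₀
      · have hroot : cartanForm G (qcast (u₀ + Pi.single j 1)) (qcast (u₀ + Pi.single j 1))
            = 2 := by rw [hji, ← hveq]; exact hv
        have hS := IHu₀.2.1 j hroot
        rw [hFcv, ← hji, lie_smul, hS, smul_zero]
      · have hne2 : tform G v j ≠ 2 := by
          intro h
          have := eq_single_of_t_eq_two hpos v hv j h
          rw [this, rootHeight_single] at hht
          omega
        have htu₀j : tform G v j = tform G u₀ j + tform G (Pi.single i₀ 1 : Fin r → ℕ) j := by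
          rw [hveq, tform_add]
        by_cases hadj : G.Adj j i₀
        · have hsv : tform G (Pi.single i₀ 1 : Fin r → ℕ) j = -1 := by
            rw [tform_single, if_neg (fun h => hji h.symm), if_pos (G.adj_symm hadj)]
          by_cases ht1 : tform G v j = 1
          · have h2 : tform G u₀ j = 2 := by omega
            have hu₀e : u₀ = Pi.single j 1 := eq_single_of_t_eq_two hpos u₀ hu₀ j h2
            have hskew : ⁅F i₀, F j⁆ = -⁅F j, F i₀⁆ := by rw [← lie_skew]
            rw [hFcv, hu₀e, hFc1, lie_smul, hskew, lie_neg, hserre2 j i₀ hadj, neg_zero,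
              smul_zero]
          · have ht0 : tform G v j = 0 := by omega
            have h1 : tform G u₀ j = 1 := by omega
            obtain ⟨y, hy, hu₀y⟩ := descent_step u₀ hu₀ j h1
            have hA_u₀ := IHu₀.1 j y hy hu₀y
            have hFcu₀ : Fc u₀ = ε j • ⁅F j, Fc y⁆ := by rw [hA_u₀, hεsq]
            have hy1 : rootHeight u₀ = rootHeight y + 1 := by
              rw [hu₀y, rootHeight_add, rootHeight_single]
            have IHy := IH (rootHeight y) (by omega) y hy rfl
            have hSy : ⁅F j, ⁅F j, Fc y⁆⁆ = 0 := IHy.2.1 j (hu₀y ▸ hu₀)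
            have hti₀y : tform G y i₀ = 0 := by
              have h' : tform G u₀ i₀ = tform G y i₀
                  + tform G (Pi.single j 1 : Fin r → ℕ) i₀ := by
                rw [hu₀y, tform_add]
              have h'' : tform G (Pi.single j 1 : Fin r → ℕ) i₀ = -1 := by
                rw [tform_single, if_neg hji, if_pos hadj]
              omega
            have hByi₀ : ⁅F i₀, Fc y⁆ = 0 := by
              refine IHy.2.2 i₀ (fun hc => ?_)
              have := (plus_single_root_iff y hy i₀).mp hc
              omega
            have hAv : ⁅F i₀, Fc u₀⁆ = ε i₀ • Fc v := partA i₀ u₀ hu₀ hveq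
            set X := ⁅F j, Fc v⁆ with hX
            have hjz : ⁅F j, Fc u₀⁆ = 0 := by rw [hFcu₀, lie_smul, hSy, smul_zero]
            have hAy : ⁅⁅F j, F i₀⁆, Fc y⁆ = -(ε j • ε i₀ • Fc v) := by
              rw [lie_lie, hByi₀, lie_zero, hA_u₀, lie_smul, hAv, zero_sub]
            have hser2 : ⁅F j, ⁅F j, F i₀⁆⁆ = 0 := hserre2 j i₀ hadj
            have hAjy : ⁅⁅F j, F i₀⁆, ⁅F j, Fc y⁆⁆ = -(ε j • ε i₀ • X) := by
              have h := leibniz_lie (F j) (⁅F j, F i₀⁆) (Fc y)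
              rw [hser2, zero_lie, zero_add, hAy, lie_neg, lie_smul, lie_smul] at h
              exact h.symm
            have hXeq : X = ε i₀ • ⁅⁅F j, F i₀⁆, Fc u₀⁆ := by
              rw [hX, hFcv, lie_smul, leibniz_lie, hjz, lie_zero, add_zero]
            have hfinal : X = -X := by
              calc X = ε i₀ • ⁅⁅F j, F i₀⁆, Fc u₀⁆ := hXeq
                _ = ε i₀ • ε j • ⁅⁅F j, F i₀⁆, ⁅F j, Fc y⁆⁆ := by rw [hFcu₀, lie_smul]
                _ = ε i₀ • ε j • -(ε j • ε i₀ • X) := by rw [hAjy]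
                _ = -X := by rw [smul_neg, hεsq, smul_neg, hεsq]
            have h2 : (2 : ℂ) • X = 0 := by
              rw [two_smul]
              nth_rewrite 1 [hfinal]
              exact neg_add_cancel X
            rcases smul_eq_zero.mp h2 with h | h
            · norm_num at h
            · exact h
        · have hsv : tform G (Pi.single i₀ 1 : Fin r → ℕ) j = 0 := by
            rw [tform_single, if_neg (fun h => hji h.symm),
              if_neg (fun h => hadj (G.adj_symm h))]
          have hnr : cartanForm G (qcast (u₀ + Pi.single j 1)) (qcast (u₀ + Pi.single j 1))
              ≠ 2 := by
            intro hc
            have := (plus_single_root_iff u₀ hu₀ j).mp hc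
            omega
          have hB := IHu₀.2.2 j hnr
          have hserz : ⁅F j, F i₀⁆ = 0 := hserre1 j i₀ hji hadj
          rw [hFcv, lie_smul, leibniz_lie, hserz, zero_lie, hB, lie_zero, add_zero,
            smul_zero]
    exact ⟨partA, partS, partB⟩

end posdef


lemma single_index_inj {i k : Fin r} (h : (Pi.single i 1 : Fin r → ℕ) = Pi.single k 1) :
    i = k := by
  have := congrFun h i
  rw [Pi.single_eq_same, Pi.single_apply] at this
  by_cases hik : i = k
  · exact hik
  · rw [if_neg hik] at this
    omega

/-- Recursive construction of the root vectors from the chosen descents. -/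
noncomputable def buildFc {L : Type*} [LieRing L] [LieAlgebra ℂ L]
    (F : Fin r → L) (ε : Fin r → ℂ)
    (idx : (Fin r → ℕ) → Fin r) (prev : (Fin r → ℕ) → (Fin r → ℕ)) :
    ℕ → (Fin r → ℕ) → L
  | 0, _ => 0
  | 1, v => F (idx v)
  | (n + 2), v => ε (idx v) • ⁅F (idx v), buildFc F ε idx prev (n + 1) (prev v)⁆

end ChevAux

open ChevAux

/-- let `n` be the (negative) maximal nilpotent subalgebra of the simple
Lie algebra attached to an ADE diagram — presented as a Lie algebra `L` generated by
elements `F i` subject to the Serre relations, of dimension the number `N` of positive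
roots — and fix signs `ε i = ±1` from a 2-coloring of the diagram (adjacent vertices get
opposite signs).  Then there is a basis `{F_α}` of `L` indexed by the positive roots
`α` (nonnegative vectors of squared length 2), with `F_{α_i} = F i`, such that
`[F i, F_α] = ε i • F_{α + α_i}` whenever `α + α_i` is a root, and `[F i, F_α] = 0`
whenever `α + α_i` is not a root (it is never zero). -/
theorem chevalley_basis_with_signs (r : ℕ) (hr : 1 ≤ r)
    (G : SimpleGraph (Fin r)) [DecidableRel G.Adj] (hG : IsADE G)
    (Φ : Finset (Fin r → ℕ))
    (hΦ : ∀ v : Fin r → ℕ, v ∈ Φ ↔ cartanForm G (qcast v) (qcast v) = 2)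
    (ε : Fin r → ℂ) (hε1 : ∀ i, ε i = 1 ∨ ε i = -1)
    (hε2 : ∀ i j, G.Adj i j → ε i = -ε j)
    (L : Type*) [LieRing L] [LieAlgebra ℂ L]
    (F : Fin r → L)
    (hgen : LieSubalgebra.lieSpan ℂ L (Set.range F) = ⊤)
    (hserre1 : ∀ i j, i ≠ j → ¬G.Adj i j → ⁅F i, F j⁆ = 0)
    (hserre2 : ∀ i j, G.Adj i j → ⁅F i, ⁅F i, F j⁆⁆ = 0)
    (hdim : Module.finrank ℂ L = Φ.card) :
    ∃ Fc : (Fin r → ℕ) → L,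
      (∀ i, Fc (Pi.single i 1) = F i) ∧
      LinearIndependent ℂ (fun v : {v // v ∈ Φ} => Fc v) ∧
      Submodule.span ℂ (Fc '' ↑Φ) = ⊤ ∧
      (∀ v ∈ Φ, ∀ i,
        (v + Pi.single i 1 ∈ Φ → ⁅F i, Fc v⁆ = ε i • Fc (v + Pi.single i 1)) ∧
        (v + Pi.single i 1 ∉ Φ → ⁅F i, Fc v⁆ = 0)) := by
  classical
  obtain ⟨-, hpos⟩ := hG
  -- choose descents
  have hchoice : ∀ v : Fin r → ℕ, ∃ p : (Fin r) × (Fin r → ℕ),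
      (cartanForm G (qcast v) (qcast v) = 2 → 2 ≤ rootHeight v →
        cartanForm G (qcast p.2) (qcast p.2) = 2 ∧ v = p.2 + Pi.single p.1 1) ∧
      (cartanForm G (qcast v) (qcast v) = 2 → rootHeight v = 1 →
        v = Pi.single p.1 1) := by
    intro v
    by_cases hv : cartanForm G (qcast v) (qcast v) = 2
    · by_cases hh : 2 ≤ rootHeight v
      · obtain ⟨i, u, hu, huv⟩ := exists_descent hpos v hv hh
        exact ⟨(i, u), fun _ _ => ⟨hu, huv⟩, fun _ h1 => by omega⟩
      · have h1 : rootHeight v = 1 := by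
          have := rootHeight_pos (G := G) v hv
          omega
        obtain ⟨i, hi⟩ := eq_single_of_height_one v h1
        exact ⟨(i, 0), fun _ h => by omega, fun _ _ => hi⟩
    · exact ⟨(⟨0, hr⟩, 0), fun h => absurd h hv, fun h => absurd h hv⟩
  choose pc hc1 hc2 using hchoice
  set Fc : (Fin r → ℕ) → L :=
    fun v => buildFc F ε (fun w => (pc w).1) (fun w => (pc w).2) (rootHeight v) v with hFcdef
  -- basic properties of Fc
  have hsingleΦ : ∀ i, (Pi.single i 1 : Fin r → ℕ) ∈ Φ := fun i => (hΦ _).mpr (norm_single i)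
  have hFc_single : ∀ i, Fc (Pi.single i 1) = F i := by
    intro i
    have h1 : rootHeight (Pi.single i 1 : Fin r → ℕ) = 1 := rootHeight_single i
    have h2 := hc2 (Pi.single i 1) (norm_single i) h1
    have h3 : (pc (Pi.single i 1 : Fin r → ℕ)).1 = i := (single_index_inj h2.symm)
    show buildFc F ε (fun w => (pc w).1) (fun w => (pc w).2)
      (rootHeight (Pi.single i 1 : Fin r → ℕ)) (Pi.single i 1) = F i
    rw [h1]
    show F ((pc (Pi.single i 1 : Fin r → ℕ)).1) = F i
    rw [h3]
  have hstep : ∀ v, cartanForm G (qcast v) (qcast v) = 2 → 2 ≤ rootHeight v →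
      cartanForm G (qcast ((pc v).2)) (qcast ((pc v).2)) = 2 ∧
      v = (pc v).2 + Pi.single ((pc v).1) 1 ∧
      Fc v = ε ((pc v).1) • ⁅F ((pc v).1), Fc ((pc v).2)⁆ := by
    intro v hv hh
    obtain ⟨h1, h2⟩ := hc1 v hv hh
    refine ⟨h1, h2, ?_⟩
    obtain ⟨m, hm⟩ : ∃ m, rootHeight v = m + 2 := ⟨rootHeight v - 2, by omega⟩
    have hpr : rootHeight ((pc v).2) = m + 1 := by
      have h3 := congrArg rootHeight h2
      rw [rootHeight_add, rootHeight_single] at h3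
      omega
    show buildFc F ε (fun w => (pc w).1) (fun w => (pc w).2) (rootHeight v) v = _
    rw [hm]
    show ε ((pc v).1) • ⁅F ((pc v).1),
      buildFc F ε (fun w => (pc w).1) (fun w => (pc w).2) (m + 1) ((pc v).2)⁆ = _
    have h4 : Fc ((pc v).2)
        = buildFc F ε (fun w => (pc w).1) (fun w => (pc w).2) (m + 1) ((pc v).2) := by
      show buildFc F ε (fun w => (pc w).1) (fun w => (pc w).2)
        (rootHeight ((pc v).2)) ((pc v).2) = _
      rw [hpr]
    rw [h4]
  have main := main_induction hpos F ε hε1 hε2 hserre1 hserre2 Fc hFc_single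
    (fun w => (pc w).1) (fun w => (pc w).2) hstep
  -- the bracket relations
  have relPlus : ∀ v ∈ Φ, ∀ i, v + Pi.single i 1 ∈ Φ →
      ⁅F i, Fc v⁆ = ε i • Fc (v + Pi.single i 1) := by
    intro v hv i hvi
    exact (main (rootHeight (v + Pi.single i 1)) (v + Pi.single i 1) ((hΦ _).mp hvi) rfl).1
      i v ((hΦ _).mp hv) rfl
  have relZero : ∀ v ∈ Φ, ∀ i, v + Pi.single i 1 ∉ Φ → ⁅F i, Fc v⁆ = 0 := by
    intro v hv i hvi
    exact (main (rootHeight v) v ((hΦ _).mp hv) rfl).2.2 i (fun hc => hvi ((hΦ _).mpr hc))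
  -- the span
  set S : Submodule ℂ L := Submodule.span ℂ (Fc '' ↑Φ) with hS
  have hFcS : ∀ v ∈ Φ, Fc v ∈ S := fun v hv => Submodule.subset_span ⟨v, hv, rfl⟩
  have hFS : ∀ i, F i ∈ S := fun i => hFc_single i ▸ hFcS _ (hsingleΦ i)
  have hadF : ∀ i, ∀ x ∈ S, ⁅F i, x⁆ ∈ S := by
    intro i x hx
    induction hx using Submodule.span_induction with
    | mem x hxmem =>
      obtain ⟨v, hvΦ, rfl⟩ := hxmem
      by_cases h : v + Pi.single i 1 ∈ Φ
      · rw [relPlus v hvΦ i h]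
        exact Submodule.smul_mem _ _ (hFcS _ h)
      · rw [relZero v hvΦ i h]
        exact Submodule.zero_mem _
    | zero =>
      rw [lie_zero]
      exact Submodule.zero_mem _
    | add a b ha hb iha ihb =>
      rw [lie_add]
      exact Submodule.add_mem _ iha ihb
    | smul c a ha iha =>
      rw [lie_smul]
      exact Submodule.smul_mem _ _ iha
  have hadFc : ∀ n v, v ∈ Φ → rootHeight v = n → ∀ x ∈ S, ⁅Fc v, x⁆ ∈ S := by
    intro n
    induction n using Nat.strong_induction_on with
    | _ n IH =>
    intro v hv hht x hx
    rcases Nat.lt_or_ge n 2 with h2 | h2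
    · have h1 : rootHeight v = 1 := by
        have := rootHeight_pos (G := G) v ((hΦ v).mp hv)
        omega
      obtain ⟨k, rfl⟩ := eq_single_of_height_one v h1
      rw [hFc_single]
      exact hadF k x hx
    · obtain ⟨hpr, heq, hFcv⟩ := hstep v ((hΦ v).mp hv) (by omega)
      have hph : rootHeight ((pc v).2) + 1 = n := by
        have h3 := congrArg rootHeight heq
        rw [rootHeight_add, rootHeight_single] at h3
        omega
      rw [hFcv, smul_lie, lie_lie]
      refine Submodule.smul_mem _ _ (Submodule.sub_mem _ ?_ ?_)
      · exact hadF _ _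
          (IH (rootHeight ((pc v).2)) (by omega) ((pc v).2) ((hΦ _).mpr hpr) rfl x hx)
      · exact IH (rootHeight ((pc v).2)) (by omega) ((pc v).2) ((hΦ _).mpr hpr) rfl _
          (hadF _ x hx)
  have hlie : ∀ x ∈ S, ∀ y ∈ S, ⁅x, y⁆ ∈ S := by
    intro x hx
    induction hx using Submodule.span_induction with
    | mem a hamem =>
      obtain ⟨v, hvΦ, rfl⟩ := hamem
      exact fun y hy => hadFc (rootHeight v) v hvΦ rfl y hy
    | zero =>
      intro y hy
      rw [zero_lie]
      exact Submodule.zero_mem _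
    | add a b ha hb iha ihb =>
      intro y hy
      rw [add_lie]
      exact Submodule.add_mem _ (iha y hy) (ihb y hy)
    | smul c a ha iha =>
      intro y hy
      rw [smul_lie]
      exact Submodule.smul_mem _ _ (iha y hy)
  let S' : LieSubalgebra ℂ L :=
    { S with lie_mem' := fun {x y} hx hy => hlie x hx y hy }
  have htop : S = ⊤ := by
    rw [eq_top_iff]
    intro x _
    have hx : x ∈ LieSubalgebra.lieSpan ℂ L (Set.range F) := by
      rw [hgen]
      trivial
    have hle : LieSubalgebra.lieSpan ℂ L (Set.range F) ≤ S' :=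
      LieSubalgebra.lieSpan_le.mpr (by rintro _ ⟨i, rfl⟩; exact hFS i)
    exact hle hx
  -- linear independence
  have hrange : Set.range (fun v : {v // v ∈ Φ} => Fc ↑v) = Fc '' ↑Φ := by
    ext x
    constructor
    · rintro ⟨⟨v, hv⟩, rfl⟩
      exact ⟨v, hv, rfl⟩
    · rintro ⟨v, hv, rfl⟩
      exact ⟨⟨v, hv⟩, rfl⟩
  have hcard : Fintype.card {v // v ∈ Φ} = Module.finrank ℂ L := by
    rw [Fintype.card_coe, hdim]
  have hspan_top : ⊤ ≤ Submodule.span ℂ (Set.range fun v : {v // v ∈ Φ} => Fc ↑v) := by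
    rw [hrange]
    exact htop.ge
  have hli := linearIndependent_of_top_le_span_of_card_eq_finrank hspan_top hcard
  exact ⟨Fc, hFc_single, hli, htop, fun v hv i => ⟨relPlus v hv i, relZero v hv i⟩⟩
end

section
/- Let g be a simple Lie algebra of ADE type with Cartan subalgebra h, F = Σ_i ε_i F_i a principal nilpotent element in n_-, and μ, λ ∈ h* with μ regular. Then for generic λ, the operator L = ad(-h_λ + F) ∘ ad(h_μ)^{-1} on n_- is diagonalizable with eigenvalues -(λ,α)/(μ,α), where α runs over the positive roots. -/
open Finset

noncomputable def wpair {r : ℕ} (ν : Fin r → ℂ) (v : Fin r → ℕ) : ℂ := ∑ i, ν i * (v i : ℂ)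

lemma rootHeight_add_single {r : ℕ} (v : Fin r → ℕ) (i : Fin r) :
    rootHeight (v + Pi.single i 1) = rootHeight v + 1 := by
  classical
  simp [rootHeight, Finset.sum_add_distrib, Finset.sum_pi_single']

lemma bracket_sum {L : Type*} [LieRing L] [LieAlgebra ℂ L] {ι : Type*} (s : Finset ι)
    (f : ι → L) (x : L) : ⁅∑ i ∈ s, f i, x⁆ = ∑ i ∈ s, ⁅f i, x⁆ := by
  induction s using Finset.cons_induction with
  | empty => simp
  | cons a s ha ih => rw [Finset.sum_cons, Finset.sum_cons, add_lie, ih]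

/-- let `n₋` be as before (with its sign-coherent Chevalley basis `Fc`),
`F = ∑ ε i • F i` the principal nilpotent, `μ` regular, and `λ` generic (so that the
scalars `-(λ,α)/(μ,α)` are pairwise distinct).  Then the operator
`L = ad(-h_λ + F) ∘ ad(h_μ)⁻¹` on `n₋` — determined by
`L F_α = (-(μ,α))⁻¹ ((λ,α) • F_α + [F, F_α])` — is diagonalizable with eigenvalues
`-(λ,α)/(μ,α)`, `α` running over the positive roots. -/
theorem principal_operator_diagonalizable (r : ℕ) (hr : 1 ≤ r)
    (G : SimpleGraph (Fin r)) [DecidableRel G.Adj] (hG : IsADE G)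
    (Φ : Finset (Fin r → ℕ))
    (hΦ : ∀ v : Fin r → ℕ, v ∈ Φ ↔ cartanForm G (qcast v) (qcast v) = 2)
    (ε : Fin r → ℂ) (hε1 : ∀ i, ε i = 1 ∨ ε i = -1)
    (hε2 : ∀ i j, G.Adj i j → ε i = -ε j)
    (L : Type*) [LieRing L] [LieAlgebra ℂ L]
    (F : Fin r → L) (Fc : (Fin r → ℕ) → L)
    (hFc : ∀ i, Fc (Pi.single i 1) = F i)
    (hind : LinearIndependent ℂ (fun v : {v // v ∈ Φ} => Fc v))
    (hspan : Submodule.span ℂ (Fc '' ↑Φ) = ⊤)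
    (hbr : ∀ v ∈ Φ, ∀ i,
      (v + Pi.single i 1 ∈ Φ → ⁅F i, Fc v⁆ = ε i • Fc (v + Pi.single i 1)) ∧
      (v + Pi.single i 1 ∉ Φ → ⁅F i, Fc v⁆ = 0))
    (lam mu : Fin r → ℂ)
    (hreg : ∀ v ∈ Φ, wpair mu v ≠ 0)
    (hgeneric : ∀ v ∈ Φ, ∀ w ∈ Φ,
      -(wpair lam v) / wpair mu v = -(wpair lam w) / wpair mu w → v = w)
    (Lop : Module.End ℂ L)
    (hLop : ∀ v ∈ Φ, Lop (Fc v)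
      = (-(wpair mu v))⁻¹ • ((wpair lam v) • Fc v + ⁅∑ i, ε i • F i, Fc v⁆)) :
    ∃ vec : (Fin r → ℕ) → L,
      LinearIndependent ℂ (fun v : {v // v ∈ Φ} => vec v) ∧
      Submodule.span ℂ (vec '' ↑Φ) = ⊤ ∧
      ∀ v ∈ Φ, vec v ≠ 0 ∧
        Lop (vec v) = (-(wpair lam v) / wpair mu v) • vec v := by
  classical
  obtain ⟨c, hc⟩ : ∃ c : (Fin r → ℕ) → ℂ, c = fun v => -(wpair lam v) / wpair mu v :=
    ⟨_, rfl⟩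
  have hcv : ∀ v, c v = -(wpair lam v) / wpair mu v := fun v => by rw [hc]
  simp only [← hcv] at hgeneric ⊢
  set S : ℕ → Submodule ℂ L :=
    fun k => Submodule.span ℂ (Fc '' {w | w ∈ Φ ∧ k ≤ rootHeight w}) with hS
  have hSmono : ∀ k l : ℕ, k ≤ l → S l ≤ S k := by
    intro k l h
    exact Submodule.span_mono (Set.image_mono (fun w hw => ⟨hw.1, le_trans h hw.2⟩))
  obtain ⟨N, hN⟩ : ∃ N, ∀ v ∈ Φ, rootHeight v ≤ N :=
    ⟨Φ.sup rootHeight, fun v hv => Finset.le_sup hv⟩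
  have hStop : ∀ k, N < k → S k = ⊥ := by
    intro k hk
    have he : (Fc '' {w | w ∈ Φ ∧ k ≤ rootHeight w}) = ∅ := by
      apply Set.image_eq_empty.2
      ext w; simp only [Set.mem_setOf_eq, Set.mem_empty_iff_false, iff_false, not_and]
      intro hw; have := hN w hw; omega
    rw [hS]; simp only; rw [he, Submodule.span_empty]
  -- key triangularity fact
  have hkey : ∀ v ∈ Φ, Lop (Fc v) - c v • Fc v ∈ S (rootHeight v + 1) := by
    intro v hv
    have hb : ⁅∑ i, ε i • F i, Fc v⁆ ∈ S (rootHeight v + 1) := by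
      rw [bracket_sum]
      apply Submodule.sum_mem
      intro i _
      rw [smul_lie]
      apply Submodule.smul_mem
      rcases hbr v hv i with ⟨h1, h2⟩
      by_cases hin : v + Pi.single i 1 ∈ Φ
      · rw [h1 hin]
        apply Submodule.smul_mem
        apply Submodule.subset_span
        exact ⟨v + Pi.single i 1, ⟨hin, by rw [rootHeight_add_single]⟩, rfl⟩
      · rw [h2 hin]; exact Submodule.zero_mem _
    have heq : Lop (Fc v) - c v • Fc v = (-(wpair mu v))⁻¹ • ⁅∑ i, ε i • F i, Fc v⁆ := by
      rw [hLop v hv, smul_add]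
      have hsc : (-(wpair mu v))⁻¹ • (wpair lam v) • Fc v = c v • Fc v := by
        rw [smul_smul]
        congr 1
        rw [hcv]
        rw [mul_comm, ← div_eq_mul_inv, div_neg, neg_div]
      rw [hsc]; abel
    rw [heq]
    exact Submodule.smul_mem _ _ hb
  -- one-step surjectivity of (Lop - c v) on S k, modulo S (k+1)
  have honestep : ∀ v ∈ Φ, ∀ k, rootHeight v < k → ∀ y ∈ S k,
      ∃ u ∈ S k, Lop u - c v • u - y ∈ S (k + 1) := by
    intro v hv k hk y hy
    induction hy using Submodule.span_induction with
    | mem x hx =>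
      obtain ⟨w, ⟨hw, hkw⟩, rfl⟩ := hx
      have hcne : c w - c v ≠ 0 := by
        intro h
        have hcw : c w = c v := by linear_combination h
        have hwv : w = v := hgeneric w hw v hv hcw
        subst hwv; omega
      refine ⟨(c w - c v)⁻¹ • Fc w, Submodule.smul_mem _ _
        (Submodule.subset_span ⟨w, ⟨hw, hkw⟩, rfl⟩), ?_⟩
      have heq : Lop ((c w - c v)⁻¹ • Fc w) - c v • ((c w - c v)⁻¹ • Fc w) - Fc w
          = (c w - c v)⁻¹ • (Lop (Fc w) - c w • Fc w) := by
        rw [map_smul]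
        have hcne' : -c v + c w ≠ 0 := by
          intro h; exact hcne (by linear_combination h)
        have h1 : (-c v + c w) * (-c v + c w)⁻¹ = 1 := mul_inv_cancel₀ hcne'
        match_scalars
        · ring
        · linear_combination h1
      rw [heq]
      exact Submodule.smul_mem _ _
        (hSmono (k + 1) (rootHeight w + 1) (by omega) (hkey w hw))
    | zero => exact ⟨0, Submodule.zero_mem _, by simp [Submodule.zero_mem]⟩
    | add x y hx hy ihx ihy =>
      obtain ⟨u1, hu1, h1⟩ := ihx
      obtain ⟨u2, hu2, h2⟩ := ihy
      refine ⟨u1 + u2, Submodule.add_mem _ hu1 hu2, ?_⟩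
      have heq : Lop (u1 + u2) - c v • (u1 + u2) - (x + y)
          = (Lop u1 - c v • u1 - x) + (Lop u2 - c v • u2 - y) := by
        rw [map_add]; module
      rw [heq]; exact Submodule.add_mem _ h1 h2
    | smul a x hx ihx =>
      obtain ⟨u1, hu1, h1⟩ := ihx
      refine ⟨a • u1, Submodule.smul_mem _ _ hu1, ?_⟩
      have heq : Lop (a • u1) - c v • (a • u1) - a • x
          = a • (Lop u1 - c v • u1 - x) := by
        rw [map_smul]; module
      rw [heq]; exact Submodule.smul_mem _ _ h1
  -- full surjectivity of (Lop - c v) on S k, for k > rootHeight v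
  have hsurj : ∀ v ∈ Φ, ∀ m k, N + 1 ≤ k + m → rootHeight v < k →
      ∀ y ∈ S k, ∃ u ∈ S k, Lop u - c v • u = y := by
    intro v hv m
    induction m with
    | zero =>
      intro k hk hvk y hy
      have hb : S k = ⊥ := hStop k (by omega)
      rw [hb, Submodule.mem_bot] at hy
      exact ⟨0, Submodule.zero_mem _, by simp [hy]⟩
    | succ m ih =>
      intro k hk hvk y hy
      obtain ⟨u0, hu0, hz⟩ := honestep v hv k hvk y hy
      obtain ⟨u1, hu1, he⟩ := ih (k + 1) (by omega) (by omega)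
        (-(Lop u0 - c v • u0 - y)) (Submodule.neg_mem _ hz)
      refine ⟨u0 + u1, Submodule.add_mem _ hu0 (hSmono k (k + 1) (by omega) hu1), ?_⟩
      have heq : Lop (u0 + u1) - c v • (u0 + u1)
          = (Lop u0 - c v • u0) + (Lop u1 - c v • u1) := by
        rw [map_add]; module
      rw [heq, he]; abel
  -- eigenvector construction
  have hvecex : ∀ v ∈ Φ, ∃ u ∈ S (rootHeight v + 1),
      Lop (Fc v + u) = c v • (Fc v + u) := by
    intro v hv
    obtain ⟨u, hu, he⟩ := hsurj v hv (N + 1) (rootHeight v + 1) (by omega) (by omega)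
      (-(Lop (Fc v) - c v • Fc v)) (Submodule.neg_mem _ (hkey v hv))
    refine ⟨u, hu, ?_⟩
    rw [map_add, smul_add]
    linear_combination (norm := module) he
  choose! u hu he using hvecex
  set vec : (Fin r → ℕ) → L := fun v => Fc v + u v with hvec
  -- Fc v is not in the span of strictly higher vectors
  have hnotmem : ∀ v ∈ Φ, Fc v ∉ S (rootHeight v + 1) := by
    intro v hv hmem
    have himg : Fc '' {w | w ∈ Φ ∧ rootHeight v + 1 ≤ rootHeight w}
        = (fun x : {w // w ∈ Φ} => Fc x.1) ''
            {x : {w // w ∈ Φ} | rootHeight v + 1 ≤ rootHeight x.1} := by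
      ext z
      constructor
      · rintro ⟨w, ⟨hw, hkw⟩, rfl⟩; exact ⟨⟨w, hw⟩, hkw, rfl⟩
      · rintro ⟨⟨w, hw⟩, hkw, rfl⟩; exact ⟨w, ⟨hw, hkw⟩, rfl⟩
    rw [hS] at hmem; simp only at hmem; rw [himg] at hmem
    exact hind.notMem_span_image (x := ⟨v, hv⟩)
      (s := {x : {w // w ∈ Φ} | rootHeight v + 1 ≤ rootHeight x.1})
      (by simp) hmem
  have hne : ∀ v ∈ Φ, vec v ≠ 0 := by
    intro v hv h0
    apply hnotmem v hv
    have hfc : Fc v = -u v := by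
      rw [hvec] at h0; simp only at h0
      linear_combination (norm := module) h0
    rw [hfc]
    exact Submodule.neg_mem _ (hu v hv)
  -- spanning
  have hspan2 : ∀ m k, N + 1 ≤ k + m → S k ≤ Submodule.span ℂ (vec '' ↑Φ) := by
    intro m
    induction m with
    | zero =>
      intro k hk
      rw [hStop k (by omega)]; exact bot_le
    | succ m ih =>
      intro k hk
      rw [hS]; simp only
      apply Submodule.span_le.2
      rintro x ⟨w, ⟨hw, hkw⟩, rfl⟩
      have hfc : Fc w = vec w - u w := by rw [hvec]; simp
      rw [hfc]
      apply Submodule.sub_mem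
      · exact Submodule.subset_span ⟨w, hw, rfl⟩
      · exact ih (k + 1) (by omega)
          (hSmono (k + 1) (rootHeight w + 1) (by omega) (hu w hw))
  have htop : Submodule.span ℂ (vec '' ↑Φ) = ⊤ := by
    apply top_unique
    have h0 : (⊤ : Submodule ℂ L) ≤ S 0 := by
      rw [← hspan]
      apply Submodule.span_mono
      exact Set.image_mono (fun w hw => ⟨hw, Nat.zero_le _⟩)
    exact le_trans h0 (hspan2 (N + 1) 0 (by omega))
  have hrange : ∀ f : (Fin r → ℕ) → L,
      Set.range (fun v : {v // v ∈ Φ} => f v) = f '' ↑Φ := by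
    intro f; ext z
    constructor
    · rintro ⟨⟨w, hw⟩, rfl⟩; exact ⟨w, hw, rfl⟩
    · rintro ⟨w, hw, rfl⟩; exact ⟨⟨w, hw⟩, rfl⟩
  -- linear independence via dimension count
  have B : Module.Basis {v // v ∈ Φ} ℂ L := Module.Basis.mk hind (by
    rw [hrange Fc, hspan])
  have : FiniteDimensional ℂ L := Module.Finite.of_basis B
  have hli : LinearIndependent ℂ (fun v : {v // v ∈ Φ} => vec v) := by
    apply linearIndependent_of_top_le_span_of_card_eq_finrank
    · rw [hrange vec, htop]
    · rw [Module.finrank_eq_card_basis B]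
  refine ⟨vec, hli, htop, ?_⟩
  intro v hv
  refine ⟨hne v hv, ?_⟩
  have hev := he v hv
  rw [hvec]; simp only
  rw [hev]
end

section
/- Let A be an associative unital algebra over a commutative ring, with a complete family of orthogonal idempotents e_i (i ∈ I) summing to 1. For any derivation D of A, setting u_D := Σ_i e_i D(e_i), the derivation D + ad(u_D) annihilates every e_i, and agrees with D on every central element of A. -/
/-- let `A` be an associative unital algebra over a commutative ring `R`,
with a complete family of orthogonal idempotents `e i` summing to `1`.  For any
derivation `D` of `A`, setting `u = ∑ i, e i * D (e i)`, the derivation `D + ad u`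
annihilates every `e i`, and agrees with `D` on every central element of `A`. -/
theorem derivation_idempotent_correction (R A ι : Type*) [CommRing R] [Ring A]
    [Algebra R A] [Fintype ι] [DecidableEq ι] (e : ι → A)
    (horth : ∀ i j : ι, e i * e j = if i = j then e i else 0)
    (hsum : ∑ i, e i = 1)
    (D : A →ₗ[R] A) (hD : ∀ x y : A, D (x * y) = D x * y + x * D y) :
    (∀ i : ι, D (e i) + ((∑ j, e j * D (e j)) * e i - e i * (∑ j, e j * D (e j))) = 0) ∧
    (∀ z ∈ Set.center A,
      D z + ((∑ j, e j * D (e j)) * z - z * (∑ j, e j * D (e j))) = D z) := by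
  constructor
  · intro i
    have hleft : (∑ j, e j * D (e j)) * e i = e i * D (e i) - D (e i) := by
      rw [Finset.sum_mul]
      have hterm : ∀ j, e j * D (e j) * e i
          = (if j = i then e i * D (e i) else 0) - e j * D (e i) := by
        intro j
        have hji := hD (e j) (e i)
        rw [horth j i] at hji
        have hDe : D (e j) * e i = (if j = i then D (e i) else 0) - e j * D (e i) := by
          by_cases h : j = i
          · subst h; simp only [if_pos rfl] at hji ⊢
            rw [eq_sub_iff_add_eq]; exact hji.symm
          · simp only [if_neg h] at hji ⊢
            rw [map_zero] at hji
            rw [zero_sub, eq_neg_iff_add_eq_zero]; exact hji.symm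
        rw [mul_assoc, hDe, mul_sub]
        by_cases h : j = i
        · subst h
          simp [horth j j, ← mul_assoc]
        · simp [h, ← mul_assoc, horth j j]
      rw [Finset.sum_congr rfl fun j _ => hterm j, Finset.sum_sub_distrib,
        Finset.sum_ite_eq' Finset.univ i (fun _ => e i * D (e i)), ← Finset.sum_mul, hsum]
      simp
    have hright : e i * (∑ j, e j * D (e j)) = e i * D (e i) := by
      rw [Finset.mul_sum]
      have hterm : ∀ j, e i * (e j * D (e j)) = if j = i then e i * D (e i) else 0 := by
        intro j
        rw [← mul_assoc, horth i j]
        by_cases h : j = i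
        · subst h; simp
        · simp [Ne.symm h, h]
      rw [Finset.sum_congr rfl fun j _ => hterm j,
        Finset.sum_ite_eq' Finset.univ i (fun _ => e i * D (e i))]
      simp
    rw [hleft, hright]
    abel
  · intro z hz
    rw [hz.comm (∑ j, e j * D (e j)), sub_self, add_zero]
end

section
/- Let Q be a quiver of type A_n, A = A^ρ its centrally extended preprojective algebra with central generator z, e_n the idempotent at an end vertex of the Dynkin diagram, and B_n = e_n A e_n. Then B_n is a commutative algebra isomorphic to C[z]/(z^n); in particular dim B_n = n. -/
set_option maxHeartbeats 1000000


/-- Generators for the centrally extended preprojective algebra of the `A_n` quiver: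
vertex idempotents `v i`, arrows `x k : k → k+1`, reverse arrows `y k : k+1 → k`,
and the central generator `z`. -/
inductive PGen (n : ℕ) : Type
  | v : Fin n → PGen n
  | x : Fin (n - 1) → PGen n
  | y : Fin (n - 1) → PGen n
  | z : PGen n

open FreeAlgebra in
/-- The defining relations of the centrally extended preprojective algebra `A = A^ρ` of
the `A_n` quiver: the `e i := v i` are orthogonal idempotents summing to `1`, `z` is
central, each arrow `x k` (resp. `y k`) is a path from vertex `k` to `k+1` (resp. from
`k+1` to `k`) — here `k ≤ n-2` is embedded in `Fin n` via `castLE` and `k+1` via the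
successor — and the centrally extended preprojective relation
`∑_k [x k, y k] = z` (the weight `μ = ρ`). -/
inductive PRel (n : ℕ) (hn : 1 ≤ n) :
    FreeAlgebra ℂ (PGen n) → FreeAlgebra ℂ (PGen n) → Prop
  | idem (i j : Fin n) : PRel n hn (ι ℂ (PGen.v i) * ι ℂ (PGen.v j))
      (if i = j then ι ℂ (PGen.v i) else 0)
  | total : PRel n hn (∑ i : Fin n, ι ℂ (PGen.v i)) 1
  | central (g : PGen n) : PRel n hn (ι ℂ (PGen.z) * ι ℂ g) (ι ℂ g * ι ℂ (PGen.z))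
  | xpath (k : Fin (n - 1)) : PRel n hn (ι ℂ (PGen.x k))
      (ι ℂ (PGen.v ⟨k.1 + 1, by omega⟩) * ι ℂ (PGen.x k) * ι ℂ (PGen.v ⟨k.1, by omega⟩))
  | ypath (k : Fin (n - 1)) : PRel n hn (ι ℂ (PGen.y k))
      (ι ℂ (PGen.v ⟨k.1, by omega⟩) * ι ℂ (PGen.y k) * ι ℂ (PGen.v ⟨k.1 + 1, by omega⟩))
  | preproj : PRel n hn
      (∑ k : Fin (n - 1),
        (ι ℂ (PGen.x k) * ι ℂ (PGen.y k) - ι ℂ (PGen.y k) * ι ℂ (PGen.x k)))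
      (ι ℂ (PGen.z))

/-- The centrally extended preprojective algebra `A = A^ρ` of the `A_n` quiver. -/
abbrev CEPA (n : ℕ) (hn : 1 ≤ n) := RingQuot (PRel n hn)

namespace CEPAux

open FreeAlgebra

variable {n : ℕ} {hn : 1 ≤ n}

noncomputable def pr {n : ℕ} {hn : 1 ≤ n} : FreeAlgebra ℂ (PGen n) →ₐ[ℂ] CEPA n hn :=
  RingQuot.mkAlgHom ℂ (PRel n hn)

lemma rel {a b : FreeAlgebra ℂ (PGen n)} (h : PRel n hn a b) :
    pr (hn := hn) a = pr (hn := hn) b :=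
  RingQuot.mkAlgHom_rel ℂ h

noncomputable def eN {n : ℕ} (hn : 1 ≤ n) (i : ℕ) : CEPA n hn :=
  if h : i < n then pr (hn := hn) (ι ℂ (PGen.v ⟨i, h⟩)) else 0

noncomputable def xN {n : ℕ} (hn : 1 ≤ n) (k : ℕ) : CEPA n hn :=
  if h : k < n - 1 then pr (hn := hn) (ι ℂ (PGen.x ⟨k, h⟩)) else 0

noncomputable def yN {n : ℕ} (hn : 1 ≤ n) (k : ℕ) : CEPA n hn :=
  if h : k < n - 1 then pr (hn := hn) (ι ℂ (PGen.y ⟨k, h⟩)) else 0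

noncomputable def zz {n : ℕ} (hn : 1 ≤ n) : CEPA n hn := pr (hn := hn) (ι ℂ PGen.z)

lemma idemN (i j : ℕ) : eN hn i * eN hn j = if i = j then eN hn i else 0 := by
  by_cases hi : i < n
  · by_cases hj : j < n
    · unfold eN
      rw [dif_pos hi, dif_pos hj, ← map_mul, rel (PRel.idem ⟨i, hi⟩ ⟨j, hj⟩)]
      by_cases hij : i = j
      · subst hij
        simp
      · rw [if_neg (by simp [Fin.mk.injEq, hij]), if_neg hij, map_zero]
    · have hij : i ≠ j := by omega
      unfold eN
      rw [dif_neg hj, mul_zero, if_neg hij]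
  · unfold eN
    rw [dif_neg hi, zero_mul]
    split <;> rfl

lemma zz_comm (a : CEPA n hn) : zz hn * a = a * zz hn := by
  obtain ⟨w, rfl⟩ := RingQuot.mkAlgHom_surjective ℂ (PRel n hn) a
  show zz hn * pr (hn := hn) w = pr (hn := hn) w * zz hn
  induction w using FreeAlgebra.induction with
  | grade0 r =>
      rw [AlgHom.commutes]
      exact (Algebra.commutes r (zz hn)).symm
  | grade1 g =>
      show zz hn * pr (hn := hn) (ι ℂ g) = pr (hn := hn) (ι ℂ g) * zz hn
      unfold zz
      rw [← map_mul, ← map_mul]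
      exact rel (PRel.central g)
  | mul a b ha hb =>
      rw [map_mul, ← mul_assoc, ha, mul_assoc, hb, mul_assoc]
  | add a b ha hb =>
      rw [map_add, mul_add, add_mul, ha, hb]

lemma zz_pow_comm (m : ℕ) (a : CEPA n hn) : zz hn ^ m * a = a * zz hn ^ m := by
  induction m with
  | zero => simp
  | succ m ih =>
      rw [pow_succ, mul_assoc, zz_comm, ← mul_assoc, ih, mul_assoc]

lemma xpathN (k : ℕ) (hk : k < n - 1) :
    xN hn k = eN hn (k + 1) * xN hn k * eN hn k := by
  unfold xN eN
  rw [dif_pos hk, dif_pos (by omega : k + 1 < n), dif_pos (by omega : k < n),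
    ← map_mul, ← map_mul]
  exact rel (PRel.xpath ⟨k, hk⟩)

lemma ypathN (k : ℕ) (hk : k < n - 1) :
    yN hn k = eN hn k * yN hn k * eN hn (k + 1) := by
  unfold yN eN
  rw [dif_pos hk, dif_pos (by omega : k + 1 < n), dif_pos (by omega : k < n),
    ← map_mul, ← map_mul]
  exact rel (PRel.ypath ⟨k, hk⟩)

lemma eN_mul_xN (q k : ℕ) : eN hn q * xN hn k = if q = k + 1 then xN hn k else 0 := by
  by_cases hk : k < n - 1
  · nth_rewrite 1 [xpathN k hk]
    rw [← mul_assoc, ← mul_assoc, idemN]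
    by_cases hq : q = k + 1
    · rw [if_pos hq, if_pos hq]
      subst hq
      exact (xpathN k hk).symm
    · rw [if_neg hq, if_neg hq, zero_mul, zero_mul]
  · have : xN hn k = 0 := by unfold xN; rw [dif_neg hk]
    rw [this, mul_zero]
    split <;> rfl

lemma xN_mul_eN (k q : ℕ) : xN hn k * eN hn q = if q = k then xN hn k else 0 := by
  by_cases hk : k < n - 1
  · by_cases hq : q = k
    · subst hq
      rw [if_pos rfl]
      nth_rewrite 1 [xpathN q hk]
      rw [mul_assoc (eN hn (q + 1) * xN hn q), idemN, if_pos rfl]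
      exact (xpathN q hk).symm
    · rw [if_neg hq]
      nth_rewrite 1 [xpathN k hk]
      rw [mul_assoc (eN hn (k + 1) * xN hn k), idemN, if_neg (fun h => hq h.symm), mul_zero]
  · have h0 : xN hn k = 0 := by unfold xN; rw [dif_neg hk]
    rw [h0, zero_mul]
    split <;> rfl

lemma eN_mul_yN (q k : ℕ) : eN hn q * yN hn k = if q = k then yN hn k else 0 := by
  by_cases hk : k < n - 1
  · by_cases hq : q = k
    · subst hq
      rw [if_pos rfl]
      nth_rewrite 1 [ypathN q hk]
      rw [← mul_assoc, ← mul_assoc, idemN, if_pos rfl]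
      exact (ypathN q hk).symm
    · rw [if_neg hq]
      nth_rewrite 1 [ypathN k hk]
      rw [← mul_assoc, ← mul_assoc, idemN, if_neg hq, zero_mul, zero_mul]
  · have h0 : yN hn k = 0 := by unfold yN; rw [dif_neg hk]
    rw [h0, mul_zero]
    split <;> rfl

lemma yN_mul_eN (k q : ℕ) : yN hn k * eN hn q = if q = k + 1 then yN hn k else 0 := by
  by_cases hk : k < n - 1
  · by_cases hq : q = k + 1
    · subst hq
      rw [if_pos rfl]
      nth_rewrite 1 [ypathN k hk]
      rw [mul_assoc (eN hn k * yN hn k), idemN, if_pos rfl]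
      exact (ypathN k hk).symm
    · rw [if_neg hq]
      nth_rewrite 1 [ypathN k hk]
      rw [mul_assoc (eN hn k * yN hn k), idemN, if_neg (fun h => hq h.symm), mul_zero]
  · have h0 : yN hn k = 0 := by unfold yN; rw [dif_neg hk]
    rw [h0, zero_mul]
    split <;> rfl

lemma preprojN :
    (∑ k : Fin (n - 1), (xN hn k.1 * yN hn k.1 - yN hn k.1 * xN hn k.1)) = zz hn := by
  have h := rel (hn := hn) PRel.preproj
  rw [map_sum] at h
  unfold zz
  rw [← h]
  apply Finset.sum_congr rfl
  intro k _
  rw [map_sub, map_mul, map_mul]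
  unfold xN yN
  rw [dif_pos k.2, dif_pos k.2]

/-- the down-up loop `x_{k-1} y_{k-1}` at vertex `k` (`0` at vertex `0`). -/
noncomputable def sN {n : ℕ} (hn : 1 ≤ n) : ℕ → CEPA n hn
  | 0 => 0
  | (k + 1) => xN hn k * yN hn k

/-- the up-down loop `y_k x_k` at vertex `k`. -/
noncomputable def uN {n : ℕ} (hn : 1 ≤ n) (k : ℕ) : CEPA n hn := yN hn k * xN hn k

lemma sN_mul_eN (k : ℕ) : sN hn k * eN hn k = sN hn k := by
  match k with
  | 0 => show (0 : CEPA n hn) * _ = 0; rw [zero_mul]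
  | (k' + 1) =>
      show xN hn k' * yN hn k' * eN hn (k' + 1) = sN hn (k' + 1)
      rw [mul_assoc, yN_mul_eN, if_pos rfl]
      rfl

lemma eN_mul_sN (k : ℕ) : eN hn k * sN hn k = sN hn k := by
  match k with
  | 0 => show _ * (0 : CEPA n hn) = 0; rw [mul_zero]
  | (k' + 1) =>
      show eN hn (k' + 1) * (xN hn k' * yN hn k') = sN hn (k' + 1)
      rw [← mul_assoc, eN_mul_xN, if_pos rfl]
      rfl

/-- The corner instance of the preprojective relation at vertex `k`. -/
lemma corner_id (k : ℕ) (hk : k < n) :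
    zz hn * eN hn k = sN hn k - yN hn k * xN hn k := by
  have h1 : zz hn * eN hn k = eN hn k * (zz hn * eN hn k) := by
    rw [← mul_assoc, ← zz_comm (eN hn k), mul_assoc, idemN, if_pos rfl]
  rw [h1, ← preprojN, Finset.sum_mul, Finset.mul_sum]
  have p1 : ∀ t : Fin (n - 1),
      eN hn k * (xN hn t.1 * yN hn t.1 * eN hn k)
        = (if k = t.1 + 1 then xN hn t.1 * yN hn t.1 else 0) := by
    intro t
    by_cases h : k = t.1 + 1
    · rw [if_pos h, ← mul_assoc, ← mul_assoc, eN_mul_xN, if_pos h, mul_assoc,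
        yN_mul_eN, if_pos h]
    · rw [if_neg h, ← mul_assoc, ← mul_assoc, eN_mul_xN, if_neg h, zero_mul, zero_mul]
  have p2 : ∀ t : Fin (n - 1),
      eN hn k * (yN hn t.1 * xN hn t.1 * eN hn k)
        = (if k = t.1 then yN hn t.1 * xN hn t.1 else 0) := by
    intro t
    by_cases h : k = t.1
    · rw [if_pos h, ← mul_assoc, ← mul_assoc, eN_mul_yN, if_pos h, mul_assoc,
        xN_mul_eN, if_pos h]
    · rw [if_neg h, ← mul_assoc, ← mul_assoc, eN_mul_yN, if_neg h, zero_mul, zero_mul]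
  have hterm : ∀ t : Fin (n - 1),
      eN hn k * ((xN hn t.1 * yN hn t.1 - yN hn t.1 * xN hn t.1) * eN hn k) =
      (if k = t.1 + 1 then xN hn t.1 * yN hn t.1 else 0)
        - (if k = t.1 then yN hn t.1 * xN hn t.1 else 0) := by
    intro t
    rw [sub_mul, mul_sub, p1 t, p2 t]
  rw [Finset.sum_congr rfl (fun t _ => hterm t), Finset.sum_sub_distrib]
  congr 1
  · match k with
    | 0 =>
        rw [Finset.sum_eq_zero]
        · rfl
        · intro t _
          rw [if_neg (by omega)]
    | (k' + 1) =>
        have hk' : k' < n - 1 := by omega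
        rw [Finset.sum_eq_single (⟨k', hk'⟩ : Fin (n - 1))]
        · rw [if_pos rfl]
          rfl
        · intro t _ ht
          rw [if_neg (fun hc => ht (Fin.ext (show t.1 = k' by omega)))]
        · intro hmem
          exact absurd (Finset.mem_univ _) hmem
  · by_cases hk1 : k < n - 1
    · rw [Finset.sum_eq_single (⟨k, hk1⟩ : Fin (n - 1))]
      · rw [if_pos rfl]
      · intro t _ ht
        rw [if_neg (fun hc => ht (Fin.ext (show t.1 = k by omega)))]
      · intro hmem
        exact absurd (Finset.mem_univ _) hmem
    · rw [Finset.sum_eq_zero]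
      · have h0 : yN hn k = 0 := by unfold yN; rw [dif_neg hk1]
        rw [h0, zero_mul]
      · intro t _
        rw [if_neg (by omega)]

/-! ### Paths -/

noncomputable def Xp {n : ℕ} (hn : 1 ≤ n) (l : ℕ) : ℕ → CEPA n hn
  | 0 => eN hn l
  | (t + 1) => xN hn (l + t) * Xp hn l t

noncomputable def Yp {n : ℕ} (hn : 1 ≤ n) (l : ℕ) : ℕ → CEPA n hn
  | 0 => eN hn l
  | (t + 1) => Yp hn l t * yN hn (l + t)

lemma Xp_succ (l t : ℕ) : Xp hn l (t + 1) = xN hn (l + t) * Xp hn l t := by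
  rw [Xp]

lemma Yp_succ (l t : ℕ) : Yp hn l (t + 1) = Yp hn l t * yN hn (l + t) := by
  rw [Yp]

lemma eN_mul_Xp (q l t : ℕ) :
    eN hn q * Xp hn l t = if q = l + t then Xp hn l t else 0 := by
  induction t with
  | zero =>
      show eN hn q * eN hn l = if q = l + 0 then eN hn l else 0
      rw [Nat.add_zero, idemN]
      by_cases h : q = l
      · rw [if_pos h, if_pos h, h]
      · rw [if_neg h, if_neg h]
  | succ t ih =>
      show eN hn q * (xN hn (l + t) * Xp hn l t) = _
      rw [← mul_assoc, eN_mul_xN]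
      by_cases h : q = l + (t + 1)
      · rw [if_pos (by omega : q = l + t + 1), if_pos h, ← Xp_succ]
      · rw [if_neg (by omega : ¬ q = l + t + 1), if_neg h, zero_mul]

lemma Xp_mul_eN (l t q : ℕ) :
    Xp hn l t * eN hn q = if q = l then Xp hn l t else 0 := by
  induction t with
  | zero =>
      show eN hn l * eN hn q = if q = l then eN hn l else 0
      rw [idemN]
      by_cases h : l = q
      · rw [if_pos h, if_pos h.symm]
      · rw [if_neg h, if_neg (fun hc => h hc.symm)]
  | succ t ih =>
      show xN hn (l + t) * Xp hn l t * eN hn q = _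
      rw [mul_assoc, ih, mul_ite, mul_zero, ← Xp_succ]

lemma eN_mul_Yp (q l t : ℕ) :
    eN hn q * Yp hn l t = if q = l then Yp hn l t else 0 := by
  induction t with
  | zero =>
      show eN hn q * eN hn l = if q = l then eN hn l else 0
      rw [idemN]
      by_cases h : q = l
      · rw [if_pos h, if_pos h, h]
      · rw [if_neg h, if_neg h]
  | succ t ih =>
      show eN hn q * (Yp hn l t * yN hn (l + t)) = _
      rw [← mul_assoc, ih, ite_mul, zero_mul, ← Yp_succ]

lemma Yp_mul_eN (l t q : ℕ) :
    Yp hn l t * eN hn q = if q = l + t then Yp hn l t else 0 := by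
  induction t with
  | zero =>
      show eN hn l * eN hn q = if q = l + 0 then eN hn l else 0
      rw [Nat.add_zero, idemN]
      by_cases h : l = q
      · rw [if_pos h, if_pos h.symm]
      · rw [if_neg h, if_neg (fun hc => h hc.symm)]
  | succ t ih =>
      show Yp hn l t * yN hn (l + t) * eN hn q = _
      rw [mul_assoc, yN_mul_eN]
      by_cases h : q = l + (t + 1)
      · rw [if_pos (by omega : q = l + t + 1), if_pos h, ← Yp_succ]
      · rw [if_neg (by omega : ¬ q = l + t + 1), if_neg h, mul_zero]

lemma Xp_mul_xN (l t : ℕ) : Xp hn (l + 1) t * xN hn l = Xp hn l (t + 1) := by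
  induction t with
  | zero =>
      show eN hn (l + 1) * xN hn l = xN hn (l + 0) * Xp hn l 0
      rw [eN_mul_xN, if_pos rfl, Nat.add_zero]
      show xN hn l = xN hn l * eN hn l
      rw [xN_mul_eN, if_pos rfl]
  | succ t ih =>
      show xN hn (l + 1 + t) * Xp hn (l + 1) t * xN hn l = _
      rw [mul_assoc, ih]
      have h : l + 1 + t = l + (t + 1) := by omega
      rw [h]
      rfl

lemma yN_mul_Yp (l t : ℕ) : yN hn l * Yp hn (l + 1) t = Yp hn l (t + 1) := by
  induction t with
  | zero =>
      show yN hn l * eN hn (l + 1) = Yp hn l 0 * yN hn (l + 0)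
      rw [yN_mul_eN, if_pos rfl, Nat.add_zero]
      show yN hn l = eN hn l * yN hn l
      rw [eN_mul_yN, if_pos rfl]
  | succ t ih =>
      show yN hn l * (Yp hn (l + 1) t * yN hn (l + 1 + t)) = _
      rw [← mul_assoc, ih]
      have h : l + 1 + t = l + (t + 1) := by omega
      rw [h]
      rfl

lemma yx_eq (k : ℕ) (hk : k < n) :
    yN hn k * xN hn k = sN hn k - zz hn * eN hn k := by
  have h := eq_sub_iff_add_eq.mp (corner_id (hn := hn) k hk)
  rw [eq_sub_iff_add_eq, add_comm]
  exact h

/-- The peel lemma: moving a `y` through an ascending path. -/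
lemma peel (l t : ℕ) (h : l + t + 1 < n) :
    yN hn (l + t) * Xp hn l (t + 1)
      = (-((t : ℂ) + 1)) • (zz hn * Xp hn l t) + Xp hn l t * sN hn l := by
  induction t with
  | zero =>
      show yN hn (l + 0) * (xN hn (l + 0) * Xp hn l 0) = _
      rw [Nat.add_zero]
      show yN hn l * (xN hn l * eN hn l) = _
      rw [← mul_assoc, yx_eq l (by omega), sub_mul, sN_mul_eN, mul_assoc, idemN,
        if_pos rfl]
      simp [Xp, eN_mul_sN, sub_eq_neg_add, neg_smul, one_smul]
      exact (neg_one_smul ℂ _).symm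
  | succ t ih =>
      have h' : l + t + 1 < n := by omega
      have hidx : l + (t + 1) = l + t + 1 := by omega
      show yN hn (l + (t + 1)) * (xN hn (l + (t + 1)) * Xp hn l (t + 1)) = _
      rw [hidx, ← mul_assoc, yx_eq (l + t + 1) (by omega), sub_mul]
      have hs : sN hn (l + t + 1) * Xp hn l (t + 1)
          = xN hn (l + t) * (yN hn (l + t) * Xp hn l (t + 1)) := by
        show xN hn (l + t) * yN hn (l + t) * Xp hn l (t + 1) = _
        rw [mul_assoc]
      have hz : zz hn * eN hn (l + t + 1) * Xp hn l (t + 1)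
          = zz hn * Xp hn l (t + 1) := by
        rw [mul_assoc, eN_mul_Xp, if_pos hidx.symm]
      rw [hs, hz, ih h', mul_add]
      have h1 : xN hn (l + t) * ((-((t : ℂ) + 1)) • (zz hn * Xp hn l t))
          = (-((t : ℂ) + 1)) • (zz hn * Xp hn l (t + 1)) := by
        rw [mul_smul_comm]
        congr 1
        rw [← mul_assoc, ← zz_comm (xN hn (l + t)), mul_assoc, ← Xp_succ]
      have h2 : xN hn (l + t) * (Xp hn l t * sN hn l) = Xp hn l (t + 1) * sN hn l := by
        rw [← mul_assoc, ← Xp_succ]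
      rw [h1, h2]
      have hd : -((((t + 1) : ℕ) : ℂ) + 1) = -((t : ℂ) + 1) + (-1) := by push_cast; ring
      rw [hd, add_smul, neg_one_smul]
      abel

/-! ### Nilpotency -/

noncomputable def Wd {n : ℕ} (hn : 1 ≤ n) (k : ℕ) : ℕ → CEPA n hn
  | 0 => eN hn k
  | (m + 1) => (sN hn k + ((m + 1 : ℕ) : ℂ) • (zz hn * eN hn k)) * Wd hn k m

noncomputable def Ud {n : ℕ} (hn : 1 ≤ n) (k : ℕ) : ℕ → CEPA n hn
  | 0 => eN hn k
  | (m + 1) => (uN hn k + ((m + 1 : ℕ) : ℂ) • (zz hn * eN hn k)) * Ud hn k m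

lemma sN_eq (k : ℕ) (hk : k < n) : sN hn k = uN hn k + zz hn * eN hn k := by
  have h := eq_sub_iff_add_eq.mp (corner_id (hn := hn) k hk)
  rw [← h, add_comm]
  rfl

lemma uN_mul_eN (k : ℕ) : uN hn k * eN hn k = uN hn k := by
  show yN hn k * xN hn k * eN hn k = _
  rw [mul_assoc, xN_mul_eN, if_pos rfl]
  rfl

lemma convWU (k : ℕ) (hk : k < n) (m : ℕ) :
    Wd hn k m * sN hn k = Ud hn k (m + 1) := by
  induction m with
  | zero =>
      show eN hn k * sN hn k = (uN hn k + ((0 + 1 : ℕ) : ℂ) • (zz hn * eN hn k)) * eN hn k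
      rw [eN_mul_sN, add_mul, uN_mul_eN, smul_mul_assoc, mul_assoc, idemN, if_pos rfl]
      norm_num
      exact sN_eq k hk
  | succ m ih =>
      show (sN hn k + ((m + 1 : ℕ) : ℂ) • (zz hn * eN hn k)) * Wd hn k m * sN hn k = _
      rw [mul_assoc, ih]
      show _ = (uN hn k + ((m + 1 + 1 : ℕ) : ℂ) • (zz hn * eN hn k)) * Ud hn k (m + 1)
      have hc : ((m + 1 + 1 : ℕ) : ℂ) • (zz hn * eN hn k)
          = zz hn * eN hn k + ((m + 1 : ℕ) : ℂ) • (zz hn * eN hn k) := by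
        have hcc : ((m + 1 + 1 : ℕ) : ℂ) = 1 + ((m + 1 : ℕ) : ℂ) := by push_cast; ring
        rw [hcc, add_smul, one_smul]
      rw [hc, sN_eq k hk, add_assoc]

lemma xN_mul_uN (k : ℕ) : xN hn k * uN hn k = sN hn (k + 1) * xN hn k := by
  show xN hn k * (yN hn k * xN hn k) = xN hn k * yN hn k * xN hn k
  rw [mul_assoc]

lemma trl (k : ℕ) (hk : k + 1 < n) (m : ℕ) :
    xN hn k * Ud hn k m * yN hn k = Wd hn (k + 1) m * sN hn (k + 1) := by
  induction m with
  | zero =>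
      show xN hn k * eN hn k * yN hn k = eN hn (k + 1) * sN hn (k + 1)
      rw [xN_mul_eN, if_pos rfl, eN_mul_sN]
      rfl
  | succ m ih =>
      show xN hn k * ((uN hn k + ((m + 1 : ℕ) : ℂ) • (zz hn * eN hn k)) * Ud hn k m)
          * yN hn k = _
      have key : xN hn k * (uN hn k + ((m + 1 : ℕ) : ℂ) • (zz hn * eN hn k))
          = (sN hn (k + 1) + ((m + 1 : ℕ) : ℂ) • (zz hn * eN hn (k + 1))) * xN hn k := by
        rw [mul_add, add_mul, xN_mul_uN, smul_mul_assoc, mul_smul_comm]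
        congr 2
        rw [mul_assoc, eN_mul_xN, if_pos rfl, ← mul_assoc, ← zz_comm (xN hn k),
          mul_assoc, xN_mul_eN, if_pos rfl]
      rw [← mul_assoc, key, mul_assoc, mul_assoc, ← mul_assoc (xN hn k), ih]
      show _ = (sN hn (k + 1) + ((m + 1 : ℕ) : ℂ) • (zz hn * eN hn (k + 1)))
          * Wd hn (k + 1) m * sN hn (k + 1)
      rw [mul_assoc]

lemma nil : ∀ k, k < n → Wd hn k k * sN hn k = 0 := by
  intro k
  induction k with
  | zero =>
      intro _
      show eN hn 0 * sN hn 0 = 0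
      rw [eN_mul_sN]
      rfl
  | succ k ih =>
      intro hk
      rw [← trl k hk (k + 1), ← convWU k (by omega) k, ih (by omega), mul_zero, zero_mul]

lemma sTop : sN hn (n - 1) = zz hn * eN hn (n - 1) := by
  have h := corner_id (hn := hn) (n - 1) (by omega)
  have hy : yN hn (n - 1) = 0 := by unfold yN; rw [dif_neg (by omega)]
  rw [hy, zero_mul, sub_zero] at h
  exact h.symm

lemma fact_lem (m : ℕ) :
    Wd hn (n - 1) m = ((Nat.factorial (m + 1) : ℕ) : ℂ) • (zz hn ^ m * eN hn (n - 1)) := by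
  induction m with
  | zero =>
      show eN hn (n - 1) = _
      simp [Nat.factorial]
  | succ m ih =>
      show (sN hn (n - 1) + ((m + 1 : ℕ) : ℂ) • (zz hn * eN hn (n - 1)))
          * Wd hn (n - 1) m = _
      rw [ih, sTop]
      have hc1 : zz hn * eN hn (n - 1) + ((m + 1 : ℕ) : ℂ) • (zz hn * eN hn (n - 1))
          = ((m + 2 : ℕ) : ℂ) • (zz hn * eN hn (n - 1)) := by
        have hcc : ((m + 2 : ℕ) : ℂ) = 1 + ((m + 1 : ℕ) : ℂ) := by push_cast; ring
        rw [hcc, add_smul, one_smul]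
      have hmul : zz hn * eN hn (n - 1) * (zz hn ^ m * eN hn (n - 1))
          = zz hn ^ (m + 1) * eN hn (n - 1) := by
        rw [mul_assoc (zz hn), ← mul_assoc (eN hn (n - 1)), ← zz_pow_comm m (eN hn (n - 1)),
          mul_assoc (zz hn ^ m), idemN, if_pos rfl, ← mul_assoc, ← pow_succ']
      rw [hc1, smul_mul_assoc, mul_smul_comm, smul_smul, hmul]
      congr 1
      rw [show m + 1 + 1 = m + 2 from rfl, Nat.factorial_succ (m + 1)]
      push_cast
      ring

lemma zz_pow_n_eN : zz hn ^ n * eN hn (n - 1) = 0 := by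
  have h := nil (hn := hn) (n - 1) (by omega)
  rw [fact_lem, sTop, smul_mul_assoc] at h
  have hmul : zz hn ^ (n - 1) * eN hn (n - 1) * (zz hn * eN hn (n - 1))
      = zz hn ^ n * eN hn (n - 1) := by
    rw [mul_assoc (zz hn ^ (n - 1)), ← mul_assoc (eN hn (n - 1)), ← zz_comm (eN hn (n - 1)),
      mul_assoc (zz hn), idemN, if_pos rfl, ← mul_assoc, ← pow_succ]
    have hnn : n - 1 + 1 = n := by omega
    rw [hnn]
  rw [hmul] at h
  have hf : ((Nat.factorial (n - 1 + 1) : ℕ) : ℂ) ≠ 0 := by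
    simp [Nat.factorial_ne_zero]
  exact (smul_eq_zero.mp h).resolve_left hf

/-! ### Loops at a vertex -/

noncomputable def LS {n : ℕ} (hn : 1 ≤ n) (j : ℕ) : Set (CEPA n hn) :=
  {w | ∃ a b : ℕ, w = zz hn ^ a * (sN hn j ^ b * eN hn j)}

noncomputable def US {n : ℕ} (hn : 1 ≤ n) (k : ℕ) : Set (CEPA n hn) :=
  {w | ∃ a b : ℕ, w = zz hn ^ a * (uN hn k ^ b * eN hn k)}

lemma eN_mul_uN' (k : ℕ) : eN hn k * uN hn k = uN hn k := by
  show eN hn k * (yN hn k * xN hn k) = yN hn k * xN hn k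
  rw [← mul_assoc, eN_mul_yN, if_pos rfl]

lemma eN_mul_uNpow (k b : ℕ) :
    eN hn k * (uN hn k ^ b * eN hn k) = uN hn k ^ b * eN hn k := by
  induction b with
  | zero =>
      rw [pow_zero, one_mul, idemN, if_pos rfl]
  | succ b ih =>
      calc eN hn k * (uN hn k ^ (b + 1) * eN hn k)
          = eN hn k * (uN hn k * (uN hn k ^ b * eN hn k)) := by
            rw [pow_succ', mul_assoc]
        _ = (eN hn k * uN hn k) * (uN hn k ^ b * eN hn k) := by rw [mul_assoc]
        _ = uN hn k * (uN hn k ^ b * eN hn k) := by rw [eN_mul_uN']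
        _ = uN hn k ^ (b + 1) * eN hn k := by rw [← mul_assoc, ← pow_succ']

lemma sN_mul_US (k : ℕ) (hk : k < n) :
    ∀ w ∈ Submodule.span ℂ (US hn k), sN hn k * w ∈ Submodule.span ℂ (US hn k) := by
  intro w hw
  induction hw using Submodule.span_induction with
  | mem x hx =>
      obtain ⟨a, b, rfl⟩ := hx
      have step : sN hn k * (zz hn ^ a * (uN hn k ^ b * eN hn k))
          = zz hn ^ a * (uN hn k ^ (b + 1) * eN hn k)
            + zz hn ^ (a + 1) * (uN hn k ^ b * eN hn k) := by
        rw [← mul_assoc, ← zz_pow_comm a (sN hn k), mul_assoc, sN_eq k hk, add_mul]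
        rw [mul_add]
        congr 1
        · rw [← mul_assoc (uN hn k) (uN hn k ^ b) (eN hn k), ← pow_succ']
        · rw [mul_assoc (zz hn) (eN hn k), eN_mul_uNpow, ← mul_assoc, ← pow_succ]
      rw [step]
      exact add_mem (Submodule.subset_span ⟨a, b + 1, rfl⟩)
        (Submodule.subset_span ⟨a + 1, b, rfl⟩)
  | zero => rw [mul_zero]; exact zero_mem _
  | add x y hx hy ihx ihy => rw [mul_add]; exact add_mem ihx ihy
  | smul c x hx ih => rw [mul_smul_comm]; exact Submodule.smul_mem _ c ih

lemma sNpow_mem (k : ℕ) (hk : k < n) (b : ℕ) :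
    sN hn k ^ b * eN hn k ∈ Submodule.span ℂ (US hn k) := by
  induction b with
  | zero =>
      apply Submodule.subset_span
      exact ⟨0, 0, by simp⟩
  | succ b ih =>
      rw [pow_succ', mul_assoc]
      exact sN_mul_US k hk _ ih

lemma xN_mul_uNpow (k b : ℕ) :
    xN hn k * uN hn k ^ b = sN hn (k + 1) ^ b * xN hn k := by
  induction b with
  | zero => rw [pow_zero, pow_zero, one_mul, mul_one]
  | succ b ih =>
      rw [pow_succ', ← mul_assoc, xN_mul_uN, mul_assoc, ih, ← mul_assoc, ← pow_succ']

lemma sNpow_succ_eN (j b : ℕ) : sN hn j ^ (b + 1) * eN hn j = sN hn j ^ (b + 1) := by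
  rw [pow_succ, mul_assoc, sN_mul_eN]

lemma xuy (k a b : ℕ) :
    xN hn k * ((zz hn ^ a * (uN hn k ^ b * eN hn k)) * yN hn k)
      = zz hn ^ a * (sN hn (k + 1) ^ (b + 1) * eN hn (k + 1)) := by
  rw [sNpow_succ_eN]
  rw [mul_assoc (zz hn ^ a), ← mul_assoc, ← zz_pow_comm a (xN hn k), mul_assoc]
  congr 1
  rw [← mul_assoc, ← mul_assoc, xN_mul_uNpow, mul_assoc (sN hn (k + 1) ^ b), xN_mul_eN,
    if_pos rfl, mul_assoc]
  have hxy : xN hn k * yN hn k = sN hn (k + 1) := rfl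
  rw [hxy, ← pow_succ]

lemma conj_mem (k a : ℕ) :
    ∀ v ∈ Submodule.span ℂ (US hn k),
      xN hn k * ((zz hn ^ a * v) * yN hn k) ∈ Submodule.span ℂ (LS hn (k + 1)) := by
  intro v hv
  induction hv using Submodule.span_induction with
  | mem x hx =>
      obtain ⟨c, b, rfl⟩ := hx
      have hcomb : zz hn ^ a * (zz hn ^ c * (uN hn k ^ b * eN hn k))
          = zz hn ^ (a + c) * (uN hn k ^ b * eN hn k) := by
        rw [← mul_assoc, ← pow_add]
      rw [hcomb, xuy]
      exact Submodule.subset_span ⟨a + c, b + 1, rfl⟩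
  | zero => rw [mul_zero, zero_mul, mul_zero]; exact zero_mem _
  | add x y hx hy ihx ihy =>
      rw [mul_add, add_mul, mul_add]; exact add_mem ihx ihy
  | smul c x hx ih =>
      rw [mul_smul_comm, smul_mul_assoc, mul_smul_comm]
      exact Submodule.smul_mem _ c ih

lemma conj_mem' (k : ℕ) (hk : k < n) :
    ∀ w ∈ Submodule.span ℂ (LS hn k),
      xN hn k * (w * yN hn k) ∈ Submodule.span ℂ (LS hn (k + 1)) := by
  intro w hw
  induction hw using Submodule.span_induction with
  | mem x hx =>
      obtain ⟨a, b, rfl⟩ := hx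
      exact conj_mem k a _ (sNpow_mem k hk b)
  | zero => rw [zero_mul, mul_zero]; exact zero_mem _
  | add x y hx hy ihx ihy =>
      rw [add_mul, mul_add]; exact add_mem ihx ihy
  | smul c x hx ih =>
      rw [smul_mul_assoc, mul_smul_comm]
      exact Submodule.smul_mem _ c ih

lemma loop_mem (l t : ℕ) (h : l + t < n) :
    Xp hn l t * Yp hn l t ∈ Submodule.span ℂ (LS hn (l + t)) := by
  induction t with
  | zero =>
      show eN hn l * eN hn l ∈ _
      rw [idemN, if_pos rfl]
      apply Submodule.subset_span
      refine ⟨0, 0, ?_⟩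
      simp
  | succ t ih =>
      rw [Xp_succ, Yp_succ, mul_assoc, ← mul_assoc (Xp hn l t)]
      exact conj_mem' (l + t) (by omega) _ (ih (by omega))

/-! ### The top corner -/

noncomputable def SK {n : ℕ} (hn : 1 ≤ n) : Submodule ℂ (CEPA n hn) :=
  Submodule.span ℂ (Set.range fun j : Fin n => zz hn ^ j.1 * eN hn (n - 1))

lemma zpow_eN_mem (c : ℕ) : zz hn ^ c * eN hn (n - 1) ∈ SK hn := by
  by_cases hc : c < n
  · exact Submodule.subset_span ⟨⟨c, hc⟩, rfl⟩
  · have hsplit : zz hn ^ c * eN hn (n - 1)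
        = zz hn ^ (c - n) * (zz hn ^ n * eN hn (n - 1)) := by
      rw [← mul_assoc, ← pow_add]
      congr 2
      omega
    rw [hsplit, zz_pow_n_eN, mul_zero]
    exact zero_mem _

lemma sTop_pow (b : ℕ) :
    sN hn (n - 1) ^ b * eN hn (n - 1) = zz hn ^ b * eN hn (n - 1) := by
  induction b with
  | zero => rw [pow_zero, pow_zero]
  | succ b ih =>
      rw [pow_succ', mul_assoc, ih, sTop, mul_assoc (zz hn), ← mul_assoc (eN hn (n - 1)),
        ← zz_pow_comm b (eN hn (n - 1)), mul_assoc (zz hn ^ b), idemN, if_pos rfl,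
        ← mul_assoc, ← pow_succ']

lemma LS_top_sub : ∀ w ∈ Submodule.span ℂ (LS hn (n - 1)), w ∈ SK hn := by
  intro w hw
  induction hw using Submodule.span_induction with
  | mem x hx =>
      obtain ⟨a, b, rfl⟩ := hx
      rw [sTop_pow, ← mul_assoc, ← pow_add]
      exact zpow_eN_mem (a + b)
  | zero => exact zero_mem _
  | add x y hx hy ihx ihy => exact add_mem ihx ihy
  | smul c x hx ih => exact Submodule.smul_mem _ c ih

/-! ### Spanning the corner -/

noncomputable def NF {n : ℕ} (hn : 1 ≤ n) (l tx ty m : ℕ) : CEPA n hn :=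
  zz hn ^ m * Xp hn l tx * Yp hn l ty

noncomputable def MSet {n : ℕ} (hn : 1 ≤ n) : Set (CEPA n hn) :=
  {w | ∃ l tx ty m, l + tx < n ∧ l + ty = n - 1 ∧ w = NF hn l tx ty m}

noncomputable def MM {n : ℕ} (hn : 1 ≤ n) : Submodule ℂ (CEPA n hn) :=
  Submodule.span ℂ (MSet hn)

lemma pr_v (p : Fin n) : pr (hn := hn) (ι ℂ (PGen.v p)) = eN hn p.1 := by
  unfold eN
  rw [dif_pos p.2]

lemma pr_x (p : Fin (n - 1)) : pr (hn := hn) (ι ℂ (PGen.x p)) = xN hn p.1 := by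
  unfold xN
  rw [dif_pos p.2]

lemma pr_y (p : Fin (n - 1)) : pr (hn := hn) (ι ℂ (PGen.y p)) = yN hn p.1 := by
  unfold yN
  rw [dif_pos p.2]

lemma eN_mul_NF (q l tx ty m : ℕ) :
    eN hn q * NF hn l tx ty m = if q = l + tx then NF hn l tx ty m else 0 := by
  unfold NF
  rw [← mul_assoc, ← mul_assoc, ← zz_pow_comm m (eN hn q), mul_assoc (zz hn ^ m),
    eN_mul_Xp, mul_ite, mul_zero, ite_mul, zero_mul]

lemma xN_mul_Xp (q l t : ℕ) :
    xN hn q * Xp hn l t = if q = l + t then Xp hn l (t + 1) else 0 := by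
  have habs : eN hn (l + t) * Xp hn l t = Xp hn l t := by
    rw [eN_mul_Xp, if_pos rfl]
  rw [← habs, ← mul_assoc, xN_mul_eN]
  by_cases hq : q = l + t
  · rw [if_pos hq.symm, if_pos hq, hq, ← Xp_succ]
  · rw [if_neg (fun hc => hq hc.symm), if_neg hq, zero_mul]

lemma xN_mul_NF (p l tx ty m : ℕ) :
    xN hn p * NF hn l tx ty m = if p = l + tx then NF hn l (tx + 1) ty m else 0 := by
  unfold NF
  rw [← mul_assoc, ← mul_assoc, ← zz_pow_comm m (xN hn p), mul_assoc (zz hn ^ m),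
    xN_mul_Xp, mul_ite, mul_zero, ite_mul, zero_mul]

lemma gen_mul_NF (g : PGen n) (l tx ty m : ℕ) (h1 : l + tx < n) (h2 : l + ty = n - 1) :
    pr (hn := hn) (ι ℂ g) * NF hn l tx ty m ∈ MM hn := by
  cases g with
  | v p =>
      rw [pr_v, eN_mul_NF]
      split
      · exact Submodule.subset_span ⟨l, tx, ty, m, h1, h2, rfl⟩
      · exact zero_mem _
  | z =>
      show zz hn * NF hn l tx ty m ∈ MM hn
      have hz : zz hn * NF hn l tx ty m = NF hn l tx ty (m + 1) := by
        unfold NF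
        rw [← mul_assoc, ← mul_assoc, ← pow_succ']
      rw [hz]
      exact Submodule.subset_span ⟨l, tx, ty, m + 1, h1, h2, rfl⟩
  | x p =>
      rw [pr_x, xN_mul_NF]
      split
      · next hp =>
          exact Submodule.subset_span ⟨l, tx + 1, ty, m,
            by have := p.2; omega, h2, rfl⟩
      · exact zero_mem _
  | y p =>
      rw [pr_y]
      have hmove : yN hn p.1 * NF hn l tx ty m
          = zz hn ^ m * (yN hn p.1 * Xp hn l tx) * Yp hn l ty := by
        unfold NF
        rw [← mul_assoc, ← mul_assoc, ← zz_pow_comm m (yN hn p.1), mul_assoc (zz hn ^ m)]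
      rw [hmove]
      match tx, h1 with
      | 0, h1 =>
          have hy0 : yN hn p.1 * Xp hn l 0 = if l = p.1 + 1 then yN hn p.1 else 0 := by
            show yN hn p.1 * eN hn l = _
            rw [yN_mul_eN]
          rw [hy0]
          by_cases hl : l = p.1 + 1
          · rw [if_pos hl]
            subst hl
            have hyp : yN hn p.1 * Yp hn (p.1 + 1) ty = Yp hn p.1 (ty + 1) :=
              yN_mul_Yp p.1 ty
            have heq : zz hn ^ m * yN hn p.1 * Yp hn (p.1 + 1) ty
                = NF hn p.1 0 (ty + 1) m := by
              unfold NF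
              rw [mul_assoc, hyp, mul_assoc]
              congr 1
              show Yp hn p.1 (ty + 1) = eN hn p.1 * Yp hn p.1 (ty + 1)
              rw [eN_mul_Yp, if_pos rfl]
            rw [heq]
            exact Submodule.subset_span ⟨p.1, 0, ty + 1, m, by omega, by omega, rfl⟩
          · rw [if_neg hl, mul_zero, zero_mul]
            exact zero_mem _
      | (t + 1), h1 =>
          by_cases hp : p.1 = l + t
          · rw [hp]
            rw [peel l t (by omega)]
            rw [mul_add, add_mul]
            apply add_mem
            · have he1 : zz hn ^ m * ((-((t : ℂ) + 1)) • (zz hn * Xp hn l t)) * Yp hn l ty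
                  = (-((t : ℂ) + 1)) • NF hn l t ty (m + 1) := by
                rw [mul_smul_comm, smul_mul_assoc]
                congr 1
                unfold NF
                rw [← mul_assoc, ← pow_succ]
              rw [he1]
              exact Submodule.smul_mem _ _
                (Submodule.subset_span ⟨l, t, ty, m + 1, by omega, h2, rfl⟩)
            · match l, h2 with
              | 0, h2 =>
                  have hs0 : sN hn 0 = (0 : CEPA n hn) := rfl
                  rw [hs0, mul_zero, mul_zero, zero_mul]
                  exact zero_mem _
              | (l' + 1), h2 =>
                  have hterm : zz hn ^ m * (Xp hn (l' + 1) t * sN hn (l' + 1))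
                        * Yp hn (l' + 1) ty
                      = NF hn l' (t + 1) (ty + 1) m := by
                    have hsx : Xp hn (l' + 1) t * sN hn (l' + 1)
                        = Xp hn l' (t + 1) * yN hn l' := by
                      show Xp hn (l' + 1) t * (xN hn l' * yN hn l') = _
                      rw [← mul_assoc, Xp_mul_xN]
                    unfold NF
                    rw [hsx, mul_assoc, mul_assoc, yN_mul_Yp, ← mul_assoc]
                  rw [hterm]
                  exact Submodule.subset_span ⟨l', t + 1, ty + 1, m, by omega, by omega, rfl⟩
          · have hy1 : yN hn p.1 * Xp hn l (t + 1) = 0 := by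
              have habs : eN hn (l + (t + 1)) * Xp hn l (t + 1) = Xp hn l (t + 1) := by
                rw [eN_mul_Xp, if_pos rfl]
              rw [← habs, ← mul_assoc, yN_mul_eN, if_neg (by omega), zero_mul]
            rw [hy1, mul_zero, zero_mul]
            exact zero_mem _

lemma mul_MM_mem (a : CEPA n hn) : ∀ w ∈ MM hn, a * w ∈ MM hn := by
  obtain ⟨wa, rfl⟩ := RingQuot.mkAlgHom_surjective ℂ (PRel n hn) a
  show ∀ w ∈ MM hn, pr (hn := hn) wa * w ∈ MM hn
  induction wa using FreeAlgebra.induction with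
  | grade0 r =>
      intro w hw
      rw [AlgHom.commutes, ← Algebra.smul_def]
      exact Submodule.smul_mem _ r hw
  | grade1 g =>
      intro w hw
      induction hw using Submodule.span_induction with
      | mem x hx =>
          obtain ⟨l, tx, ty, m, h1, h2, rfl⟩ := hx
          exact gen_mul_NF g l tx ty m h1 h2
      | zero => rw [mul_zero]; exact zero_mem _
      | add x y hx hy ihx ihy => rw [mul_add]; exact add_mem ihx ihy
      | smul c x hx ih => rw [mul_smul_comm]; exact Submodule.smul_mem _ c ih
  | mul u v hu hv =>
      intro w hw
      rw [map_mul, mul_assoc]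
      exact hu _ (hv _ hw)
  | add u v hu hv =>
      intro w hw
      rw [map_add, add_mul]
      exact add_mem (hu w hw) (hv w hw)

lemma eN_top_mem : eN hn (n - 1) ∈ MM hn := by
  have heq : NF hn (n - 1) 0 0 0 = eN hn (n - 1) := by
    unfold NF
    show zz hn ^ 0 * eN hn (n - 1) * eN hn (n - 1) = _
    rw [pow_zero, one_mul, idemN, if_pos rfl]
  rw [← heq]
  exact Submodule.subset_span ⟨n - 1, 0, 0, 0, by omega, by omega, rfl⟩

lemma zpow_span_SK (m : ℕ) :
    ∀ v ∈ Submodule.span ℂ (LS hn (n - 1)), zz hn ^ m * v ∈ SK hn := by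
  intro v hv
  induction hv using Submodule.span_induction with
  | mem x hx =>
      obtain ⟨a, b, rfl⟩ := hx
      rw [sTop_pow, ← mul_assoc, ← mul_assoc, ← pow_add, ← pow_add]
      exact zpow_eN_mem (m + a + b)
  | zero => rw [mul_zero]; exact zero_mem _
  | add x y hx hy ihx ihy => rw [mul_add]; exact add_mem ihx ihy
  | smul c x hx ih => rw [mul_smul_comm]; exact Submodule.smul_mem _ c ih

lemma corner_mem (a : CEPA n hn) : eN hn (n - 1) * (a * eN hn (n - 1)) ∈ SK hn := by
  have h1 : a * eN hn (n - 1) ∈ MM hn := mul_MM_mem a _ eN_top_mem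
  revert h1
  generalize a * eN hn (n - 1) = w
  intro h1
  induction h1 using Submodule.span_induction with
  | mem x hx =>
      obtain ⟨l, tx, ty, m, hc1, hc2, rfl⟩ := hx
      rw [eN_mul_NF]
      by_cases hq : n - 1 = l + tx
      · rw [if_pos hq]
        have hty : tx = ty := by omega
        subst hty
        have hNF : NF hn l tx tx m = zz hn ^ m * (Xp hn l tx * Yp hn l tx) := by
          unfold NF
          rw [mul_assoc]
        rw [hNF]
        have hloop := loop_mem (hn := hn) l tx (by omega)
        rw [← hq] at hloop
        exact zpow_span_SK m _ hloop
      · rw [if_neg hq]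
        exact zero_mem _
  | zero => rw [mul_zero]; exact zero_mem _
  | add x y hx hy ihx ihy => rw [mul_add]; exact add_mem ihx ihy
  | smul c x hx ih => rw [mul_smul_comm]; exact Submodule.smul_mem _ c ih

/-! ### Final assembly helpers -/

lemma gen_prod (a b : ℕ) :
    (zz hn ^ a * eN hn (n - 1)) * (zz hn ^ b * eN hn (n - 1))
      = zz hn ^ (a + b) * eN hn (n - 1) := by
  rw [mul_assoc, ← mul_assoc (eN hn (n - 1)), ← zz_pow_comm b (eN hn (n - 1)),
    mul_assoc (zz hn ^ b), idemN, if_pos rfl, ← mul_assoc, ← pow_add]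

lemma SK_comm : ∀ u ∈ SK hn, ∀ w ∈ SK hn, u * w = w * u := by
  intro u hu
  induction hu using Submodule.span_induction with
  | mem x hx =>
      intro w hw
      induction hw using Submodule.span_induction with
      | mem y hy =>
          obtain ⟨a, rfl⟩ := hx
          obtain ⟨b, rfl⟩ := hy
          rw [gen_prod, gen_prod, Nat.add_comm]
      | zero => rw [mul_zero, zero_mul]
      | add y y' hy hy' ihy ihy' => rw [mul_add, add_mul, ihy, ihy']
      | smul c y hy ihy => rw [mul_smul_comm, smul_mul_assoc, ihy]
  | zero => intro w hw; rw [zero_mul, mul_zero]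
  | add x y hx hy ihx ihy => intro w hw; rw [add_mul, mul_add, ihx w hw, ihy w hw]
  | smul c x hx ihx => intro w hw; rw [smul_mul_assoc, mul_smul_comm, ihx w hw]

lemma corner_fix (j : ℕ) :
    eN hn (n - 1) * (zz hn ^ j * eN hn (n - 1)) = zz hn ^ j * eN hn (n - 1) := by
  rw [← mul_assoc, ← zz_pow_comm j (eN hn (n - 1)), mul_assoc, idemN, if_pos rfl]

lemma aeval_comm (p : Polynomial ℂ) (b : CEPA n hn) :
    Polynomial.aeval (zz hn) p * b = b * Polynomial.aeval (zz hn) p := by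
  induction p using Polynomial.induction_on' with
  | add p q hp hq => rw [map_add, add_mul, mul_add, hp, hq]
  | monomial k c =>
      rw [Polynomial.aeval_monomial, mul_assoc, zz_pow_comm k b, ← mul_assoc,
        Algebra.commutes c b, mul_assoc]

lemma psi_mul (p q : Polynomial ℂ) :
    Polynomial.aeval (zz hn) (p * q) * eN hn (n - 1)
      = (Polynomial.aeval (zz hn) p * eN hn (n - 1))
          * (Polynomial.aeval (zz hn) q * eN hn (n - 1)) := by
  have habs : eN hn (n - 1) * (Polynomial.aeval (zz hn) q * eN hn (n - 1))
      = Polynomial.aeval (zz hn) q * eN hn (n - 1) := by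
    rw [← mul_assoc, ← aeval_comm, mul_assoc, idemN, if_pos rfl]
  rw [map_mul, mul_assoc, mul_assoc, habs]

lemma aeval_mul_eN_mem (p : Polynomial ℂ) :
    Polynomial.aeval (zz hn) p * eN hn (n - 1) ∈ SK hn := by
  rw [Polynomial.aeval_eq_sum_range (zz hn), Finset.sum_mul]
  apply Submodule.sum_mem
  intro i _
  rw [smul_mul_assoc]
  exact Submodule.smul_mem _ _ (zpow_eN_mem i)

lemma psi_coeffs (r : Polynomial ℂ) (hr : r.natDegree < n) :
    Polynomial.aeval (zz hn) r * eN hn (n - 1)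
      = ∑ j : Fin n, r.coeff j.1 • (zz hn ^ j.1 * eN hn (n - 1)) := by
  rw [Polynomial.aeval_eq_sum_range' hr, Finset.sum_mul,
    ← Fin.sum_univ_eq_sum_range (fun i => r.coeff i • zz hn ^ i * eN hn (n - 1)) n]
  apply Finset.sum_congr rfl
  intro j _
  rw [smul_mul_assoc]

end CEPAux


namespace CEPRep

open FreeAlgebra CEPAux

abbrev VR (n : ℕ) : Type := Fin n → ℕ → ℂ

noncomputable def Erep (n : ℕ) (p : Fin n) : Module.End ℂ (VR n) :=
  { toFun := fun v i m => if i = p then v i m else 0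
    map_add' := by intro u v; funext i m; by_cases h : i = p <;> simp [h]
    map_smul' := by intro c v; funext i m; by_cases h : i = p <;> simp [h] }

noncomputable def Zrep (n : ℕ) : Module.End ℂ (VR n) :=
  { toFun := fun v i m => if 1 ≤ m ∧ m ≤ i.1 then v i (m - 1) else 0
    map_add' := by intro u v; funext i m; by_cases h : 1 ≤ m ∧ m ≤ i.1 <;> simp [h]
    map_smul' := by intro c v; funext i m; by_cases h : 1 ≤ m ∧ m ≤ i.1 <;> simp [h] }

noncomputable def Xrep (n : ℕ) (k : Fin (n - 1)) : Module.End ℂ (VR n) :=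
  { toFun := fun v i m => if i.1 = k.1 + 1 ∧ 1 ≤ m ∧ m ≤ k.1 + 1
      then ((n - 1 - k.1 : ℕ) : ℂ) * v ⟨k.1, by omega⟩ (m - 1) else 0
    map_add' := by
      intro u v; funext i m
      by_cases h : i.1 = k.1 + 1 ∧ 1 ≤ m ∧ m ≤ k.1 + 1 <;> simp [h, mul_add]
    map_smul' := by
      intro c v; funext i m
      by_cases h : i.1 = k.1 + 1 ∧ 1 ≤ m ∧ m ≤ k.1 + 1 <;> simp [h] <;> ring }

noncomputable def Yrep (n : ℕ) (k : Fin (n - 1)) : Module.End ℂ (VR n) :=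
  { toFun := fun v i m => if i.1 = k.1 ∧ m ≤ k.1
      then v ⟨k.1 + 1, by omega⟩ m else 0
    map_add' := by
      intro u v; funext i m
      by_cases h : i.1 = k.1 ∧ m ≤ k.1 <;> simp [h]
    map_smul' := by
      intro c v; funext i m
      by_cases h : i.1 = k.1 ∧ m ≤ k.1 <;> simp [h] }

@[simp] lemma Erep_apply (n : ℕ) (p : Fin n) (v : VR n) (i : Fin n) (m : ℕ) :
    Erep n p v i m = if i = p then v i m else 0 := rfl

@[simp] lemma Zrep_apply (n : ℕ) (v : VR n) (i : Fin n) (m : ℕ) :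
    Zrep n v i m = if 1 ≤ m ∧ m ≤ i.1 then v i (m - 1) else 0 := rfl

@[simp] lemma Xrep_apply (n : ℕ) (k : Fin (n - 1)) (v : VR n) (i : Fin n) (m : ℕ) :
    Xrep n k v i m = if i.1 = k.1 + 1 ∧ 1 ≤ m ∧ m ≤ k.1 + 1
      then ((n - 1 - k.1 : ℕ) : ℂ) * v ⟨k.1, by omega⟩ (m - 1) else 0 := rfl

@[simp] lemma Yrep_apply (n : ℕ) (k : Fin (n - 1)) (v : VR n) (i : Fin n) (m : ℕ) :
    Yrep n k v i m = if i.1 = k.1 ∧ m ≤ k.1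
      then v ⟨k.1 + 1, by omega⟩ m else 0 := rfl

noncomputable def grep (n : ℕ) : PGen n → Module.End ℂ (VR n)
  | .v p => Erep n p
  | .x k => Xrep n k
  | .y k => Yrep n k
  | .z => Zrep n

@[simp] lemma grep_v (n : ℕ) (p : Fin n) : grep n (PGen.v p) = Erep n p := rfl
@[simp] lemma grep_x (n : ℕ) (k : Fin (n - 1)) : grep n (PGen.x k) = Xrep n k := rfl
@[simp] lemma grep_y (n : ℕ) (k : Fin (n - 1)) : grep n (PGen.y k) = Yrep n k := rfl
@[simp] lemma grep_z (n : ℕ) : grep n (PGen.z) = Zrep n := rfl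

noncomputable def Φ0 (n : ℕ) : FreeAlgebra ℂ (PGen n) →ₐ[ℂ] Module.End ℂ (VR n) :=
  FreeAlgebra.lift ℂ (grep n)

lemma Φ0_ι {n : ℕ} (g : PGen n) : Φ0 n (ι ℂ g) = grep n g := by
  unfold Φ0
  rw [FreeAlgebra.lift_ι_apply]

lemma rep_rel {n : ℕ} {hn : 1 ≤ n} : ∀ ⦃a b : FreeAlgebra ℂ (PGen n)⦄,
    PRel n hn a b → Φ0 n a = Φ0 n b := by
  intro a b hr
  cases hr with
  | idem i j =>
      rw [map_mul, apply_ite (Φ0 n), map_zero]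
      simp only [Φ0_ι, grep_v]
      refine LinearMap.ext fun v => funext fun a => funext fun m => ?_
      by_cases hij : i = j
      · subst hij
        by_cases ha : a = i <;>
          simp [Module.End.mul_apply, ha]
      · rw [if_neg hij]
        by_cases ha : a = i <;> by_cases ha' : a = j <;>
          simp_all [Module.End.mul_apply]
  | total =>
      rw [map_sum, map_one]
      simp only [Φ0_ι, grep_v]
      refine LinearMap.ext fun v => funext fun a => funext fun m => ?_
      rw [LinearMap.sum_apply, Finset.sum_apply, Finset.sum_apply]
      simp only [Erep_apply]
      rw [Finset.sum_ite_eq Finset.univ a (fun _ => v a m), if_pos (Finset.mem_univ a)]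
      rfl
  | central g =>
      rw [map_mul, map_mul]
      simp only [Φ0_ι, grep_z]
      cases g with
      | v p =>
          simp only [grep_v]
          refine LinearMap.ext fun v => funext fun a => funext fun m => ?_
          simp only [Module.End.mul_apply, Zrep_apply, Erep_apply]
          by_cases ha : a = p <;> by_cases hm : 1 ≤ m ∧ m ≤ a.1 <;> simp [ha, hm]
      | x k =>
          simp only [grep_x]
          refine LinearMap.ext fun v => funext fun a => funext fun m => ?_
          simp only [Module.End.mul_apply, Zrep_apply, Xrep_apply]
          split_ifs <;> first | rfl | (exfalso; omega) | (congr 1 <;> omega) | simp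
      | y k =>
          simp only [grep_y]
          refine LinearMap.ext fun v => funext fun a => funext fun m => ?_
          simp only [Module.End.mul_apply, Zrep_apply, Yrep_apply]
          split_ifs <;> first | rfl | (exfalso; omega) | (congr 1 <;> omega) | simp
      | z => rfl
  | xpath k =>
      rw [map_mul, map_mul]
      simp only [Φ0_ι, grep_v, grep_x]
      refine LinearMap.ext fun v => funext fun a => funext fun m => ?_
      simp only [Module.End.mul_apply, Erep_apply, Xrep_apply, Fin.ext_iff]
      split_ifs <;> first | rfl | (exfalso; omega) | (congr 1 <;> omega) | simp
  | ypath k =>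
      rw [map_mul, map_mul]
      simp only [Φ0_ι, grep_v, grep_y]
      refine LinearMap.ext fun v => funext fun a => funext fun m => ?_
      simp only [Module.End.mul_apply, Erep_apply, Yrep_apply, Fin.ext_iff]
      split_ifs <;> first | rfl | (exfalso; omega) | (congr 1 <;> omega) | simp
  | preproj =>
      rw [map_sum]
      simp only [map_sub, map_mul, Φ0_ι, grep_x, grep_y, grep_z]
      refine LinearMap.ext fun v => funext fun a => funext fun m => ?_
      rw [LinearMap.sum_apply, Finset.sum_apply, Finset.sum_apply]
      have hterm : ∀ k : Fin (n - 1),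
          ((Xrep n k * Yrep n k - Yrep n k * Xrep n k) v) a m
          = (if a.1 = k.1 + 1 ∧ 1 ≤ m ∧ m ≤ k.1 + 1
              then ((n - 1 - k.1 : ℕ) : ℂ) * v a (m - 1) else 0)
            - (if a.1 = k.1 ∧ 1 ≤ m ∧ m ≤ k.1
              then ((n - 1 - k.1 : ℕ) : ℂ) * v a (m - 1) else 0) := by
        intro k
        simp only [LinearMap.sub_apply, Pi.sub_apply, Module.End.mul_apply, Xrep_apply,
          Yrep_apply]
        congr 1
        · by_cases h : a.1 = k.1 + 1 ∧ 1 ≤ m ∧ m ≤ k.1 + 1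
          · rw [if_pos h, if_pos h, if_pos ⟨by trivial, by omega⟩]
            have ha : a = ⟨k.1 + 1, by omega⟩ := Fin.ext h.1
            rw [ha]
          · rw [if_neg h, if_neg h]
        · by_cases h : a.1 = k.1 ∧ m ≤ k.1
          · rw [if_pos h]
            by_cases hm : 1 ≤ m
            · rw [if_pos ⟨by trivial, hm, by omega⟩, if_pos ⟨h.1, hm, h.2⟩]
              have ha : a = ⟨k.1, by omega⟩ := Fin.ext h.1
              rw [ha]
            · rw [if_neg (fun hc => hm hc.2.1), if_neg (fun hc => hm hc.2.1)]
          · rw [if_neg h, if_neg (by omega)]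
      rw [Finset.sum_congr rfl (fun k _ => hterm k), Finset.sum_sub_distrib]
      show _ = Zrep n v a m
      rw [Zrep_apply]
      by_cases hm : 1 ≤ m ∧ m ≤ a.1
      · rw [if_pos hm]
        have hk0 : a.1 - 1 < n - 1 := by have := a.2; omega
        rw [Finset.sum_eq_single (⟨a.1 - 1, hk0⟩ : Fin (n - 1))]
        rotate_left
        · intro t _ ht
          exact if_neg (fun hc => ht (Fin.ext (show (t.1 : ℕ) = a.1 - 1 by omega)))
        · intro hmem; exact absurd (Finset.mem_univ _) hmem
        rw [if_pos ⟨show a.1 = a.1 - 1 + 1 by omega, hm.1, show m ≤ a.1 - 1 + 1 by omega⟩]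
        by_cases hy : a.1 < n - 1
        · rw [Finset.sum_eq_single (⟨a.1, hy⟩ : Fin (n - 1))]
          rotate_left
          · intro t _ ht
            exact if_neg (fun hc => ht (Fin.ext (show (t.1 : ℕ) = a.1 by omega)))
          · intro hmem; exact absurd (Finset.mem_univ _) hmem
          rw [if_pos ⟨show a.1 = a.1 by rfl, hm.1, show m ≤ a.1 from hm.2⟩]
          have hsc : n - 1 - (a.1 - 1) = (n - 1 - a.1) + 1 := by omega
          rw [hsc]
          push_cast
          ring
        · rw [Finset.sum_eq_zero (fun t _ => if_neg (by have := t.2; omega))]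
          have hsc : n - 1 - (a.1 - 1) = 1 := by have := a.2; omega
          rw [hsc]
          simp
      · rw [if_neg hm]
        rw [Finset.sum_eq_zero (fun t _ => if_neg (by omega)),
          Finset.sum_eq_zero (fun t _ => if_neg (by omega))]
        simp

noncomputable def Φrep {n : ℕ} (hn : 1 ≤ n) : CEPA n hn →ₐ[ℂ] Module.End ℂ (VR n) :=
  RingQuot.liftAlgHom ℂ ⟨Φ0 n, rep_rel (hn := hn)⟩

lemma Φrep_pr {n : ℕ} {hn : 1 ≤ n} (w : FreeAlgebra ℂ (PGen n)) :
    Φrep hn (pr (hn := hn) w) = Φ0 n w := by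
  unfold Φrep pr
  rw [RingQuot.liftAlgHom_mkAlgHom_apply]

noncomputable def dvec (n : ℕ) (c : ℕ) : VR n := fun i m =>
  if i.1 = n - 1 ∧ m = c then 1 else 0

lemma Erep_dvec {n : ℕ} (hpf : n - 1 < n) (c : ℕ) :
    Erep n ⟨n - 1, hpf⟩ (dvec n c) = dvec n c := by
  funext i m
  rw [Erep_apply]
  by_cases hi : i = ⟨n - 1, hpf⟩
  · rw [if_pos hi]
  · rw [if_neg hi]
    symm
    show (if i.1 = n - 1 ∧ m = c then (1 : ℂ) else 0) = 0
    exact if_neg (fun hc => hi (Fin.ext hc.1))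

lemma Zrep_dvec {n : ℕ} (c : ℕ) (hc : c + 1 ≤ n - 1) :
    Zrep n (dvec n c) = dvec n (c + 1) := by
  funext i m
  rw [Zrep_apply]
  show _ = (if i.1 = n - 1 ∧ m = c + 1 then (1 : ℂ) else 0)
  by_cases h : i.1 = n - 1 ∧ m = c + 1
  · rw [if_pos (show 1 ≤ m ∧ m ≤ i.1 by omega), if_pos h]
    show (if i.1 = n - 1 ∧ m - 1 = c then (1 : ℂ) else 0) = 1
    rw [if_pos (by omega)]
  · rw [if_neg h]
    by_cases h1 : 1 ≤ m ∧ m ≤ i.1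
    · rw [if_pos h1]
      show (if i.1 = n - 1 ∧ m - 1 = c then (1 : ℂ) else 0) = 0
      rw [if_neg (by omega)]
    · rw [if_neg h1]

lemma rep_fam {n : ℕ} (hn : 1 ≤ n) (c : ℕ) (hc : c < n) :
    Φrep hn (zz hn ^ c * eN hn (n - 1)) (dvec n 0) = dvec n c := by
  have hE : Φrep hn (eN hn (n - 1)) = Erep n ⟨n - 1, by omega⟩ := by
    unfold eN
    rw [dif_pos (by omega : n - 1 < n), Φrep_pr, Φ0_ι, grep_v]
  have hZ : Φrep hn (zz hn) = Zrep n := by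
    unfold zz
    rw [Φrep_pr, Φ0_ι, grep_z]
  rw [map_mul, map_pow, hE, hZ, Module.End.mul_apply, Erep_dvec]
  have key : ∀ d, d ≤ n - 1 → (Zrep n ^ d) (dvec n 0) = dvec n d := by
    intro d
    induction d with
    | zero => intro _; rw [pow_zero, Module.End.one_apply]
    | succ d ih =>
        intro hd
        rw [pow_succ', Module.End.mul_apply, ih (by omega), Zrep_dvec d (by omega)]
  exact key c (by omega)

lemma dvec_indep {n : ℕ} (hn : 1 ≤ n) :
    LinearIndependent ℂ (fun j : Fin n => dvec n j.1) := by
  rw [Fintype.linearIndependent_iff]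
  intro g hg j
  have hpf : n - 1 < n := by omega
  have hval : ∀ i : Fin n,
      (g i • dvec n i.1) (⟨n - 1, hpf⟩ : Fin n) j.1 = if i = j then g i else 0 := by
    intro i
    show g i * (if ((⟨n - 1, hpf⟩ : Fin n)).1 = n - 1 ∧ (j.1 : ℕ) = i.1
        then (1 : ℂ) else 0) = _
    by_cases hij : i = j
    · subst hij
      rw [if_pos ⟨rfl, rfl⟩, mul_one, if_pos rfl]
    · rw [if_neg (fun hc => hij (Fin.ext hc.2.symm)), mul_zero, if_neg hij]
  have h := congrFun (congrFun hg ⟨n - 1, hpf⟩) j.1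
  rw [Finset.sum_apply, Finset.sum_apply,
    Finset.sum_congr rfl (fun i _ => hval i),
    Finset.sum_ite_eq' Finset.univ j g, if_pos (Finset.mem_univ j)] at h
  simpa using h

noncomputable def evL {n : ℕ} (hn : 1 ≤ n) : CEPA n hn →ₗ[ℂ] VR n :=
  { toFun := fun a => Φrep hn a (dvec n 0)
    map_add' := fun x y => by
      show Φrep hn (x + y) (dvec n 0) = Φrep hn x (dvec n 0) + Φrep hn y (dvec n 0)
      rw [map_add, LinearMap.add_apply]
    map_smul' := fun c x => by
      show Φrep hn (c • x) (dvec n 0) = c • Φrep hn x (dvec n 0)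
      rw [map_smul, LinearMap.smul_apply] }

lemma fam_indep {n : ℕ} (hn : 1 ≤ n) :
    LinearIndependent ℂ (fun j : Fin n => zz hn ^ j.1 * eN hn (n - 1)) := by
  apply LinearIndependent.of_comp (evL hn)
  have hcomp : ((evL hn) ∘ fun j : Fin n => zz hn ^ j.1 * eN hn (n - 1))
      = fun j : Fin n => dvec n j.1 := by
    funext j
    exact rep_fam hn j.1 j.2
  rw [hcomp]
  exact dvec_indep hn

end CEPRep

open CEPAux CEPRep in
open CEPAux CEPRep in
/-- let `A = A^ρ` be the centrally extended preprojective algebra of the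
`A_n` quiver, `e_n` the idempotent at the end vertex `n`, and `B_n = e_n A e_n` the
corner algebra (the range of `x ↦ e_n x e_n`, with unit `e_n`).  Then `B_n` is a
commutative algebra isomorphic to `ℂ[z]/(z^n)`: there is a multiplicative `ℂ`-linear map
`ψ : ℂ[X] → A` with `ψ 1 = e_n`, `ψ X = z e_n`, range `B_n`, and kernel the ideal
`(X^n)`; in particular `dim B_n = n`. -/
theorem corner_algebra_of_typeA (n : ℕ) (hn : 1 ≤ n) :
    let A := CEPA n hn
    let e : Fin n → A := fun i => RingQuot.mkAlgHom ℂ (PRel n hn) (FreeAlgebra.ι ℂ (PGen.v i))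
    let z : A := RingQuot.mkAlgHom ℂ (PRel n hn) (FreeAlgebra.ι ℂ (PGen.z))
    let en : A := e ⟨n - 1, by omega⟩
    let corner : A →ₗ[ℂ] A := LinearMap.mulLeft ℂ en ∘ₗ LinearMap.mulRight ℂ en
    (∀ u w : A, u ∈ LinearMap.range corner → w ∈ LinearMap.range corner → u * w = w * u) ∧
    (∃ ψ : Polynomial ℂ →ₗ[ℂ] A,
      (∀ p q : Polynomial ℂ, ψ (p * q) = ψ p * ψ q) ∧
      ψ 1 = en ∧ ψ Polynomial.X = z * en ∧
      LinearMap.range ψ = LinearMap.range corner ∧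
      LinearMap.ker ψ
        = Submodule.restrictScalars ℂ (Ideal.span {Polynomial.X ^ n})) ∧
    Module.finrank ℂ ↥(LinearMap.range corner) = n := by
  intro A e z en corner
  have hen : en = CEPAux.eN hn (n - 1) := by
    unfold CEPAux.eN
    rw [dif_pos (by omega : n - 1 < n)]
    rfl
  have hcorner : ∀ a : A, corner a = en * (a * en) := fun a => rfl
  have hrange : LinearMap.range corner = CEPAux.SK hn := by
    apply le_antisymm
    · rintro w ⟨b, rfl⟩
      have h1 : corner b = en * (b * en) := rfl
      rw [h1, hen]
      exact CEPAux.corner_mem b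
    · rw [CEPAux.SK, Submodule.span_le]
      rintro w ⟨j, rfl⟩
      refine ⟨CEPAux.zz hn ^ j.1, ?_⟩
      have h1 : corner (CEPAux.zz hn ^ j.1) = en * (CEPAux.zz hn ^ j.1 * en) := rfl
      rw [h1, hen]
      exact CEPAux.corner_fix (hn := hn) j.1
  refine ⟨?_, ?_, ?_⟩
  · intro u w hu hw
    rw [hrange] at hu hw
    exact CEPAux.SK_comm u hu w hw
  · refine ⟨(LinearMap.mulRight ℂ en).comp (Polynomial.aeval (CEPAux.zz hn)).toLinearMap,
      ?_, ?_, ?_, ?_, ?_⟩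
    · intro p q
      show Polynomial.aeval (CEPAux.zz hn) (p * q) * en
        = (Polynomial.aeval (CEPAux.zz hn) p * en) * (Polynomial.aeval (CEPAux.zz hn) q * en)
      rw [hen]
      exact CEPAux.psi_mul p q
    · show Polynomial.aeval (CEPAux.zz hn) 1 * en = en
      rw [map_one, one_mul]
    · show Polynomial.aeval (CEPAux.zz hn) Polynomial.X * en = z * en
      rw [Polynomial.aeval_X]
      rfl
    · rw [hrange]
      apply le_antisymm
      · rintro w ⟨p, rfl⟩
        show Polynomial.aeval (CEPAux.zz hn) p * en ∈ _
        rw [hen]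
        exact CEPAux.aeval_mul_eN_mem p
      · rw [CEPAux.SK, Submodule.span_le]
        rintro w ⟨j, rfl⟩
        refine ⟨Polynomial.X ^ j.1, ?_⟩
        show Polynomial.aeval (CEPAux.zz hn) (Polynomial.X ^ j.1) * en = _
        rw [map_pow, Polynomial.aeval_X, hen]
    · ext p
      simp only [LinearMap.mem_ker, Submodule.restrictScalars_mem, Ideal.mem_span_singleton]
      have hmon : (Polynomial.X ^ n : Polynomial ℂ).Monic := Polynomial.monic_X_pow n
      have hzero : ∀ q : Polynomial ℂ,
          Polynomial.aeval (CEPAux.zz hn) (Polynomial.X ^ n * q) * en = 0 := by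
        intro q
        rw [map_mul, map_pow, Polynomial.aeval_X, mul_assoc,
          CEPAux.aeval_comm q en, ← mul_assoc, hen, CEPAux.zz_pow_n_eN, zero_mul]
      constructor
      · intro hp
        have hp' : Polynomial.aeval (CEPAux.zz hn) p * en = 0 := hp
        have hdecomp := Polynomial.modByMonic_add_div p (Polynomial.X ^ n)
        set r := p %ₘ (Polynomial.X ^ n) with hr
        have hψr : Polynomial.aeval (CEPAux.zz hn) r * en = 0 := by
          have hthis := congrArg
            (fun t => Polynomial.aeval (CEPAux.zz hn) t * en) hdecomp
          simp only [map_add, add_mul] at hthis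
          rw [hzero (p /ₘ Polynomial.X ^ n), add_zero] at hthis
          rw [hthis]
          exact hp'
        have hdeg : r.natDegree < n := by
          by_cases h0 : r = 0
          · rw [h0, Polynomial.natDegree_zero]
            omega
          · have hd := Polynomial.degree_modByMonic_lt p hmon
            rw [Polynomial.degree_X_pow] at hd
            exact (Polynomial.natDegree_lt_iff_degree_lt h0).mpr (by exact_mod_cast hd)
        rw [hen, CEPAux.psi_coeffs r hdeg] at hψr
        have hcoeff := Fintype.linearIndependent_iff.mp (CEPRep.fam_indep hn)
          (fun j => r.coeff j.1) hψr
        have hr0 : r = 0 := by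
          apply Polynomial.ext
          intro i
          show r.coeff i = 0
          by_cases hi : i < n
          · exact hcoeff ⟨i, hi⟩
          · exact Polynomial.coeff_eq_zero_of_natDegree_lt (by omega)
        refine ⟨p /ₘ Polynomial.X ^ n, ?_⟩
        conv_lhs => rw [← hdecomp]
        rw [hr0, zero_add]
      · rintro ⟨q, rfl⟩
        exact hzero q
  · rw [hrange]
    have hfin : Module.finrank ℂ
        ↥(Submodule.span ℂ (Set.range fun j : Fin n =>
            CEPAux.zz hn ^ j.1 * CEPAux.eN hn (n - 1))) = n := by
      rw [finrank_span_eq_card (CEPRep.fam_indep hn)]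
      exact Fintype.card_fin n
    exact hfin
end
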